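/- arXiv:1802.08137 — 6 statements merged into one kernel-verified Lean document; each statement's English description precedes it below -/
import Mathlib

section
/- Let T be a plane tree with n+1 vertices u_0 < u_1 < … < u_n in lexicographic order, with Łukasiewicz path W and height process H. Then for every 0 ≤ j ≤ n: H(j) = #{ k ∈ {0, …, j−1} : W(k) ≤ min_{k+1 ≤ l ≤ j} W(l) }. Moreover, for k < j, the inequality W(k) ≤ min_{k+1 ≤ l ≤ j} W(l) holds if and only if u_k is a strict ancestor of u_j. -/
open MeasureTheory ProbabilityTheory Filter Set
open scoped ENNReal NNReal Topology BigOperators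

attribute [local instance 10] Classical.propDecidable

noncomputable section

/-- A plane tree: a finite set of finite sequences of positive integers containing the empty
sequence (the root), closed under taking prefixes, and such that the children of each vertex
form an initial segment `u1, …, uk_u`. -/
structure PlaneTree where
  verts : Finset (List ℕ)
  root_mem : ([] : List ℕ) ∈ verts
  pos_entries : ∀ u ∈ verts, ∀ i ∈ u, 1 ≤ i
  prefix_closed : ∀ u ∈ verts, ∀ v : List ℕ, v <+: u → v ∈ verts
  children_interval : ∀ u ∈ verts, ∃ k : ℕ, ∀ i : ℕ, (u ++ [i]) ∈ verts ↔ 1 ≤ i ∧ i ≤ k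

namespace PlaneTree

instance : MeasurableSpace PlaneTree := ⊤

/-- The number of children `k_u` of a vertex. -/
def numChildren (T : PlaneTree) (u : List ℕ) : ℕ :=
  (T.verts.filter fun w => ∃ i : ℕ, w = u ++ [i]).card

/-- The vertices listed in lexicographic (depth-first) order `u_0 < u_1 < … < u_n`. -/
def vertexList (T : PlaneTree) : List (List ℕ) :=
  T.verts.sort (· ≤ ·)

/-- The `j`-th vertex in lexicographic order. -/
def vertex (T : PlaneTree) (j : ℕ) : List ℕ := T.vertexList.getD j ([] : List ℕ)

/-- The height process at integer times: `H(j) = |u_j|`. -/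
def height (T : PlaneTree) (j : ℕ) : ℕ := (T.vertex j).length

/-- The Łukasiewicz path: `W(0) = 0`, `W(j+1) = W(j) + k_{u_j} - 1`. -/
def lukas (T : PlaneTree) : ℕ → ℤ
  | 0 => 0
  | j + 1 => lukas T j + T.numChildren (T.vertex j) - 1

/-- Total path length `Λ(T) = Σ_{u ∈ T} |u|`. -/
def pathLength (T : PlaneTree) : ℕ := ∑ u ∈ T.verts, u.length

end PlaneTree

/-- Linear interpolation between integer times of `f : ℕ → ℝ`, valid on `[0, M]`. -/
def interp (M : ℕ) (f : ℕ → ℝ) (t : ℝ) : ℝ :=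
  f 0 + ∑ k ∈ Finset.range M, (f (k + 1) - f k) * min (max (t - (k : ℝ)) 0) 1

namespace PlaneTree

/-- The height process, extended to real arguments by linear interpolation. -/
def heightFun (T : PlaneTree) (t : ℝ) : ℝ :=
  interp T.verts.card (fun j => (T.height j : ℝ)) t

/-- The Bienaymé–Galton–Watson weight `Π_{u ∈ T} μ(k_u)` of a plane tree. -/
def bgwWeight (μ : Measure ℕ) (T : PlaneTree) : ℝ≥0∞ :=
  ∏ u ∈ T.verts, μ {T.numChildren u}

/-- The total weight of plane trees with `n+1` vertices. -/
def bgwPartition (μ : Measure ℕ) (n : ℕ) : ℝ≥0∞ :=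
  ∑' T : {T : PlaneTree // T.verts.card = n + 1}, bgwWeight μ T.1

/-- `P` is the law of a Bienaymé–Galton–Watson tree with offspring distribution `μ`
conditioned to have `n+1` vertices. -/
def IsCondBGW (μ : Measure ℕ) (n : ℕ) (P : Measure PlaneTree) : Prop :=
  IsProbabilityMeasure P ∧
    ∀ T : PlaneTree, P {T} =
      (if T.verts.card = n + 1 then bgwWeight μ T else 0) / bgwPartition μ n

end PlaneTree

open PlaneTree

/-- The law of `ξ_1 + … + ξ_n` where the `ξ_i` are i.i.d. with law `μ`. -/
def sumLaw (μ : Measure ℕ) : ℕ → Measure ℕ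
  | 0 => Measure.dirac 0
  | n + 1 => (sumLaw μ n).bind fun s => μ.map fun k => s + k

/-- The standing assumptions on the offspring distribution `μ`: it is a probability measure on
`ℕ` with `μ(0) > 0`, mean `1`, aperiodic (its support generates the group `ℤ`), and it belongs
to the domain of attraction of an `α`-stable law with normalizing increasing sequence `B_n`:
`(ξ_1 + … + ξ_n - n)/B_n` converges in distribution to a random variable `X` with
`E[exp(-λ X)] = exp(λ^α)` for all `λ ≥ 0`. -/
structure OffspringHyp (μ : Measure ℕ) (α : ℝ) (B : ℕ → ℝ) : Prop where
  prob : IsProbabilityMeasure μ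
  pos0 : 0 < μ {0}
  mean_one : (∑' k : ℕ, (k : ℝ≥0∞) * μ {k}) = 1
  aperiodic : AddSubgroup.closure ((fun k : ℕ => (k : ℤ)) '' {k : ℕ | μ {k} ≠ 0}) = ⊤
  alpha_mem : α ∈ Ioc (1 : ℝ) 2
  B_mono : StrictMono B
  B_pos : ∀ n, 0 < B n
  attract : ∃ ν : Measure ℝ, IsProbabilityMeasure ν ∧
    (∀ l : ℝ, 0 ≤ l → ∫ x, Real.exp (-l * x) ∂ν = Real.exp (l ^ α)) ∧
    ∀ f : BoundedContinuousFunction ℝ ℝ,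
      Tendsto (fun n : ℕ =>
          ∫ x, f x ∂((sumLaw μ n).map fun s : ℕ => ((s : ℝ) - n) / B n))
        atTop (𝓝 (∫ x, f x ∂ν))



namespace PlaneTreeAux

open PlaneTree

/-! ### Lexicographic order helpers -/

lemma lex_not_lt_nil (l : List ℕ) : ¬ l < ([] : List ℕ) := fun h => by cases h

lemma lex_lt_append_cons (p : List ℕ) (a : ℕ) (t : List ℕ) : p < p ++ a :: t := by
  induction p with
  | nil => exact List.Lex.nil
  | cons c p ih => exact List.Lex.cons ih

lemma lex_prefix_lt {p v : List ℕ} (h : p <+: v) (hne : p ≠ v) : p < v := by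
  obtain ⟨t, rfl⟩ := h
  cases t with
  | nil => simp at hne
  | cons a t => exact lex_lt_append_cons p a t

lemma lex_append_lt_append {a b : ℕ} (h : a < b) (r s t : List ℕ) :
    r ++ a :: s < r ++ b :: t := by
  induction r with
  | nil => exact List.Lex.rel h
  | cons c r ih => exact List.Lex.cons ih

lemma lex_cons_lt_cons_iff {a b : ℕ} {s t : List ℕ} :
    a :: s < b :: t ↔ a < b ∨ (a = b ∧ s < t) := by
  constructor
  · intro h
    cases h with
    | cons h => exact Or.inr ⟨rfl, h⟩
    | rel h => exact Or.inl h
  · rintro (h | ⟨rfl, h⟩)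
    · exact List.Lex.rel h
    · exact List.Lex.cons h

lemma lex_append_lt_append_iff {a b : ℕ} (r : List ℕ) {s t : List ℕ} :
    r ++ a :: s < r ++ b :: t ↔ a < b ∨ (a = b ∧ s < t) := by
  induction r with
  | nil => exact lex_cons_lt_cons_iff
  | cons c r ih =>
    rw [List.cons_append, List.cons_append, lex_cons_lt_cons_iff]
    simp [ih]

lemma lex_diverge {x y : List ℕ} (h : x < y) (hp : ¬ x <+: y) :
    ∃ r a s b t, x = r ++ a :: s ∧ y = r ++ b :: t ∧ a < b := by
  induction h with
  | nil => exact absurd List.nil_prefix hp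
  | @rel a l₁ b l₂ h => exact ⟨[], a, l₁, b, l₂, rfl, rfl, h⟩
  | @cons a l₁ l₂ h ih =>
    have hh : ¬ l₁ <+: l₂ := fun hh => hp (List.cons_prefix_cons.mpr ⟨rfl, hh⟩)
    obtain ⟨r, a', s, b, t, h1, h2, h3⟩ := ih hh
    exact ⟨a :: r, a', s, b, t, by simp [h1], by simp [h2], h3⟩

lemma prefix_length_lt {p v : List ℕ} (h : p <+: v) (hne : p ≠ v) :
    p.length < v.length :=
  lt_of_le_of_ne h.length_le fun hl => hne (h.eq_of_length hl)

lemma dropLast_lt {v : List ℕ} (hv : v ≠ []) : v.dropLast < v := by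
  refine lex_prefix_lt (List.dropLast_prefix v) fun h => ?_
  have h1 := congrArg List.length h
  have h2 : 1 ≤ v.length := List.length_pos_iff.mpr hv
  rw [List.length_dropLast] at h1
  omega

/-! ### Basic facts about the vertex list -/

variable (T : PlaneTree)

lemma length_vertexList : T.vertexList.length = T.verts.card :=
  Finset.length_sort _

lemma mem_vertexList {u : List ℕ} : u ∈ T.vertexList ↔ u ∈ T.verts :=
  Finset.mem_sort _

lemma sorted_lt : T.vertexList.SortedLT :=
  Finset.sortedLT_sort _

lemma vertex_eq_get {j : ℕ} (hj : j < T.verts.card) :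
    T.vertex j = T.vertexList.get ⟨j, by rwa [length_vertexList]⟩ := by
  rw [PlaneTree.vertex, List.getD_eq_getElem _ _ (by rwa [length_vertexList])]
  simp

lemma vertex_lt_vertex {i j : ℕ} (hij : i < j) (hj : j < T.verts.card) :
    T.vertex i < T.vertex j := by
  rw [vertex_eq_get T (lt_trans hij hj), vertex_eq_get T hj]
  exact (sorted_lt T).strictMono_get (show (⟨i, _⟩ : Fin _) < ⟨j, _⟩ from hij)

lemma vertex_mem {j : ℕ} (hj : j < T.verts.card) : T.vertex j ∈ T.verts := by
  rw [vertex_eq_get T hj]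
  exact (mem_vertexList T).mp (List.get_mem _ _)

lemma exists_vertex {u : List ℕ} (hu : u ∈ T.verts) :
    ∃ j, j < T.verts.card ∧ T.vertex j = u := by
  obtain ⟨⟨j, hj⟩, h⟩ := List.mem_iff_get.mp ((mem_vertexList T).mpr hu)
  have hj' : j < T.verts.card := by rwa [length_vertexList] at hj
  exact ⟨j, hj', by rw [vertex_eq_get T hj']; exact h⟩

lemma vertex_lt_iff {i j : ℕ} (hi : i < T.verts.card) (hj : j < T.verts.card) :
    T.vertex i < T.vertex j ↔ i < j := by
  constructor
  · intro h
    by_contra hc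
    push_neg at hc
    rcases eq_or_lt_of_le hc with rfl | hc'
    · exact lt_irrefl _ h
    · exact absurd (lt_trans h (vertex_lt_vertex T hc' hi)) (lt_irrefl _)
  · intro h
    exact vertex_lt_vertex T h hj

lemma vertex_injOn {i j : ℕ} (hi : i < T.verts.card) (hj : j < T.verts.card)
    (h : T.vertex i = T.vertex j) : i = j := by
  rcases lt_trichotomy i j with hc | hc | hc
  · exact absurd (vertex_lt_vertex T hc hj) (by rw [h]; exact lt_irrefl _)
  · exact hc
  · exact absurd (vertex_lt_vertex T hc hi) (by rw [h]; exact lt_irrefl _)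

/-! ### Children -/

lemma child_mem_iff {u : List ℕ} (hu : u ∈ T.verts) (i : ℕ) :
    u ++ [i] ∈ T.verts ↔ 1 ≤ i ∧ i ≤ T.numChildren u := by
  obtain ⟨k, hk⟩ := T.children_interval u hu
  suffices hnc : T.numChildren u = k by rw [hnc]; exact hk i
  rw [PlaneTree.numChildren]
  have himg : (T.verts.filter fun w => ∃ i : ℕ, w = u ++ [i])
      = (Finset.Icc 1 k).image (fun i => u ++ [i]) := by
    ext w
    simp only [Finset.mem_filter, Finset.mem_image, Finset.mem_Icc]
    constructor
    · rintro ⟨hw, i, rfl⟩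
      exact ⟨i, (hk i).mp hw, rfl⟩
    · rintro ⟨i, hi, rfl⟩
      exact ⟨(hk i).mpr hi, i, rfl⟩
  rw [himg, Finset.card_image_of_injective _ (fun a b h => by simpa using h),
    Nat.card_Icc]
  omega

lemma numChildren_eq_card_filter (u : List ℕ) :
    T.numChildren u = (T.verts.filter fun v => v ≠ [] ∧ v.dropLast = u).card := by
  rw [PlaneTree.numChildren]
  congr 1
  apply Finset.filter_congr
  intro w _
  constructor
  · rintro ⟨i, rfl⟩
    exact ⟨by simp, List.dropLast_concat⟩
  · rintro ⟨hne, hdl⟩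
    exact ⟨w.getLast hne, by conv_lhs => rw [← List.dropLast_append_getLast hne, hdl]⟩

end PlaneTreeAux

namespace PlaneTreeAux

open PlaneTree

variable (T : PlaneTree)

/-- The set whose cardinality equals the Łukasiewicz path at the time of `u`:
children of strict ancestors of `u` that come strictly after `u` in lex order. -/
def Efin (u : List ℕ) : Finset (List ℕ) :=
  T.verts.filter fun v => u < v ∧ v.dropLast <+: u ∧ v.dropLast ≠ u

lemma lukas_eq_sum (j : ℕ) :
    T.lukas j = (∑ i ∈ Finset.range j, (T.numChildren (T.vertex i) : ℤ)) - j := by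
  induction j with
  | zero => simp [PlaneTree.lukas]
  | succ j ih =>
    rw [PlaneTree.lukas, ih, Finset.sum_range_succ]
    push_cast
    ring

lemma lukas_eq_card {n j : ℕ} (hn : T.verts.card = n + 1) (hj : j ≤ n) :
    T.lukas j = ((Efin T (T.vertex j)).card : ℤ) := by
  have hjc : j < T.verts.card := by omega
  set u := T.vertex j with hu
  -- the first `j` vertices are exactly those smaller than `u`
  have hB : (T.verts.filter fun v => v < u).card = j := by
    have himg : T.verts.filter (fun v => v < u) = (Finset.range j).image T.vertex := by
      ext v
      simp only [Finset.mem_filter, Finset.mem_image, Finset.mem_range]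
      constructor
      · rintro ⟨hv, hlt⟩
        obtain ⟨i, hic, rfl⟩ := exists_vertex T hv
        exact ⟨i, (vertex_lt_iff T hic hjc).mp hlt, rfl⟩
      · rintro ⟨i, hi, rfl⟩
        exact ⟨vertex_mem T (lt_trans hi hjc), vertex_lt_vertex T hi hjc⟩
    rw [himg, Finset.card_image_of_injOn, Finset.card_range]
    intro a ha b hb hab
    exact vertex_injOn T (lt_trans (Finset.mem_range.mp ha) hjc)
      (lt_trans (Finset.mem_range.mp hb) hjc) hab
  -- the sum of children numbers counts vertices whose parent is smaller than `u`
  have hA : (∑ i ∈ Finset.range j, T.numChildren (T.vertex i))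
      = (T.verts.filter fun v => v ≠ [] ∧ v.dropLast < u).card := by
    have hunion : T.verts.filter (fun v => v ≠ [] ∧ v.dropLast < u)
        = (Finset.range j).biUnion
            (fun i => T.verts.filter fun v => v ≠ [] ∧ v.dropLast = T.vertex i) := by
      ext v
      simp only [Finset.mem_filter, Finset.mem_biUnion, Finset.mem_range]
      constructor
      · rintro ⟨hv, hne, hlt⟩
        have hdm : v.dropLast ∈ T.verts :=
          T.prefix_closed v hv _ (List.dropLast_prefix v)
        obtain ⟨i, hic, hvi⟩ := exists_vertex T hdm
        rw [← hvi] at hlt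
        exact ⟨i, (vertex_lt_iff T hic hjc).mp hlt, hv, hne, hvi.symm⟩
      · rintro ⟨i, hij, hv, hne, hdl⟩
        exact ⟨hv, hne, by rw [hdl]; exact vertex_lt_vertex T hij hjc⟩
    rw [hunion, Finset.card_biUnion]
    · exact Finset.sum_congr rfl fun i _ => numChildren_eq_card_filter T _
    · intro i hi k hk hik
      rw [Function.onFun, Finset.disjoint_left]
      rintro v hv hv'
      simp only [Finset.mem_filter] at hv hv'
      exact hik (vertex_injOn T (lt_trans (Finset.mem_range.mp hi) hjc)
        (lt_trans (Finset.mem_range.mp hk) hjc) (hv.2.2.symm.trans hv'.2.2))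
  -- split the parent-smaller set at `u`
  have hsplit : (T.verts.filter fun v => v ≠ [] ∧ v.dropLast < u).card
      = (T.verts.filter fun v => v < u).card + (Efin T u).card := by
    classical
    have hpart := Finset.card_filter_add_card_filter_not
      (s := T.verts.filter fun v => v ≠ [] ∧ v.dropLast < u) (p := fun v => v ≤ u)
    rw [Finset.filter_filter, Finset.filter_filter] at hpart
    -- the `≤ u` part
    have h1 : (T.verts.filter fun v => (v ≠ [] ∧ v.dropLast < u) ∧ v ≤ u)
        = (T.verts.filter fun v => v ≤ u).erase [] := by
      ext v
      simp only [Finset.mem_filter, Finset.mem_erase]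
      constructor
      · rintro ⟨hv, ⟨hne, _⟩, hle⟩
        exact ⟨hne, hv, hle⟩
      · rintro ⟨hne, hv, hle⟩
        exact ⟨hv, ⟨hne, lt_of_lt_of_le (dropLast_lt hne) hle⟩, hle⟩
    have h2 : (T.verts.filter fun v => v ≤ u) = insert u (T.verts.filter fun v => v < u) := by
      ext v
      simp only [Finset.mem_filter, Finset.mem_insert]
      constructor
      · rintro ⟨hv, hle⟩
        rcases eq_or_lt_of_le hle with rfl | hlt
        · exact Or.inl rfl
        · exact Or.inr ⟨hv, hlt⟩
      · rintro (rfl | ⟨hv, hlt⟩)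
        · exact ⟨vertex_mem T hjc, le_refl _⟩
        · exact ⟨hv, le_of_lt hlt⟩
    have hnilmem : ([] : List ℕ) ∈ T.verts.filter fun v => v ≤ u :=
      Finset.mem_filter.mpr ⟨T.root_mem, (eq_or_ne u []).elim (fun h => h ▸ le_refl _)
        (fun h => le_of_lt (lex_prefix_lt List.nil_prefix (Ne.symm h)))⟩
    have hunotin : u ∉ T.verts.filter fun v => v < u := by
      simp only [Finset.mem_filter]
      rintro ⟨-, h⟩
      exact lt_irrefl _ h
    have hcard1 : (T.verts.filter fun v => (v ≠ [] ∧ v.dropLast < u) ∧ v ≤ u).card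
        = (T.verts.filter fun v => v < u).card := by
      rw [h1, Finset.card_erase_of_mem hnilmem, h2, Finset.card_insert_of_notMem hunotin]
      simp
    -- the `> u` part
    have h3 : (T.verts.filter fun v => (v ≠ [] ∧ v.dropLast < u) ∧ ¬ v ≤ u) = Efin T u := by
      ext v
      simp only [Finset.mem_filter, Efin, not_le]
      constructor
      · rintro ⟨hv, ⟨hne, hdl⟩, hlt⟩
        by_cases hp : v.dropLast <+: u
        · exact ⟨hv, hlt, hp, ne_of_lt hdl⟩
        · exfalso
          obtain ⟨r, a, s, b, t, hx, hy, hab⟩ := lex_diverge hdl hp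
          have hvlt : v < u := by
            conv_lhs => rw [← List.dropLast_append_getLast hne, hx]
            rw [hy, List.append_assoc]
            exact lex_append_lt_append hab r _ t
          exact lt_irrefl _ (lt_trans hvlt hlt)
      · rintro ⟨hv, hlt, hp, hne'⟩
        have hne : v ≠ [] := by rintro rfl; exact lex_not_lt_nil _ hlt
        exact ⟨hv, ⟨hne, lex_prefix_lt hp hne'⟩, hlt⟩
    rw [hcard1, h3] at hpart
    omega
  rw [hB] at hsplit
  rw [lukas_eq_sum, ← Nat.cast_sum, hA, hsplit]
  push_cast
  ring

end PlaneTreeAux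

namespace PlaneTreeAux

open PlaneTree

variable (T : PlaneTree)

lemma Efin_subset {x y : List ℕ} (hxy : x <+: y) (hne : x ≠ y) :
    Efin T x ⊆ Efin T y := by
  intro v hv
  simp only [Efin, Finset.mem_filter] at hv ⊢
  obtain ⟨hv, hxv, hp, hpne⟩ := hv
  have hvne : v ≠ [] := by rintro rfl; exact lex_not_lt_nil _ hxv
  have hql : v.dropLast.length < x.length := prefix_length_lt hp hpne
  have hxyl : x.length < y.length := prefix_length_lt hxy hne
  have hvl : v.length = v.dropLast.length + 1 := by
    rw [List.length_dropLast]
    have : 1 ≤ v.length := List.length_pos_iff.mpr hvne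
    omega
  refine ⟨hv, ?_, hp.trans hxy, fun h => by have := congrArg List.length h; omega⟩
  -- y < v
  have hnp : ¬ x <+: v := by
    intro hxv'
    have h1 : x.length < v.length := prefix_length_lt hxv' (ne_of_lt hxv)
    omega
  obtain ⟨r, a, s, b, t, hx, hvv, hab⟩ := lex_diverge hxv hnp
  obtain ⟨w, rfl⟩ := hxy
  rw [hvv, hx, List.append_assoc]
  exact lex_append_lt_append hab r _ t

lemma Efin_subset' {p : List ℕ} {a b : ℕ} (hab : a < b) (s : List ℕ) :
    Efin T (p ++ [b]) ⊆ Efin T (p ++ a :: s) := by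
  intro v hv
  simp only [Efin, Finset.mem_filter] at hv ⊢
  obtain ⟨hv, hwv, hp, hpne⟩ := hv
  have hvne : v ≠ [] := by rintro rfl; exact lex_not_lt_nil _ hwv
  have hql : v.dropLast.length < p.length + 1 := by
    have := prefix_length_lt hp hpne
    simpa using this
  have hqp : v.dropLast <+: p :=
    List.prefix_of_prefix_length_le hp (List.prefix_append p ([b])) (by omega)
  have hxlen : (p ++ a :: s).length = p.length + 1 + s.length := by simp; omega
  refine ⟨hv, ?_, hqp.trans ⟨a :: s, rfl⟩,
    fun h => by have := congrArg List.length h; omega⟩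
  -- (p ++ a :: s) < v
  have hveq : v = v.dropLast ++ [v.getLast hvne] :=
    (List.dropLast_append_getLast hvne).symm
  obtain ⟨z, hz⟩ := hqp
  cases z with
  | nil =>
    -- v.dropLast = p
    rw [List.append_nil] at hz
    have hbi : b < v.getLast hvne := by
      have h0 : p ++ b :: [] < p ++ v.getLast hvne :: [] := by
        have hv2 : p ++ v.getLast hvne :: [] = v := by
          rw [← hz]; exact List.dropLast_append_getLast hvne
        rw [hv2]; exact hwv
      rcases (lex_append_lt_append_iff p).mp h0 with h | ⟨_, h⟩
      · exact h
      · exact absurd h (lex_not_lt_nil _)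
    rw [hveq, hz]
    exact lex_append_lt_append (by omega) p s ([])
  | cons c z' =>
    -- p = v.dropLast ++ c :: z'
    have hweq : p ++ [b] = v.dropLast ++ c :: (z' ++ [b]) := by
      rw [← hz]; simp
    have hci : c < v.getLast hvne := by
      have h0 : v.dropLast ++ c :: (z' ++ [b]) < v.dropLast ++ v.getLast hvne :: [] := by
        rw [← hweq, show v.dropLast ++ v.getLast hvne :: [] = v from (List.dropLast_append_getLast hvne)]
        exact hwv
      rcases (lex_append_lt_append_iff v.dropLast).mp h0 with h | ⟨_, h⟩
      · exact h
      · exact absurd h (lex_not_lt_nil _)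
    have hxeq : p ++ a :: s = v.dropLast ++ c :: (z' ++ a :: s) := by
      rw [← hz]; simp
    rw [hxeq]
    conv_rhs => rw [hveq]
    exact lex_append_lt_append hci v.dropLast _ ([])

lemma exists_drop {n k j : ℕ} (hn : T.verts.card = n + 1) (hk : k < j) (hj : j ≤ n)
    (hnp : ¬ (T.vertex k <+: T.vertex j ∧ T.vertex k ≠ T.vertex j)) :
    ∃ l, l ∈ Finset.Icc (k + 1) j ∧ T.lukas l < T.lukas k := by
  have hjc : j < T.verts.card := by omega
  have hkc : k < T.verts.card := lt_trans hk hjc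
  have hxy : T.vertex k < T.vertex j := vertex_lt_vertex T hk hjc
  have hne : T.vertex k ≠ T.vertex j := ne_of_lt hxy
  have hp : ¬ T.vertex k <+: T.vertex j := fun h => hnp ⟨h, hne⟩
  obtain ⟨p, a, s, b, t, hx, hy, hab⟩ := lex_diverge hxy hp
  have hjm : T.vertex j ∈ T.verts := vertex_mem T hjc
  have hkm : T.vertex k ∈ T.verts := vertex_mem T hkc
  have hw : p ++ [b] ∈ T.verts :=
    T.prefix_closed _ hjm _ ⟨t, by rw [hy]; simp⟩
  obtain ⟨l, hlc, hlv⟩ := exists_vertex T hw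
  have hkl : k < l := by
    rw [← vertex_lt_iff T hkc hlc, hlv, hx]
    exact lex_append_lt_append hab p s ([])
  have hlj : l ≤ j := by
    by_contra hc
    push_neg at hc
    have h1 : T.vertex j < T.vertex l := vertex_lt_vertex T hc hlc
    have h2 : T.vertex l ≤ T.vertex j := by
      rw [hlv]
      rcases eq_or_ne (p ++ [b]) (T.vertex j) with h | h
      · exact le_of_eq h
      · exact le_of_lt (lex_prefix_lt ⟨t, by rw [hy]; simp⟩ h)
    exact absurd (lt_of_le_of_lt h2 h1) (lt_irrefl _)
  -- the witness p ++ [a+1]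
  have hpm : p ∈ T.verts := T.prefix_closed _ hkm _ ⟨a :: s, by rw [hx]⟩
  have hble : b ≤ T.numChildren p := ((child_mem_iff T hpm b).mp hw).2
  have hstar : p ++ [a + 1] ∈ T.verts :=
    (child_mem_iff T hpm (a + 1)).mpr ⟨by omega, by omega⟩
  have hstarE : p ++ [a + 1] ∈ Efin T (T.vertex k) := by
    simp only [Efin, Finset.mem_filter]
    refine ⟨hstar, ?_, ?_, ?_⟩
    · rw [hx]
      exact lex_append_lt_append (by omega) p s ([])
    · rw [List.dropLast_concat, hx]; exact ⟨a :: s, rfl⟩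
    · rw [List.dropLast_concat, hx]
      intro h
      have := congrArg List.length h
      simp at this
  have hstarN : p ++ [a + 1] ∉ Efin T (p ++ [b]) := by
    simp only [Efin, Finset.mem_filter]
    rintro ⟨-, hlt, -, -⟩
    have hlt' : p ++ b :: [] < p ++ (a + 1) :: [] := hlt
    rcases (lex_append_lt_append_iff p).mp hlt' with h | ⟨_, h⟩
    · omega
    · exact absurd h (lex_not_lt_nil _)
  have hcard : (Efin T (p ++ [b])).card < (Efin T (T.vertex k)).card := by
    apply Finset.card_lt_card
    rw [Finset.ssubset_iff_of_subset (hx ▸ Efin_subset' T hab s)]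
    exact ⟨p ++ [a + 1], hstarE, hstarN⟩
  refine ⟨l, Finset.mem_Icc.mpr ⟨hkl, hlj⟩, ?_⟩
  rw [lukas_eq_card T hn (by omega), lukas_eq_card T hn (le_trans (le_of_lt hk) hj), hlv]
  exact_mod_cast hcard

lemma prefix_of_between {n k l j : ℕ} (hn : T.verts.card = n + 1) (hk : k < l)
    (hl : l ≤ j) (hj : j ≤ n) (hpre : T.vertex k <+: T.vertex j) :
    T.vertex k <+: T.vertex l := by
  have hjc : j < T.verts.card := by omega
  have hlc : l < T.verts.card := by omega
  have hkc : k < T.verts.card := by omega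
  by_contra hnp
  have hkl : T.vertex k < T.vertex l := vertex_lt_vertex T hk hlc
  obtain ⟨r, a, s, b, t, hxk, hxl, hab⟩ := lex_diverge hkl hnp
  obtain ⟨w, hw⟩ := hpre
  have h1 : T.vertex j < T.vertex l := by
    rw [hxl, ← hw, hxk, List.append_assoc]
    exact lex_append_lt_append hab r _ t
  have h2 : T.vertex l ≤ T.vertex j := by
    rcases eq_or_lt_of_le hl with rfl | hlt
    · exact le_refl _
    · exact le_of_lt (vertex_lt_vertex T hlt hjc)
  exact absurd (lt_of_le_of_lt h2 h1) (lt_irrefl _)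

end PlaneTreeAux
/-- **The height process as records of the Łukasiewicz path**.
For a plane tree with `n+1` vertices, `H(j) = #{k < j : W(k) ≤ min_{k+1 ≤ l ≤ j} W(l)}`, and
for `k < j` the inequality `W(k) ≤ min_{k+1 ≤ l ≤ j} W(l)` holds iff `u_k` is a strict
ancestor of `u_j`. -/
theorem height_eq_lukasiewicz_records
    (T : PlaneTree) (n : ℕ) (hn : T.verts.card = n + 1) (j : ℕ) (hj : j ≤ n) :
    T.height j =
        ((Finset.range j).filter fun k =>
          ∀ l ∈ Finset.Icc (k + 1) j, T.lukas k ≤ T.lukas l).card ∧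
      ∀ k < j, (∀ l ∈ Finset.Icc (k + 1) j, T.lukas k ≤ T.lukas l) ↔
        (T.vertex k <+: T.vertex j ∧ T.vertex k ≠ T.vertex j) := by
  have hjc : j < T.verts.card := by omega
  have part2 : ∀ k < j, (∀ l ∈ Finset.Icc (k + 1) j, T.lukas k ≤ T.lukas l) ↔
      (T.vertex k <+: T.vertex j ∧ T.vertex k ≠ T.vertex j) := by
    intro k hk
    constructor
    · intro h
      by_contra hnp
      obtain ⟨l, hl, hlt⟩ := PlaneTreeAux.exists_drop T hn hk hj hnp
      exact absurd (h l hl) (not_le.mpr hlt)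
    · rintro ⟨hpre, hne⟩ l hl
      rw [Finset.mem_Icc] at hl
      have hkl : k < l := by omega
      have hpre' : T.vertex k <+: T.vertex l :=
        PlaneTreeAux.prefix_of_between T hn hkl hl.2 hj hpre
      rcases eq_or_ne (T.vertex k) (T.vertex l) with heq | hne'
      · exact absurd (PlaneTreeAux.vertex_injOn T (by omega) (by omega) heq) (by omega)
      · rw [PlaneTreeAux.lukas_eq_card T hn (by omega),
          PlaneTreeAux.lukas_eq_card T hn (by omega)]
        exact_mod_cast Finset.card_le_card (PlaneTreeAux.Efin_subset T hpre' hne')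
  refine ⟨?_, part2⟩
  have hfilter : ((Finset.range j).filter fun k =>
        ∀ l ∈ Finset.Icc (k + 1) j, T.lukas k ≤ T.lukas l)
      = ((Finset.range j).filter fun k =>
        T.vertex k <+: T.vertex j ∧ T.vertex k ≠ T.vertex j) := by
    ext k
    simp only [Finset.mem_filter, Finset.mem_range]
    constructor
    · rintro ⟨hk, h⟩
      exact ⟨hk, (part2 k hk).mp h⟩
    · rintro ⟨hk, h⟩
      exact ⟨hk, (part2 k hk).mpr h⟩
  have hcard : (((Finset.range j).filter fun k =>
        T.vertex k <+: T.vertex j ∧ T.vertex k ≠ T.vertex j)).card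
      = (T.vertex j).length := by
    rw [← Finset.card_range (T.vertex j).length]
    apply Finset.card_bij (fun k _ => (T.vertex k).length)
    · intro k hk
      simp only [Finset.mem_filter, Finset.mem_range] at hk ⊢
      exact PlaneTreeAux.prefix_length_lt hk.2.1 hk.2.2
    · intro k1 h1 k2 h2 heq
      simp only [Finset.mem_filter, Finset.mem_range] at h1 h2
      obtain ⟨hk1, hp1, -⟩ := h1
      obtain ⟨hk2, hp2, -⟩ := h2
      have hveq : T.vertex k1 = T.vertex k2 :=
        (List.prefix_of_prefix_length_le hp1 hp2 (le_of_eq heq)).eq_of_length heq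
      exact PlaneTreeAux.vertex_injOn T (by omega) (by omega) hveq
    · intro m hm
      rw [Finset.mem_range] at hm
      have hmem : (T.vertex j).take m ∈ T.verts :=
        T.prefix_closed _ (PlaneTreeAux.vertex_mem T hjc) _ (List.take_prefix m _)
      obtain ⟨k, hkc, hkv⟩ := PlaneTreeAux.exists_vertex T hmem
      have hlen : (T.vertex k).length = m := by
        rw [hkv, List.length_take]
        omega
      have hpre : T.vertex k <+: T.vertex j := by
        rw [hkv]
        exact List.take_prefix m _
      have hne : T.vertex k ≠ T.vertex j := fun h => by rw [h] at hlen; omega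
      have hkj : k < j := (PlaneTreeAux.vertex_lt_iff T hkc hjc).mp
        (PlaneTreeAux.lex_prefix_lt hpre hne)
      exact ⟨k, Finset.mem_filter.mpr ⟨Finset.mem_range.mpr hkj, hpre, hne⟩, hlen⟩
  rw [hfilter, hcard]
  rfl

end
end

section
/- Let T be a plane tree with n+1 vertices u_0 < u_1 < … < u_n in lexicographic order, with Łukasiewicz path W and height process H. Fix 0 ≤ i < j ≤ n and define j' as follows: j' = i if u_i is an ancestor of u_j, and otherwise j' ∈ (i, j] is the index of the unique child of the last common ancestor of u_i and u_j which is an ancestor of u_j. Then: (1) W(j') = min_{i ≤ k ≤ j} W(k); (2) H(j') = min_{i ≤ k ≤ j} H(k); and (3) H(j) − H(j') = #{ k ∈ {i, …, j−1} : W(k) = min_{k ≤ l ≤ j} W(l) }. -/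
open MeasureTheory ProbabilityTheory Filter Set
open scoped ENNReal NNReal Topology BigOperators

attribute [local instance 10] Classical.propDecidable

noncomputable section

open PlaneTree

/-! ### Auxiliary lemmas on the lexicographic order on `List ℕ` -/

theorem lhm_cons_lt_cons_iff {a b : ℕ} {s t : List ℕ} :
    (a :: s : List ℕ) < b :: t ↔ a < b ∨ (a = b ∧ s < t) := by
  constructor
  · intro h
    cases h with
    | cons h => exact Or.inr ⟨rfl, h⟩
    | rel h => exact Or.inl h
  · rintro (h | ⟨rfl, h⟩)
    · exact List.Lex.rel h
    · exact List.Lex.cons h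

theorem lhm_not_lt_nil (x : List ℕ) : ¬ x < ([] : List ℕ) := fun h => by cases h

theorem lhm_append_lt_append_left (b : List ℕ) {s t : List ℕ} :
    b ++ s < b ++ t ↔ s < t := by
  induction b with
  | nil => simp
  | cons a b ih => simpa [List.cons_append, lhm_cons_lt_cons_iff] using ih

theorem lhm_append_le_append_left (b : List ℕ) {s t : List ℕ} :
    b ++ s ≤ b ++ t ↔ s ≤ t := by
  rw [le_iff_lt_or_eq, le_iff_lt_or_eq, lhm_append_lt_append_left,
    List.append_right_inj]

theorem lhm_prefix_le {s t : List ℕ} (h : s <+: t) : s ≤ t := by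
  obtain ⟨r, rfl⟩ := h
  calc s = s ++ [] := by simp
  _ ≤ s ++ r := (lhm_append_le_append_left s).2 (by rcases r with _ | ⟨a, r⟩; exacts [le_rfl, le_of_lt List.Lex.nil])

theorem lhm_prefix_lt {s t : List ℕ} (h : s <+: t) (hne : s ≠ t) : s < t :=
  lt_of_le_of_ne (lhm_prefix_le h) hne

theorem lhm_prefix_lt_of_length_lt {s t : List ℕ} (h : s <+: t)
    (hne : s.length < t.length) : s < t :=
  lhm_prefix_lt h (fun he => by rw [he] at hne; omega)

theorem lhm_cons_le_cons_iff {a b : ℕ} {s t : List ℕ} :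
    (a :: s : List ℕ) ≤ b :: t ↔ a < b ∨ (a = b ∧ s ≤ t) := by
  rw [le_iff_lt_or_eq, lhm_cons_lt_cons_iff]
  constructor
  · rintro ((h | ⟨rfl, h⟩) | h)
    · exact Or.inl h
    · exact Or.inr ⟨rfl, le_of_lt h⟩
    · rw [List.cons.injEq] at h
      exact Or.inr ⟨h.1, le_of_eq h.2⟩
  · rintro (h | ⟨rfl, h⟩)
    · exact Or.inl (Or.inl h)
    · rcases eq_or_lt_of_le h with rfl | h
      · exact Or.inr rfl
      · exact Or.inl (Or.inr ⟨rfl, h⟩)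

/-- If `b ≤ x ≤ w` and `b` is a prefix of `w` then `b` is a prefix of `x`. -/
theorem lhm_prefix_of_between : ∀ (b x w : List ℕ), b ≤ x → x ≤ w → b <+: w → b <+: x
  | [], _, _, _, _, _ => List.nil_prefix
  | a :: b', x, w, hbx, hxw, hbw => by
    rcases eq_or_lt_of_le hbx with rfl | hbx
    · exact List.prefix_rfl
    rcases eq_or_lt_of_le hxw with rfl | hxw
    · exact hbw
    cases w with
    | nil => exact absurd hxw (lhm_not_lt_nil x)
    | cons c w' =>
      obtain ⟨rfl, hb'w'⟩ := List.cons_prefix_cons.1 hbw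
      cases x with
      | nil => exact absurd hbx (lhm_not_lt_nil _)
      | cons d x' =>
        rcases lhm_cons_lt_cons_iff.1 hbx with h1 | ⟨rfl, h1⟩
        · rcases lhm_cons_lt_cons_iff.1 hxw with h2 | ⟨he2, h2⟩
          · omega
          · omega
        · rcases lhm_cons_lt_cons_iff.1 hxw with h2 | ⟨he2, h2⟩
          · omega
          · exact List.cons_prefix_cons.2
              ⟨rfl, lhm_prefix_of_between b' x' w' (le_of_lt h1) (le_of_lt h2) hb'w'⟩

theorem lhm_snoc_gt_iff {b : List ℕ} {c d : ℕ} {t : List ℕ} :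
    b ++ d :: t < b ++ [c] ↔ d < c := by
  rw [lhm_append_lt_append_left]
  constructor
  · intro h
    rcases lhm_cons_lt_cons_iff.1 h with h' | ⟨he, h'⟩
    · exact h'
    · exact absurd h' (lhm_not_lt_nil _)
  · intro h; exact List.Lex.rel h

theorem lhm_lt_of_entry_lt {b : List ℕ} {c d : ℕ} {s t : List ℕ} (h : c < d) :
    b ++ c :: s < b ++ d :: t := (lhm_append_lt_append_left b).2 (List.Lex.rel h)

theorem lhm_ne_nil_of_gt {u v : List ℕ} (h : u < v) : v ≠ [] :=
  fun hv => lhm_not_lt_nil u (hv ▸ h)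

theorem lhm_dropLast_lt {v : List ℕ} (hv : v ≠ []) : v.dropLast < v :=
  lhm_prefix_lt_of_length_lt (List.dropLast_prefix v)
    (by rw [List.length_dropLast]; have := List.length_pos_iff.2 hv; omega)

/-- The longest common prefix of two lists. -/
def lcp : List ℕ → List ℕ → List ℕ
  | a :: as, b :: bs => if a = b then a :: lcp as bs else []
  | _, _ => []

theorem lhm_lcp_prefix_left : ∀ x y : List ℕ, lcp x y <+: x
  | [], _ => by simp [lcp]
  | _ :: _, [] => by simp [lcp]
  | a :: as, b :: bs => by
    rw [lcp]
    split
    · next h =>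
      subst h
      exact List.cons_prefix_cons.2 ⟨rfl, lhm_lcp_prefix_left as bs⟩
    · exact List.nil_prefix

theorem lhm_lcp_prefix_right : ∀ x y : List ℕ, lcp x y <+: y
  | [], _ => by simp [lcp]
  | _ :: _, [] => by simp [lcp]
  | a :: as, b :: bs => by
    rw [lcp]
    split
    · next h =>
      subst h
      exact List.cons_prefix_cons.2 ⟨rfl, lhm_lcp_prefix_right as bs⟩
    · exact List.nil_prefix

theorem lhm_prefix_lcp : ∀ (p x y : List ℕ), p <+: x → p <+: y → p <+: lcp x y
  | [], _, _, _, _ => List.nil_prefix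
  | a :: p', x, y, hx, hy => by
    cases x with
    | nil => exact absurd hx.length_le (by simp)
    | cons c x' =>
      cases y with
      | nil => exact absurd hy.length_le (by simp)
      | cons d y' =>
        obtain ⟨rfl, hx'⟩ := List.cons_prefix_cons.1 hx
        obtain ⟨rfl, hy'⟩ := List.cons_prefix_cons.1 hy
        rw [lcp, if_pos rfl]
        exact List.cons_prefix_cons.2 ⟨rfl, lhm_prefix_lcp p' x' y' hx' hy'⟩

/-! ### Facts about the sorted vertex list -/

namespace PlaneTree

theorem lhm_length_vertexList (T : PlaneTree) : T.vertexList.length = T.verts.card :=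
  Finset.length_sort _

theorem lhm_mem_vertexList_iff {T : PlaneTree} {v : List ℕ} :
    v ∈ T.vertexList ↔ v ∈ T.verts := Finset.mem_sort _

theorem lhm_vertex_eq_get (T : PlaneTree) (m : ℕ) (h : m < T.vertexList.length) :
    T.vertex m = T.vertexList.get ⟨m, h⟩ := List.getD_eq_get _ _ ⟨m, h⟩

theorem lhm_vertex_mem {T : PlaneTree} {n : ℕ} (hn : T.verts.card = n + 1) {m : ℕ}
    (hm : m ≤ n) : T.vertex m ∈ T.verts := by
  have h : m < T.vertexList.length := by rw [lhm_length_vertexList, hn]; omega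
  rw [lhm_vertex_eq_get T m h]
  exact lhm_mem_vertexList_iff.1 (List.get_mem _ _)

theorem lhm_vertex_lt_vertex {T : PlaneTree} {n : ℕ} (hn : T.verts.card = n + 1)
    {k l : ℕ} (hkl : k < l) (hl : l ≤ n) : T.vertex k < T.vertex l := by
  have hl' : l < T.vertexList.length := by rw [lhm_length_vertexList, hn]; omega
  have hk' : k < T.vertexList.length := by omega
  rw [lhm_vertex_eq_get T k hk', lhm_vertex_eq_get T l hl']
  exact (Finset.sortedLT_sort T.verts).strictMono_get (Fin.mk_lt_mk.2 hkl)

theorem lhm_vertex_le_iff {T : PlaneTree} {n : ℕ} (hn : T.verts.card = n + 1)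
    {k l : ℕ} (hk : k ≤ n) (hl : l ≤ n) : T.vertex k ≤ T.vertex l ↔ k ≤ l := by
  constructor
  · intro h
    by_contra hc
    exact absurd h (not_le.2 (lhm_vertex_lt_vertex hn (by omega) hk))
  · intro h
    rcases eq_or_lt_of_le h with rfl | h
    · exact le_rfl
    · exact le_of_lt (lhm_vertex_lt_vertex hn h hl)

theorem lhm_vertex_lt_iff {T : PlaneTree} {n : ℕ} (hn : T.verts.card = n + 1)
    {k l : ℕ} (hk : k ≤ n) (hl : l ≤ n) : T.vertex k < T.vertex l ↔ k < l := by
  rw [← not_le, ← not_le, not_iff_not]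
  exact lhm_vertex_le_iff hn hl hk

theorem lhm_vertex_inj {T : PlaneTree} {n : ℕ} (hn : T.verts.card = n + 1)
    {k l : ℕ} (hk : k ≤ n) (hl : l ≤ n) (h : T.vertex k = T.vertex l) : k = l := by
  have h1 := (lhm_vertex_le_iff hn hk hl).1 (le_of_eq h)
  have h2 := (lhm_vertex_le_iff hn hl hk).1 (le_of_eq h.symm)
  omega

theorem lhm_vertex_surj {T : PlaneTree} {n : ℕ} (hn : T.verts.card = n + 1)
    {v : List ℕ} (hv : v ∈ T.verts) : ∃ m, m ≤ n ∧ T.vertex m = v := by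
  obtain ⟨⟨m, hm⟩, hg⟩ := List.mem_iff_get.1 (lhm_mem_vertexList_iff.2 hv)
  have hm' : m ≤ n := by rw [lhm_length_vertexList, hn] at hm; omega
  exact ⟨m, hm', by rw [lhm_vertex_eq_get T m hm]; exact hg⟩

theorem lhm_vertex_zero {T : PlaneTree} {n : ℕ} (hn : T.verts.card = n + 1) :
    T.vertex 0 = [] := by
  obtain ⟨m, hm, hv⟩ := lhm_vertex_surj hn T.root_mem
  have h0 : T.vertex 0 ≤ T.vertex m := (lhm_vertex_le_iff hn (Nat.zero_le n) hm).2 (Nat.zero_le m)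
  rw [hv] at h0
  exact le_antisymm h0 (by generalize T.vertex 0 = x; rcases x with _ | ⟨a, r⟩; exacts [le_rfl, le_of_lt List.Lex.nil])

theorem lhm_lt_vertex_iff_succ_le {T : PlaneTree} {n : ℕ} (hn : T.verts.card = n + 1)
    {m : ℕ} (hm : m + 1 ≤ n) {v : List ℕ} (hv : v ∈ T.verts) :
    T.vertex m < v ↔ T.vertex (m + 1) ≤ v := by
  obtain ⟨l, hl, rfl⟩ := lhm_vertex_surj hn hv
  rw [lhm_vertex_lt_iff hn (by omega) hl, lhm_vertex_le_iff hn hm hl]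
  omega

theorem lhm_lt_vertex_succ_iff_le {T : PlaneTree} {n : ℕ} (hn : T.verts.card = n + 1)
    {m : ℕ} (hm : m + 1 ≤ n) {v : List ℕ} (hv : v ∈ T.verts) :
    v < T.vertex (m + 1) ↔ v ≤ T.vertex m := by
  constructor
  · intro h
    by_contra hc
    exact absurd ((lhm_lt_vertex_iff_succ_le hn hm hv).1 (lt_of_not_ge hc)) (not_le.2 h)
  · intro h
    by_contra hc
    exact absurd ((lhm_lt_vertex_iff_succ_le hn hm hv).2 (le_of_not_gt hc)) (not_lt.2 h)

/-! ### Children -/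

/-- The set of children of a vertex. -/
def lhmChildren (T : PlaneTree) (u : List ℕ) : Finset (List ℕ) :=
  T.verts.filter fun w => ∃ i : ℕ, w = u ++ [i]

theorem lhm_numChildren_eq (T : PlaneTree) (u : List ℕ) :
    T.numChildren u = (T.lhmChildren u).card := rfl

theorem lhm_mem_children_iff {T : PlaneTree} {u : List ℕ} {w : List ℕ} :
    w ∈ T.lhmChildren u ↔ w ∈ T.verts ∧ ∃ i : ℕ, w = u ++ [i] := Finset.mem_filter

theorem lhm_snoc_mem_iff {T : PlaneTree} {u : List ℕ} (hu : u ∈ T.verts) {c : ℕ} :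
    u ++ [c] ∈ T.verts ↔ 1 ≤ c ∧ c ≤ T.numChildren u := by
  obtain ⟨k, hk⟩ := T.children_interval u hu
  have hcard : T.numChildren u = k := by
    rw [lhm_numChildren_eq]
    have : T.lhmChildren u = (Finset.Icc 1 k).image fun i => u ++ [i] := by
      ext w
      rw [lhm_mem_children_iff, Finset.mem_image]
      constructor
      · rintro ⟨hw, i, rfl⟩
        exact ⟨i, Finset.mem_Icc.2 ((hk i).1 hw), rfl⟩
      · rintro ⟨i, hi, rfl⟩
        exact ⟨(hk i).2 (Finset.mem_Icc.1 hi), i, rfl⟩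
    rw [this, Finset.card_image_of_injective _ (fun a b h => by simpa using h),
      Nat.card_Icc]
    omega
  rw [hk, hcard]

/-! ### The sets `E m` and `D m` counting the Łukasiewicz path -/

/-- Vertices `v ≥ u_m` whose parent is `< u_m` (the root qualifying when `m = 0`). -/
def lhmE (T : PlaneTree) (m : ℕ) : Finset (List ℕ) :=
  T.verts.filter fun v => T.vertex m ≤ v ∧ (v.dropLast < T.vertex m ∨ v = [])

/-- Vertices `v > u_m` whose parent is `< u_m`. -/
def lhmD (T : PlaneTree) (m : ℕ) : Finset (List ℕ) :=
  T.verts.filter fun v => v.dropLast < T.vertex m ∧ T.vertex m < v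

theorem lhm_mem_E {T : PlaneTree} {m : ℕ} {v : List ℕ} :
    v ∈ T.lhmE m ↔ v ∈ T.verts ∧ T.vertex m ≤ v ∧ (v.dropLast < T.vertex m ∨ v = []) :=
  Finset.mem_filter

theorem lhm_mem_D {T : PlaneTree} {m : ℕ} {v : List ℕ} :
    v ∈ T.lhmD m ↔ v ∈ T.verts ∧ v.dropLast < T.vertex m ∧ T.vertex m < v :=
  Finset.mem_filter

theorem lhm_E_zero {T : PlaneTree} {n : ℕ} (hn : T.verts.card = n + 1) :
    T.lhmE 0 = {[]} := by
  ext v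
  rw [lhm_mem_E, lhm_vertex_zero hn, Finset.mem_singleton]
  constructor
  · rintro ⟨-, -, h | h⟩
    · exact absurd h (lhm_not_lt_nil _)
    · exact h
  · rintro rfl
    exact ⟨T.root_mem, le_rfl, Or.inr rfl⟩

theorem lhm_vertex_mem_E {T : PlaneTree} {n : ℕ} (hn : T.verts.card = n + 1)
    {m : ℕ} (hm : m ≤ n) : T.vertex m ∈ T.lhmE m := by
  rw [lhm_mem_E]
  refine ⟨lhm_vertex_mem hn hm, le_rfl, ?_⟩
  rcases eq_or_ne (T.vertex m) ([] : List ℕ) with h | h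
  · exact Or.inr h
  · exact Or.inl (lhm_dropLast_lt h)

theorem lhm_E_succ {T : PlaneTree} {n : ℕ} (hn : T.verts.card = n + 1)
    {m : ℕ} (hm : m + 1 ≤ n) :
    T.lhmE (m + 1) = (T.lhmE m).erase (T.vertex m) ∪ T.lhmChildren (T.vertex m) := by
  have hlt : T.vertex m < T.vertex (m + 1) := lhm_vertex_lt_vertex hn (by omega) hm
  ext v
  rw [Finset.mem_union, Finset.mem_erase, lhm_mem_E, lhm_mem_E, lhm_mem_children_iff]
  constructor
  · rintro ⟨hv, hle, hor⟩
    have hmv : T.vertex m < v := lt_of_lt_of_le hlt hle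
    have hvne : v ≠ [] := lhm_ne_nil_of_gt hmv
    have hdl : v.dropLast < T.vertex (m + 1) := hor.resolve_right hvne
    have hdlT : v.dropLast ∈ T.verts := T.prefix_closed v hv _ (List.dropLast_prefix v)
    have hdlm : v.dropLast ≤ T.vertex m := (lhm_lt_vertex_succ_iff_le hn hm hdlT).1 hdl
    rcases eq_or_lt_of_le hdlm with he | hlt'
    · refine Or.inr ⟨hv, v.getLast hvne, ?_⟩
      rw [← he, List.dropLast_append_getLast hvne]
    · exact Or.inl ⟨ne_of_gt hmv, hv, le_of_lt hmv, Or.inl hlt'⟩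
  · rintro (⟨hne, hv, hle, hor⟩ | ⟨hv, c, rfl⟩)
    · have hmv : T.vertex m < v := lt_of_le_of_ne hle (Ne.symm hne)
      have hvne : v ≠ [] := lhm_ne_nil_of_gt hmv
      have hdl : v.dropLast < T.vertex m := hor.resolve_right hvne
      exact ⟨hv, (lhm_lt_vertex_iff_succ_le hn hm hv).1 hmv,
        Or.inl (lt_trans hdl hlt)⟩
    · have hmv : T.vertex m < T.vertex m ++ [c] :=
        lhm_prefix_lt_of_length_lt (List.prefix_append _ _) (by simp)
      refine ⟨hv, (lhm_lt_vertex_iff_succ_le hn hm hv).1 hmv, Or.inl ?_⟩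
      rw [List.dropLast_concat]
      exact hlt

theorem lhm_E_succ_disjoint {T : PlaneTree} (m : ℕ) :
    Disjoint ((T.lhmE m).erase (T.vertex m)) (T.lhmChildren (T.vertex m)) := by
  rw [Finset.disjoint_left]
  intro v hv hc
  obtain ⟨-, -, hor⟩ := lhm_mem_E.1 (Finset.mem_erase.1 hv).2
  obtain ⟨-, c, rfl⟩ := lhm_mem_children_iff.1 hc
  rcases hor with h | h
  · rw [List.dropLast_concat] at h
    exact lt_irrefl _ h
  · simp at h

theorem lhm_lukas_eq_E {T : PlaneTree} {n : ℕ} (hn : T.verts.card = n + 1) :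
    ∀ m, m ≤ n → T.lukas m + 1 = ((T.lhmE m).card : ℤ)
  | 0, _ => by rw [lhm_E_zero hn]; simp [PlaneTree.lukas]
  | m + 1, hm => by
    have ih := lhm_lukas_eq_E hn m (by omega)
    have hmem := lhm_vertex_mem_E hn (show m ≤ n by omega)
    have hpos : 1 ≤ (T.lhmE m).card := Finset.card_pos.2 ⟨_, hmem⟩
    rw [lhm_E_succ hn hm, Finset.card_union_of_disjoint (lhm_E_succ_disjoint m),
      Finset.card_erase_of_mem hmem]
    show T.lukas m + T.numChildren (T.vertex m) - 1 + 1 = _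
    rw [lhm_numChildren_eq]
    push_cast [Nat.cast_sub hpos]
    omega

theorem lhm_E_eq_insert {T : PlaneTree} {n : ℕ} (hn : T.verts.card = n + 1)
    {m : ℕ} (hm : m ≤ n) : T.lhmE m = insert (T.vertex m) (T.lhmD m) := by
  ext v
  rw [lhm_mem_E, Finset.mem_insert, lhm_mem_D]
  constructor
  · rintro ⟨hv, hle, hor⟩
    rcases eq_or_lt_of_le hle with he | hlt
    · exact Or.inl he.symm
    · refine Or.inr ⟨hv, ?_, hlt⟩
      refine hor.resolve_right fun hnil => ?_
      rw [hnil] at hlt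
      exact lhm_not_lt_nil _ hlt
  · rintro (rfl | ⟨hv, h1, h2⟩)
    · exact (lhm_mem_E.1 (lhm_vertex_mem_E hn hm)).2.2.elim
        (fun h => ⟨lhm_vertex_mem hn hm, le_rfl, Or.inl h⟩)
        (fun h => ⟨lhm_vertex_mem hn hm, le_rfl, Or.inr h⟩)
    · exact ⟨hv, le_of_lt h2, Or.inl h1⟩

theorem lhm_vertex_not_mem_D {T : PlaneTree} {m : ℕ} : T.vertex m ∉ T.lhmD m := by
  rw [lhm_mem_D]
  rintro ⟨-, -, h⟩
  exact lt_irrefl _ h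

theorem lhm_lukas_eq_D {T : PlaneTree} {n : ℕ} (hn : T.verts.card = n + 1)
    {m : ℕ} (hm : m ≤ n) : T.lukas m = ((T.lhmD m).card : ℤ) := by
  have h := lhm_lukas_eq_E hn m hm
  rw [lhm_E_eq_insert hn hm, Finset.card_insert_of_notMem lhm_vertex_not_mem_D] at h
  push_cast at h
  omega

/-- The master inclusion lemma: if every proper prefix of `u_m` is a proper prefix of `u_k`
with entry of `u_k` at that spot at most the one of `u_m`, then `D m ⊆ D k`. -/
theorem lhm_D_subset {T : PlaneTree} {n : ℕ} (hn : T.verts.card = n + 1)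
    {k m : ℕ} (hk : k ≤ n)
    (hdom : ∀ b (d : ℕ) t, T.vertex m = b ++ d :: t →
      ∃ e s, T.vertex k = b ++ e :: s ∧ e ≤ d) :
    T.lhmD m ⊆ T.lhmD k := by
  intro v hv
  obtain ⟨hvT, hbm, hmv⟩ := lhm_mem_D.1 hv
  have hvne : v ≠ [] := lhm_ne_nil_of_gt hmv
  have hbv : v.dropLast <+: v := List.dropLast_prefix v
  have hbpre : v.dropLast <+: T.vertex m :=
    lhm_prefix_of_between _ _ _ (le_of_lt hbm) (le_of_lt hmv) hbv
  obtain ⟨r, hr⟩ := hbpre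
  have hrne : r ≠ [] := fun h => by
    rw [h, List.append_nil] at hr
    exact absurd hr (ne_of_lt hbm)
  obtain ⟨d, t, rfl⟩ : ∃ d t, r = d :: t := by
    cases r with
    | nil => exact absurd rfl hrne
    | cons d t => exact ⟨d, t, rfl⟩
  obtain ⟨e, s, hke, hed⟩ := hdom _ _ _ hr.symm
  have hveq : v.dropLast ++ [v.getLast hvne] = v := List.dropLast_append_getLast hvne
  have hdc : d < v.getLast hvne := by
    rw [← hveq, ← hr] at hmv
    exact lhm_snoc_gt_iff.1 hmv
  rw [lhm_mem_D]
  refine ⟨hvT, ?_, ?_⟩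
  · rw [hke]
    exact lhm_prefix_lt_of_length_lt (List.prefix_append _ _) (by simp)
  · have h3 : v.dropLast ++ e :: s < v.dropLast ++ [v.getLast hvne] :=
      lhm_snoc_gt_iff.2 (lt_of_le_of_lt hed hdc)
    rw [hveq] at h3
    rw [hke]
    exact h3

theorem lhm_lukas_le {T : PlaneTree} {n : ℕ} (hn : T.verts.card = n + 1)
    {k m : ℕ} (hk : k ≤ n) (hm : m ≤ n)
    (hdom : ∀ b (d : ℕ) t, T.vertex m = b ++ d :: t →
      ∃ e s, T.vertex k = b ++ e :: s ∧ e ≤ d) :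
    T.lukas m ≤ T.lukas k := by
  rw [lhm_lukas_eq_D hn hk, lhm_lukas_eq_D hn hm]
  exact_mod_cast Finset.card_le_card (lhm_D_subset hn hk hdom)

end PlaneTree

theorem lhm_dom_prefix {p x : List ℕ} (hpx : p <+: x) :
    ∀ b (d : ℕ) t, p = b ++ d :: t → ∃ e s, x = b ++ e :: s ∧ e ≤ d := by
  intro b d t hb
  obtain ⟨r, hr⟩ := hpx
  exact ⟨d, t ++ r, by rw [← hr, hb]; simp, le_rfl⟩

theorem lhm_dom_snoc {a x : List ℕ} {cj e : ℕ} {s : List ℕ}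
    (hx : x = a ++ e :: s) (he : e ≤ cj) :
    ∀ b (d : ℕ) t, a ++ [cj] = b ++ d :: t → ∃ e' s', x = b ++ e' :: s' ∧ e' ≤ d := by
  intro b d t hb
  have hblen : b.length ≤ a.length := by
    have := congrArg List.length hb
    simp at this
    omega
  have hbp : b <+: a ++ [cj] := ⟨d :: t, hb.symm⟩
  have hba : b <+: a := List.prefix_of_prefix_length_le hbp (List.prefix_append a ([cj])) hblen
  obtain ⟨r, hr⟩ := hba
  cases r with
  | nil =>
    rw [List.append_nil] at hr
    subst hr
    have h2 : [cj] = d :: t := List.append_cancel_left hb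
    rw [List.cons.injEq] at h2
    obtain ⟨h21, -⟩ := h2
    exact ⟨e, s, hx, by omega⟩
  | cons d' t' =>
    have h2 : d' :: (t' ++ [cj]) = d :: t := by
      apply List.append_cancel_left (as := b)
      rw [← hb, ← hr]
      simp
    rw [List.cons.injEq] at h2
    refine ⟨d', t' ++ e :: s, ?_, le_of_eq h2.1⟩
    rw [hx, ← hr]
    simp

open PlaneTree in
theorem lhm_core (T : PlaneTree) (n : ℕ) (hn : T.verts.card = n + 1)
    (i j : ℕ) (hij : i < j) (hj : j ≤ n) (j' : ℕ)
    (hj'1 : i ≤ j') (hj'2 : j' ≤ j)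
    (hpj : T.vertex j' <+: T.vertex j)
    (hdom : ∀ k, i ≤ k → k ≤ j → ∀ b (d : ℕ) t, T.vertex j' = b ++ d :: t →
      ∃ e s, T.vertex k = b ++ e :: s ∧ e ≤ d)
    (hlen : ∀ k, i ≤ k → k ≤ j → (T.vertex j').length ≤ (T.vertex k).length)
    (hpref : ∀ k, i ≤ k → k < j → T.vertex k <+: T.vertex j →
      T.vertex j' <+: T.vertex k) :
    T.lukas j' = (Finset.Icc i j).inf' (Finset.nonempty_Icc.mpr hij.le) T.lukas ∧
      T.height j' = (Finset.Icc i j).inf' (Finset.nonempty_Icc.mpr hij.le) T.height ∧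
      (T.height j : ℤ) - T.height j' =
        ((Finset.Ico i j).filter fun k =>
          ∀ l ∈ Finset.Icc k j, T.lukas k ≤ T.lukas l).card := by
  have hmemIcc : j' ∈ Finset.Icc i j := Finset.mem_Icc.2 ⟨hj'1, hj'2⟩
  refine ⟨?_, ?_, ?_⟩
  · -- (1) the Łukasiewicz path minimum
    refine le_antisymm (Finset.le_inf' _ _ ?_) (Finset.inf'_le _ hmemIcc)
    intro k hk
    rw [Finset.mem_Icc] at hk
    exact lhm_lukas_le hn (by omega) (by omega) (hdom k hk.1 hk.2)
  · -- (2) the height minimum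
    refine le_antisymm (Finset.le_inf' _ _ ?_) (Finset.inf'_le _ hmemIcc)
    intro k hk
    rw [Finset.mem_Icc] at hk
    exact hlen k hk.1 hk.2
  · -- (3) the count of minima
    have hchar : ∀ k, i ≤ k → k < j →
        ((∀ l ∈ Finset.Icc k j, T.lukas k ≤ T.lukas l) ↔ T.vertex k <+: T.vertex j) := by
      intro k hik hkj
      constructor
      · intro hP
        by_contra hnp
        have hkv : T.vertex k < T.vertex j := lhm_vertex_lt_vertex hn hkj hj
        have hjk : ¬ T.vertex j <+: T.vertex k := fun h =>
          absurd (lhm_prefix_le h) (not_le.2 hkv)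
        have h1 : lcp (T.vertex k) (T.vertex j) <+: T.vertex k := lhm_lcp_prefix_left _ _
        have h2 : lcp (T.vertex k) (T.vertex j) <+: T.vertex j := lhm_lcp_prefix_right _ _
        set a' := lcp (T.vertex k) (T.vertex j) with ha'
        have hne1 : a' ≠ T.vertex k := fun h => hnp (h ▸ h2)
        have hne2 : a' ≠ T.vertex j := fun h => hjk (h ▸ h1)
        obtain ⟨r1, hr1⟩ := h1
        obtain ⟨r2, hr2⟩ := h2
        obtain ⟨c1, s1, rfl⟩ : ∃ c s, r1 = c :: s := by
          cases r1 with
          | nil => exact absurd (by simpa using hr1) hne1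
          | cons c s => exact ⟨c, s, rfl⟩
        obtain ⟨c2, s2, rfl⟩ : ∃ c s, r2 = c :: s := by
          cases r2 with
          | nil => exact absurd (by simpa using hr2) hne2
          | cons c s => exact ⟨c, s, rfl⟩
        have hc12 : c1 < c2 := by
          have hlt : a' ++ c1 :: s1 < a' ++ c2 :: s2 := by rw [hr1, hr2]; exact hkv
          rcases lhm_cons_lt_cons_iff.1 ((lhm_append_lt_append_left a').1 hlt) with h | ⟨he, -⟩
          · exact h
          · exfalso
            have hpk : a' ++ [c1] <+: T.vertex k := ⟨s1, by rw [← hr1]; simp⟩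
            have hpj2 : a' ++ [c1] <+: T.vertex j := ⟨s2, by rw [← hr2, he]; simp⟩
            have := (lhm_prefix_lcp _ _ _ hpk hpj2).length_le
            rw [← ha'] at this
            simp at this
        have hqpre : a' ++ [c2] <+: T.vertex j := ⟨s2, by rw [← hr2]; simp⟩
        have hqT : a' ++ [c2] ∈ T.verts :=
          T.prefix_closed _ (lhm_vertex_mem hn hj) _ hqpre
        obtain ⟨m, hmn, hmq⟩ := lhm_vertex_surj hn hqT
        have hkq : T.vertex k < a' ++ [c2] := by
          rw [← hr1]
          exact lhm_snoc_gt_iff.2 hc12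
        have hkm : k < m := by
          rw [← lhm_vertex_lt_iff hn (by omega) hmn, hmq]
          exact hkq
        have hmj : m ≤ j := by
          rw [← lhm_vertex_le_iff hn hmn hj, hmq]
          exact lhm_prefix_le hqpre
        have hsub : T.lhmD m ⊆ T.lhmD k := by
          refine lhm_D_subset hn (by omega) ?_
          intro b d t h
          refine lhm_dom_snoc hr1.symm (le_of_lt hc12) b d t ?_
          rw [← hmq]
          exact h
        have hqk : a' ++ [c2] ∈ T.lhmD k := by
          rw [lhm_mem_D]
          refine ⟨hqT, ?_, hkq⟩
          rw [List.dropLast_concat]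
          exact lhm_prefix_lt ⟨c1 :: s1, hr1⟩ hne1
        have hqm : a' ++ [c2] ∉ T.lhmD m := hmq ▸ lhm_vertex_not_mem_D
        have hcard : (T.lhmD m).card < (T.lhmD k).card :=
          Finset.card_lt_card ((Finset.ssubset_iff_of_subset hsub).2 ⟨_, hqk, hqm⟩)
        have hWm : T.lukas m < T.lukas k := by
          rw [lhm_lukas_eq_D hn (by omega : k ≤ n), lhm_lukas_eq_D hn hmn]
          exact_mod_cast hcard
        exact absurd (hP m (Finset.mem_Icc.2 ⟨le_of_lt hkm, hmj⟩)) (not_le.2 hWm)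
      · intro hpre l hl
        rw [Finset.mem_Icc] at hl
        have hkl : T.vertex k <+: T.vertex l :=
          lhm_prefix_of_between _ _ _
            ((lhm_vertex_le_iff hn (by omega) (by omega)).2 hl.1)
            ((lhm_vertex_le_iff hn (by omega) hj).2 hl.2) hpre
        exact lhm_lukas_le hn (by omega) (by omega) (lhm_dom_prefix hkl)
    have hcard : ((Finset.Ico i j).filter fun k =>
        ∀ l ∈ Finset.Icc k j, T.lukas k ≤ T.lukas l).card =
        (T.vertex j).length - (T.vertex j').length := by
      rw [← Nat.card_Ico]
      apply Finset.card_bij (fun k _ => (T.vertex k).length)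
      · intro k hk
        rw [Finset.mem_filter, Finset.mem_Ico] at hk
        obtain ⟨⟨hik, hkj⟩, hPk⟩ := hk
        have hkpre : T.vertex k <+: T.vertex j := (hchar k hik hkj).1 hPk
        have hj'k : T.vertex j' <+: T.vertex k := hpref k hik hkj hkpre
        rw [Finset.mem_Ico]
        refine ⟨hj'k.length_le, ?_⟩
        refine lt_of_le_of_ne hkpre.length_le fun he => ?_
        exact absurd (hkpre.eq_of_length he)
          (ne_of_lt (lhm_vertex_lt_vertex hn hkj hj))
      · intro k hk k' hk' he
        rw [Finset.mem_filter, Finset.mem_Ico] at hk hk'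
        have h1 : T.vertex k <+: T.vertex j := (hchar k hk.1.1 hk.1.2).1 hk.2
        have h2 : T.vertex k' <+: T.vertex j := (hchar k' hk'.1.1 hk'.1.2).1 hk'.2
        have : T.vertex k = T.vertex k' :=
          (List.prefix_of_prefix_length_le h1 h2 (le_of_eq he)).eq_of_length he
        exact lhm_vertex_inj hn (by omega) (by omega) this
      · intro l hl
        rw [Finset.mem_Ico] at hl
        have hlj : l ≤ (T.vertex j).length := le_of_lt hl.2
        have hbpre : (T.vertex j).take l <+: T.vertex j := List.take_prefix _ _
        have hbT : (T.vertex j).take l ∈ T.verts :=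
          T.prefix_closed _ (lhm_vertex_mem hn hj) _ hbpre
        have hblen : ((T.vertex j).take l).length = l := by
          rw [List.length_take]
          omega
        obtain ⟨m, hmn, hmb⟩ := lhm_vertex_surj hn hbT
        have hmj : m < j := by
          rw [← lhm_vertex_lt_iff hn hmn hj, hmb]
          exact lhm_prefix_lt_of_length_lt hbpre (by omega)
        have him : i ≤ m := by
          have hpb : T.vertex j' <+: (T.vertex j).take l :=
            List.prefix_of_prefix_length_le hpj hbpre (by omega)
          have : j' ≤ m := by
            rw [← lhm_vertex_le_iff hn (by omega) hmn, hmb]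
            exact lhm_prefix_le hpb
          omega
        refine ⟨m, ?_, ?_⟩
        · rw [Finset.mem_filter, Finset.mem_Ico]
          exact ⟨⟨him, hmj⟩, (hchar m him hmj).2 (hmb ▸ hbpre)⟩
        · rw [hmb]
          exact hblen
    show (((T.vertex j).length : ℤ)) - ((T.vertex j').length : ℤ) = _
    rw [hcard]
    have := hpj.length_le
    omega

/-- **Minima of the Łukasiewicz path and of the height process between two times.**
For `i < j ≤ n`, letting `j' = i` if `u_i` is an ancestor of `u_j` and otherwise `j' ∈ (i,j]`
the index of the child of the last common ancestor of `u_i` and `u_j` which is an ancestor of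
`u_j`, one has `W(j') = min_{i ≤ k ≤ j} W(k)`, `H(j') = min_{i ≤ k ≤ j} H(k)` and
`H(j) - H(j') = #{k ∈ {i,…,j-1} : W(k) = min_{k ≤ l ≤ j} W(l)}`. -/
theorem lukasiewicz_height_minima
    (T : PlaneTree) (n : ℕ) (hn : T.verts.card = n + 1)
    (i j : ℕ) (hij : i < j) (hj : j ≤ n) (j' : ℕ)
    (h1 : T.vertex i <+: T.vertex j → j' = i)
    (h2 : ¬ T.vertex i <+: T.vertex j →
      i < j' ∧ j' ≤ j ∧
        T.vertex j' = (T.vertex j).take ((lcp (T.vertex i) (T.vertex j)).length + 1)) :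
    T.lukas j' = (Finset.Icc i j).inf' (Finset.nonempty_Icc.mpr hij.le) T.lukas ∧
      T.height j' = (Finset.Icc i j).inf' (Finset.nonempty_Icc.mpr hij.le) T.height ∧
      (T.height j : ℤ) - T.height j' =
        ((Finset.Ico i j).filter fun k =>
          ∀ l ∈ Finset.Icc k j, T.lukas k ≤ T.lukas l).card := by
  by_cases hanc : T.vertex i <+: T.vertex j
  · -- `u_i` is an ancestor of `u_j`
    obtain rfl : j' = i := h1 hanc
    have hprefk : ∀ k, j' ≤ k → k ≤ j → T.vertex j' <+: T.vertex k := by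
      intro k hik hkj
      exact lhm_prefix_of_between _ _ _
        ((lhm_vertex_le_iff hn (by omega) (by omega)).2 hik)
        ((lhm_vertex_le_iff hn (by omega) hj).2 hkj) hanc
    refine lhm_core T n hn j' j hij hj j' le_rfl hij.le hanc ?_ ?_ ?_
    · intro k hik hkj
      exact lhm_dom_prefix (hprefk k hik hkj)
    · intro k hik hkj
      exact (hprefk k hik hkj).length_le
    · intro k hik hkj _
      exact hprefk k hik (le_of_lt hkj)
  · -- `u_i` is not an ancestor of `u_j`
    obtain ⟨hij', hj'j, hp⟩ := h2 hanc
    have ha_i : lcp (T.vertex i) (T.vertex j) <+: T.vertex i := lhm_lcp_prefix_left _ _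
    have ha_j : lcp (T.vertex i) (T.vertex j) <+: T.vertex j := lhm_lcp_prefix_right _ _
    set a := lcp (T.vertex i) (T.vertex j) with ha
    have ha_ne_i : a ≠ T.vertex i := fun h => hanc (h ▸ ha_j)
    have hvij : T.vertex i < T.vertex j := lhm_vertex_lt_vertex hn hij hj
    have ha_ne_j : a ≠ T.vertex j := fun h =>
      absurd (lhm_prefix_le (h ▸ ha_i)) (not_le.2 hvij)
    obtain ⟨r, hr⟩ := ha_j
    obtain ⟨cj, tj, rfl⟩ : ∃ c t, r = c :: t := by
      cases r with
      | nil => exact absurd (by simpa using hr) ha_ne_j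
      | cons c t => exact ⟨c, t, rfl⟩
    have hp' : T.vertex j' = a ++ [cj] := by
      rw [hp, ← hr, List.take_append,
        List.take_of_length_le (by omega),
        show a.length + 1 - a.length = 1 from by omega]
      rfl
    have hpj : T.vertex j' <+: T.vertex j := by
      rw [hp', ← hr]
      exact ⟨tj, by simp⟩
    have hkey : ∀ k, i ≤ k → k ≤ j → ∃ e s, T.vertex k = a ++ e :: s ∧ e ≤ cj := by
      intro k hik hkj
      have hkn : k ≤ n := by omega
      have hain : a < T.vertex i := lhm_prefix_lt ha_i ha_ne_i
      have hle1 : a ≤ T.vertex k :=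
        le_trans (le_of_lt hain) ((lhm_vertex_le_iff hn (by omega) hkn).2 hik)
      have hle2 : T.vertex k ≤ T.vertex j := (lhm_vertex_le_iff hn hkn hj).2 hkj
      have hak : a <+: T.vertex k := lhm_prefix_of_between _ _ _ hle1 hle2 (⟨cj :: tj, hr⟩)
      have hane : a ≠ T.vertex k := fun h =>
        absurd h (ne_of_lt (lt_of_lt_of_le hain ((lhm_vertex_le_iff hn (by omega) hkn).2 hik)))
      obtain ⟨r', hr'⟩ := hak
      obtain ⟨e, s, rfl⟩ : ∃ e s, r' = e :: s := by
        cases r' with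
        | nil => exact absurd (by simpa using hr') hane
        | cons e s => exact ⟨e, s, rfl⟩
      refine ⟨e, s, hr'.symm, ?_⟩
      by_contra hc
      have : T.vertex j < T.vertex k := by
        rw [← hr, ← hr']
        exact lhm_lt_of_entry_lt (by omega)
      exact absurd hle2 (not_le.2 this)
    refine lhm_core T n hn i j hij hj j' (le_of_lt hij') hj'j hpj ?_ ?_ ?_
    · intro k hik hkj b d t h
      obtain ⟨e, s, hks, he⟩ := hkey k hik hkj
      refine lhm_dom_snoc hks he b d t ?_
      rw [← hp']
      exact h
    · intro k hik hkj
      obtain ⟨e, s, hks, -⟩ := hkey k hik hkj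
      have h1 := congrArg List.length hp'
      have h2 := congrArg List.length hks
      simp at h1 h2
      omega
    · intro k hik hkj hkpre
      obtain ⟨e, s, hks, -⟩ := hkey k hik (le_of_lt hkj)
      refine List.prefix_of_prefix_length_le hpj hkpre ?_
      have h1 := congrArg List.length hp'
      have h2 := congrArg List.length hks
      simp at h1 h2
      omega

end
end

section
/- Let N ≥ 1 and let x_1, …, x_N be integers, each ≥ −1, with x_1 + … + x_N = −1. For 1 ≤ j ≤ N let x^{(j)} denote the j-th cyclic shift, x^{(j)}_k = x_{((k+j−1) mod N)+1}. Then there is exactly one index j ∈ {1, …, N} such that all partial sums of x^{(j)} satisfy x^{(j)}_1 + … + x^{(j)}_k ≥ 0 for every 1 ≤ k ≤ N−1, and this index j is the least time at which the partial-sum path S(k) = x_1 + … + x_k attains its minimum over {1, …, N}, i.e. j = min{ 1 ≤ k ≤ N : S(k) = min_{1 ≤ i ≤ N} S(i) }. -/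
open Finset

private lemma sum_Ioc_shift (f : ℕ → ℤ) (a b : ℕ) :
    ∑ i ∈ Finset.Ioc a (a + b), f i = ∑ i ∈ Finset.Icc 1 b, f (i + a) := by
  induction b with
  | zero => simp
  | succ b ih =>
    rw [show a + (b + 1) = (a + b) + 1 from rfl,
      Finset.sum_Ioc_succ_top (Nat.le_add_right a b), ih,
      Finset.sum_Icc_succ_top (by omega : 1 ≤ b + 1)]
    congr 1
    congr 1
    omega

private lemma sum_Ioc_shift' (f : ℕ → ℤ) {a b : ℕ} (h : a ≤ b) :
    ∑ i ∈ Finset.Ioc a b, f i = ∑ i ∈ Finset.Icc 1 (b - a), f (i + a) := by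
  conv_lhs => rw [show b = a + (b - a) from by omega]
  exact sum_Ioc_shift f a (b - a)

private lemma Icc_one_eq_Ioc (b : ℕ) : Finset.Icc 1 b = Finset.Ioc 0 b :=
  Finset.Icc_add_one_left_eq_Ioc 0 b

private lemma sum_split (x : ℕ → ℤ) {a b : ℕ} (h : a ≤ b) :
    ∑ i ∈ Finset.Icc 1 b, x i
      = (∑ i ∈ Finset.Icc 1 a, x i) + ∑ i ∈ Finset.Icc 1 (b - a), x (i + a) := by
  rw [Icc_one_eq_Ioc b, Icc_one_eq_Ioc a, ← sum_Ioc_shift' x h,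
    Finset.sum_Ioc_consecutive _ (Nat.zero_le a) h]

/-- **The cycle lemma.** Let `x_1, …, x_N` be integers `≥ -1` with sum `-1`. Among the `N`
cyclic shifts `x^{(j)}_k = x_{((k+j-1) mod N)+1}`, exactly one has all its partial sums
`x^{(j)}_1 + … + x^{(j)}_k ≥ 0` for `1 ≤ k ≤ N-1`, and this index `j` is the least time at
which the partial-sum path `S(k) = x_1 + … + x_k` attains its minimum over `{1, …, N}`. -/
theorem cycle_lemma (N : ℕ) (hN : 1 ≤ N) (x : ℕ → ℤ)
    (hx : ∀ i ∈ Finset.Icc 1 N, -1 ≤ x i)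
    (hsum : ∑ i ∈ Finset.Icc 1 N, x i = -1) :
    (∃! j : ℕ, j ∈ Finset.Icc 1 N ∧
        ∀ k ∈ Finset.Icc 1 (N - 1),
          0 ≤ ∑ i ∈ Finset.Icc 1 k, x ((i + j - 1) % N + 1)) ∧
      ∀ j ∈ Finset.Icc 1 N,
        (∀ k ∈ Finset.Icc 1 (N - 1),
          0 ≤ ∑ i ∈ Finset.Icc 1 k, x ((i + j - 1) % N + 1)) →
        j = sInf {k : ℕ | k ∈ Finset.Icc 1 N ∧
          ∀ m ∈ Finset.Icc 1 N,
            ∑ i ∈ Finset.Icc 1 k, x i ≤ ∑ i ∈ Finset.Icc 1 m, x i} := by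
  -- value of the shifted partial sums
  have Tval : ∀ j k : ℕ, 1 ≤ j → j ≤ N → 1 ≤ k → k ≤ N - 1 →
      (∑ i ∈ Finset.Icc 1 k, x ((i + j - 1) % N + 1)) =
        if j + k ≤ N then (∑ i ∈ Finset.Icc 1 (j + k), x i) - ∑ i ∈ Finset.Icc 1 j, x i
        else (∑ i ∈ Finset.Icc 1 (j + k - N), x i) - 1 - ∑ i ∈ Finset.Icc 1 j, x i := by
    intro j k hj1 hjN hk1 hkN
    by_cases h : j + k ≤ N
    · rw [if_pos h]
      have h1 : ∀ i ∈ Finset.Icc 1 k, x ((i + j - 1) % N + 1) = x (i + j) := by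
        intro i hi
        simp only [Finset.mem_Icc] at hi
        rw [Nat.mod_eq_of_lt (by omega : i + j - 1 < N)]
        congr 1
        omega
      rw [Finset.sum_congr rfl h1]
      have hs := sum_split x (show j ≤ j + k by omega)
      rw [show j + k - j = k from by omega] at hs
      linarith
    · rw [if_neg h]
      push_neg at h
      have hsplit : (∑ i ∈ Finset.Icc 1 k, x ((i + j - 1) % N + 1)) =
          (∑ i ∈ Finset.Icc 1 (N - j), x ((i + j - 1) % N + 1)) +
            ∑ i ∈ Finset.Ioc (N - j) k, x ((i + j - 1) % N + 1) := by
        rw [Icc_one_eq_Ioc k, Icc_one_eq_Ioc (N - j),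
          Finset.sum_Ioc_consecutive _ (Nat.zero_le _) (by omega)]
      rw [hsplit]
      have hfirst : (∑ i ∈ Finset.Icc 1 (N - j), x ((i + j - 1) % N + 1)) =
          (∑ i ∈ Finset.Icc 1 N, x i) - ∑ i ∈ Finset.Icc 1 j, x i := by
        have h1 : ∀ i ∈ Finset.Icc 1 (N - j), x ((i + j - 1) % N + 1) = x (i + j) := by
          intro i hi
          simp only [Finset.mem_Icc] at hi
          rw [Nat.mod_eq_of_lt (by omega : i + j - 1 < N)]
          congr 1
          omega
        rw [Finset.sum_congr rfl h1]
        have hs := sum_split x hjN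
        linarith
      have hsecond : (∑ i ∈ Finset.Ioc (N - j) k, x ((i + j - 1) % N + 1)) =
          ∑ i ∈ Finset.Icc 1 (j + k - N), x i := by
        rw [sum_Ioc_shift' _ (show N - j ≤ k by omega),
          show k - (N - j) = j + k - N from by omega]
        apply Finset.sum_congr rfl
        intro i hi
        simp only [Finset.mem_Icc] at hi
        rw [show i + (N - j) + j - 1 = (i - 1) + N from by omega, Nat.add_mod_right,
          Nat.mod_eq_of_lt (by omega : i - 1 < N)]
        congr 1
        omega
      rw [hfirst, hsecond, hsum]
      ring
  -- characterization of the "all partial sums nonnegative" property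
  have char : ∀ j : ℕ, 1 ≤ j → j ≤ N →
      ((∀ k ∈ Finset.Icc 1 (N - 1), 0 ≤ ∑ i ∈ Finset.Icc 1 k, x ((i + j - 1) % N + 1)) ↔
        ((∀ l ∈ Finset.Icc 1 N,
            (∑ i ∈ Finset.Icc 1 j, x i) ≤ ∑ i ∈ Finset.Icc 1 l, x i) ∧
          ∀ l, 1 ≤ l → l < j →
            (∑ i ∈ Finset.Icc 1 j, x i) < ∑ i ∈ Finset.Icc 1 l, x i)) := by
    intro j hj1 hjN
    constructor
    · intro h
      have key : ∀ l, 1 ≤ l → l < j →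
          (∑ i ∈ Finset.Icc 1 j, x i) < ∑ i ∈ Finset.Icc 1 l, x i := by
        intro l hl1 hlj
        have hmem : l + N - j ∈ Finset.Icc 1 (N - 1) := by
          simp only [Finset.mem_Icc]; omega
        have ht := h (l + N - j) hmem
        rw [Tval j (l + N - j) hj1 hjN (by omega) (by omega), if_neg (by omega),
          show j + (l + N - j) - N = l from by omega] at ht
        linarith
      refine ⟨?_, key⟩
      intro l hl
      simp only [Finset.mem_Icc] at hl
      rcases lt_trichotomy l j with hc | hc | hc
      · exact le_of_lt (key l hl.1 hc)
      · rw [hc]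
      · have hmem : l - j ∈ Finset.Icc 1 (N - 1) := by
          simp only [Finset.mem_Icc]; omega
        have ht := h (l - j) hmem
        rw [Tval j (l - j) hj1 hjN (by omega) (by omega), if_pos (by omega),
          show j + (l - j) = l from by omega] at ht
        linarith
    · rintro ⟨hmin, hstrict⟩ k hk
      simp only [Finset.mem_Icc] at hk
      rw [Tval j k hj1 hjN hk.1 hk.2]
      by_cases h : j + k ≤ N
      · rw [if_pos h]
        have := hmin (j + k) (by simp only [Finset.mem_Icc]; omega)
        linarith
      · rw [if_neg h]
        have := hstrict (j + k - N) (by omega) (by omega)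
        linarith
  -- the argmin set
  set A : Set ℕ := {k : ℕ | k ∈ Finset.Icc 1 N ∧
    ∀ m ∈ Finset.Icc 1 N,
      ∑ i ∈ Finset.Icc 1 k, x i ≤ ∑ i ∈ Finset.Icc 1 m, x i} with hA
  obtain ⟨a, haM, hamin⟩ := Finset.exists_min_image (Finset.Icc 1 N)
    (fun k => ∑ i ∈ Finset.Icc 1 k, x i) ⟨1, by simp [hN]⟩
  have hAne : A.Nonempty := ⟨a, haM, hamin⟩
  have hj₀ : sInf A ∈ A := Nat.sInf_mem hAne
  obtain ⟨hj₀mem, hj₀min⟩ := hj₀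
  have ha1 : 1 ≤ sInf A := (Finset.mem_Icc.mp hj₀mem).1
  have haN : sInf A ≤ N := (Finset.mem_Icc.mp hj₀mem).2
  have hstrict₀ : ∀ l, 1 ≤ l → l < sInf A →
      (∑ i ∈ Finset.Icc 1 (sInf A), x i) < ∑ i ∈ Finset.Icc 1 l, x i := by
    intro l hl1 hlj
    have hlmem : l ∈ Finset.Icc 1 N := Finset.mem_Icc.mpr ⟨hl1, by omega⟩
    have hle := hj₀min l hlmem
    rcases hle.lt_or_eq with hc | hc
    · exact hc
    · exfalso
      have hlA : l ∈ A := ⟨hlmem, fun m hm => by rw [← hc]; exact hj₀min m hm⟩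
      have := Nat.sInf_le hlA
      omega
  have hgood₀ : ∀ k ∈ Finset.Icc 1 (N - 1),
      0 ≤ ∑ i ∈ Finset.Icc 1 k, x ((i + sInf A - 1) % N + 1) :=
    (char (sInf A) ha1 haN).mpr ⟨hj₀min, hstrict₀⟩
  have key : ∀ j, j ∈ Finset.Icc 1 N →
      (∀ k ∈ Finset.Icc 1 (N - 1),
        0 ≤ ∑ i ∈ Finset.Icc 1 k, x ((i + j - 1) % N + 1)) → j = sInf A := by
    intro j hj hgood
    have hj' := Finset.mem_Icc.mp hj
    obtain ⟨hmin, hstrict⟩ := (char j hj'.1 hj'.2).mp hgood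
    have hjA : j ∈ A := ⟨hj, hmin⟩
    have h1 : sInf A ≤ j := Nat.sInf_le hjA
    rcases h1.lt_or_eq with hc | hc
    · exfalso
      have h2 := hstrict (sInf A) ha1 hc
      have h3 := hj₀min j hj
      linarith
    · omega
  constructor
  · exact ⟨sInf A, ⟨hj₀mem, hgood₀⟩, fun y hy => key y hy.1 hy.2⟩
  · intro j hj hgood
    exact key j hj hgood
end

section
/- Let N ≥ 2 and let X_1, …, X_N be i.i.d. random variables with values in {−1, 0, 1, 2, …} such that P(X_1 + … + X_N = −1) > 0, and condition on the event { X_1 + … + X_N = −1 }. Let J = min{ 1 ≤ k ≤ N : S(k) = min_{1 ≤ i ≤ N} S(i) } be the least time at which the partial-sum path S(k) = X_1 + … + X_k attains its overall minimum. Then, under this conditioning, J is uniformly distributed on {1, …, N}, and J is independent of the cyclically shifted sequence X^{(J)} = (X_{((k+J−1) mod N)+1})_{1 ≤ k ≤ N}. -/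
open MeasureTheory ProbabilityTheory Filter Set
open scoped ENNReal Topology
open Fin.NatCast

namespace PCL

variable (N : ℕ) [NeZero N]

def idx (k : ℕ) : Fin N :=
  ⟨(k - 1) % N, Nat.mod_lt _ (Nat.pos_of_ne_zero (NeZero.ne N))⟩

def vnat (v : Fin N → ℤ) (k : ℕ) : ℤ := v (idx N k)

def S (v : Fin N → ℤ) (k : ℕ) : ℤ := ∑ i ∈ Finset.Icc 1 k, vnat N v i

def A (v : Fin N → ℤ) : Set ℕ :=
  {k : ℕ | k ∈ Finset.Icc 1 N ∧ ∀ m ∈ Finset.Icc 1 N, S N v k ≤ S N v m}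

noncomputable def Jv (v : Fin N → ℤ) : ℕ := sInf (A N v)

def R (j : ℕ) (v : Fin N → ℤ) : Fin N → ℤ := fun i => v (i + (j : Fin N))

def W (j : ℕ) (v : Fin N → ℤ) : ℕ → ℤ := fun k => vnat N v ((k + j - 1) % N + 1)

noncomputable def Yv (v : Fin N → ℤ) : ℕ → ℤ := W N (Jv N v) v

lemma npos : 0 < N := Nat.pos_of_ne_zero (NeZero.ne N)

lemma idx_add (k j : ℕ) (hk : 1 ≤ k) : idx N (k + j) = idx N k + (j : Fin N) := by
  apply Fin.ext
  simp only [idx, Fin.add_def, Fin.val_natCast]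
  rw [← Nat.add_mod]
  congr 1
  omega

lemma vnat_add (j : ℕ) (v : Fin N → ℤ) (k : ℕ) (hk : 1 ≤ k) :
    vnat N (R N j v) k = vnat N v (k + j) := by
  unfold vnat R
  rw [idx_add N k j hk]

lemma vnat_mod (v : Fin N → ℤ) (k : ℕ) (hk : 1 ≤ k) :
    vnat N v ((k - 1) % N + 1) = vnat N v k := by
  unfold vnat
  congr 1
  apply Fin.ext
  simp only [idx, Nat.add_sub_cancel]
  exact Nat.mod_mod_of_dvd _ dvd_rfl

lemma vnat_add_N (v : Fin N → ℤ) (k : ℕ) (hk : 1 ≤ k) :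
    vnat N v (k + N) = vnat N v k := by
  unfold vnat
  congr 1
  apply Fin.ext
  simp only [idx]
  rw [show k + N - 1 = (k - 1) + N by omega, Nat.add_mod_right]

lemma W_eq (j : ℕ) (hj : 1 ≤ j) (v : Fin N → ℤ) (k : ℕ) :
    W N j v k = vnat N v (k + j) := by
  unfold W
  exact vnat_mod N v (k + j) (by omega)

lemma S_R (j k : ℕ) (v : Fin N → ℤ) :
    S N v j + S N (R N j v) k = S N v (j + k) := by
  unfold S
  have hIoc : ∀ m : ℕ, Finset.Icc 1 m = Finset.Ioc 0 m := fun m => Finset.Icc_add_one_left_eq_Ioc 0 m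
  rw [hIoc, hIoc, hIoc,
    ← Finset.sum_Ioc_consecutive (vnat N v) (Nat.zero_le j) (Nat.le_add_right j k)]
  congr 1
  have hmap : Finset.Ioc j (j + k) = (Finset.Ioc 0 k).map (addRightEmbedding j) := by
    rw [Finset.map_add_right_Ioc]
    congr 1 <;> omega
  rw [hmap, Finset.sum_map]
  refine Finset.sum_congr rfl fun i hi => ?_
  simp only [Finset.mem_Ioc] at hi
  simp only [addRightEmbedding_apply]
  exact vnat_add N j v i hi.1

lemma S_add_N (v : Fin N → ℤ) (k : ℕ) : S N v (N + k) = S N v N + S N v k := by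
  unfold S
  have hIoc : ∀ m : ℕ, Finset.Icc 1 m = Finset.Ioc 0 m := fun m => Finset.Icc_add_one_left_eq_Ioc 0 m
  rw [hIoc, hIoc, hIoc,
    ← Finset.sum_Ioc_consecutive (vnat N v) (Nat.zero_le N) (Nat.le_add_right N k)]
  congr 1
  have hmap : Finset.Ioc N (N + k) = (Finset.Ioc 0 k).map (addRightEmbedding N) := by
    rw [Finset.map_add_right_Ioc]
    congr 1 <;> omega
  rw [hmap, Finset.sum_map]
  refine Finset.sum_congr rfl fun i hi => ?_
  simp only [Finset.mem_Ioc] at hi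
  simp only [addRightEmbedding_apply]
  exact vnat_add_N N v i hi.1

lemma A_nonempty (v : Fin N → ℤ) : (A N v).Nonempty := by
  obtain ⟨k, hk, hmin⟩ := Finset.exists_min_image (Finset.Icc 1 N) (S N v)
    ⟨1, Finset.mem_Icc.2 ⟨le_refl 1, npos N⟩⟩
  exact ⟨k, hk, hmin⟩

lemma Jv_mem (v : Fin N → ℤ) : Jv N v ∈ A N v := Nat.sInf_mem (A_nonempty N v)

lemma Jv_eq_iff (v : Fin N → ℤ) (j : ℕ) :
    Jv N v = j ↔ j ∈ A N v ∧ ∀ k < j, k ∉ A N v := by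
  constructor
  · rintro rfl
    exact ⟨Jv_mem N v, fun k hk => Nat.notMem_of_lt_sInf hk⟩
  · rintro ⟨h1, h2⟩
    exact le_antisymm (Nat.sInf_le h1)
      (not_lt.1 fun hlt => h2 _ hlt (Nat.sInf_mem (A_nonempty N v)))

def FirstMin (v : Fin N → ℤ) (j : ℕ) : Prop :=
  j ∈ Finset.Icc 1 N ∧ (∀ i ∈ Finset.Icc 1 N, j ≤ i → S N v j ≤ S N v i) ∧
    (∀ i ∈ Finset.Icc 1 N, i < j → S N v j < S N v i)

lemma Jv_eq_iff_firstMin (v : Fin N → ℤ) (j : ℕ) :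
    Jv N v = j ↔ FirstMin N v j := by
  rw [Jv_eq_iff]
  constructor
  · rintro ⟨⟨hj, hmin⟩, h2⟩
    refine ⟨hj, fun i hi _ => hmin i hi, fun i hi hij => ?_⟩
    have hiA : i ∉ A N v := h2 i hij
    simp only [A, Set.mem_setOf_eq, not_and, not_forall] at hiA
    obtain ⟨m, hm, hlt⟩ := hiA hi
    exact lt_of_le_of_lt (hmin m hm) (lt_of_not_ge hlt)
  · rintro ⟨hj, hge, hlt⟩
    refine ⟨⟨hj, fun m hm => ?_⟩, fun k hk hkA => ?_⟩
    · rcases le_or_gt j m with h | h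
      · exact hge m hm h
      · exact le_of_lt (hlt m hm h)
    · obtain ⟨hkIcc, hkmin⟩ := hkA
      exact absurd (hkmin j hj) (not_le.2 (hlt k hkIcc hk))

lemma cycle (v : Fin N → ℤ) (hsum : S N v N = -1) (j : ℕ) (hj1 : 1 ≤ j) (hj2 : j ≤ N) :
    Jv N (R N j v) = N ↔ Jv N v = j := by
  have hNpos := npos N
  set u := R N j v with hu
  have hSu : ∀ k, S N v j + S N u k = S N v (j + k) := fun k => S_R N j k v
  have hSuN : S N u N = -1 := by
    have h1 := hSu N
    have h2 : S N v (j + N) = S N v N + S N v j := by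
      rw [Nat.add_comm j N, S_add_N]
    omega
  rw [Jv_eq_iff_firstMin, Jv_eq_iff_firstMin]
  constructor
  · rintro ⟨-, -, hlt⟩
    refine ⟨Finset.mem_Icc.2 ⟨hj1, hj2⟩, ?_, ?_⟩
    · intro i hi hji
      rcases eq_or_lt_of_le hji with rfl | hji
      · exact le_refl _
      obtain ⟨hi1, hi2⟩ := Finset.mem_Icc.1 hi
      set k := i - j with hk
      have hki : j + k = i := by omega
      have hk1 : 1 ≤ k := by omega
      have hkN : k < N := by omega
      have := hlt k (Finset.mem_Icc.2 ⟨hk1, le_of_lt hkN⟩) hkN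
      have h1 := hSu k
      rw [hki] at h1
      omega
    · intro i hi hij
      obtain ⟨hi1, hi2⟩ := Finset.mem_Icc.1 hi
      set k := N + i - j with hk
      have hk1 : 1 ≤ k := by omega
      have hkN : k < N := by omega
      have hjk : j + k = N + i := by omega
      have := hlt k (Finset.mem_Icc.2 ⟨hk1, le_of_lt hkN⟩) hkN
      have h1 := hSu k
      rw [hjk, S_add_N] at h1
      omega
  · rintro ⟨-, hge, hlt⟩
    refine ⟨Finset.mem_Icc.2 ⟨hNpos, le_refl N⟩, ?_, ?_⟩
    · intro i hi hNi
      obtain ⟨-, hi2⟩ := Finset.mem_Icc.1 hi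
      have : i = N := le_antisymm hi2 hNi
      subst this
      exact le_refl _
    · intro k hk hkN
      obtain ⟨hk1, hk2⟩ := Finset.mem_Icc.1 hk
      have h1 := hSu k
      rcases le_or_gt (j + k) N with hle | hgt
      · have := hge (j + k) (Finset.mem_Icc.2 ⟨by omega, hle⟩) (by omega)
        omega
      · set r := j + k - N with hr
        have hr1 : 1 ≤ r := by omega
        have hrj : r < j := by omega
        have hjk : j + k = N + r := by omega
        rw [hjk, S_add_N] at h1
        have := hlt r (Finset.mem_Icc.2 ⟨hr1, by omega⟩) hrj
        omega

lemma W_R (j : ℕ) (hj : 1 ≤ j) (v : Fin N → ℤ) : W N N (R N j v) = W N j v := by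
  funext k
  have hN := npos N
  rw [W_eq N N (npos N) (R N j v) k, vnat_add N j v (k + N) (by omega),
    W_eq N j hj v k]
  have h : k + N + j = (k + j) + N := by omega
  rw [h, vnat_add_N N v (k + j) (by omega)]

lemma S_R_N (j : ℕ) (v : Fin N → ℤ) : S N (R N j v) N = S N v N := by
  have h1 := S_R N j N v
  have h2 : S N v (j + N) = S N v N + S N v j := by rw [Nat.add_comm j N, S_add_N]
  omega

def D (t : Set (ℕ → ℤ)) (j : ℕ) : Set (Fin N → ℤ) :=
  {v | Jv N v = j ∧ W N j v ∈ t ∧ S N v N = -1}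

lemma key_set (t : Set (ℕ → ℤ)) (j : ℕ) (hj1 : 1 ≤ j) (hj2 : j ≤ N) :
    R N j ⁻¹' (D N t N) = D N t j := by
  ext v
  simp only [D, Set.mem_preimage, Set.mem_setOf_eq, S_R_N, W_R N j hj1]
  constructor
  · rintro ⟨h1, h2, h3⟩
    exact ⟨(cycle N v h3 j hj1 hj2).1 h1, h2, h3⟩
  · rintro ⟨h1, h2, h3⟩
    exact ⟨(cycle N v h3 j hj1 hj2).2 h1, h2, h3⟩

lemma Jv_mem_Icc (v : Fin N → ℤ) : Jv N v ∈ Finset.Icc 1 N := (Jv_mem N v).1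

lemma D_union (t : Set (ℕ → ℤ)) :
    {v : Fin N → ℤ | Yv N v ∈ t ∧ S N v N = -1} = ⋃ j ∈ Finset.Icc 1 N, D N t j := by
  ext v
  simp only [Set.mem_setOf_eq, Set.mem_iUnion, D, exists_prop]
  constructor
  · rintro ⟨h1, h2⟩
    exact ⟨Jv N v, Jv_mem_Icc N v, rfl, h1, h2⟩
  · rintro ⟨j, hj, hJ, h1, h2⟩
    rw [← hJ] at h1
    exact ⟨h1, h2⟩

end PCL
/-- **The probabilistic cycle lemma.** Let `X_1, …, X_N` be i.i.d. random variables with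
values in `{-1, 0, 1, 2, …}`, conditioned on `X_1 + … + X_N = -1`. Let
`J = min{1 ≤ k ≤ N : S(k) = min_{1 ≤ i ≤ N} S(i)}` be the least time at which the
partial-sum path attains its overall minimum. Then, under this conditioning, `J` is uniformly
distributed on `{1, …, N}` and is independent of the cyclically shifted sequence
`X^{(J)} = (X_{((k+J-1) mod N)+1})_k`. -/
theorem probabilistic_cycle_lemma
    {Ω : Type*} [MeasurableSpace Ω] (P : Measure Ω) [IsProbabilityMeasure P]
    (N : ℕ) (hN : 2 ≤ N) (X : ℕ → Ω → ℤ)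
    (hmeas : ∀ i, Measurable (X i))
    (hval : ∀ i ω, -1 ≤ X i ω)
    (hindep : iIndepFun X P)
    (hident : ∀ i k, Measure.map (X i) P = Measure.map (X k) P)
    (hpos : 0 < P {ω | ∑ i ∈ Finset.Icc 1 N, X i ω = -1}) :
    letI J : Ω → ℕ := fun ω =>
      sInf {k : ℕ | k ∈ Finset.Icc 1 N ∧ ∀ m ∈ Finset.Icc 1 N,
        ∑ i ∈ Finset.Icc 1 k, X i ω ≤ ∑ i ∈ Finset.Icc 1 m, X i ω}
    (∀ j ∈ Finset.Icc 1 N,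
        (P[|{ω | ∑ i ∈ Finset.Icc 1 N, X i ω = -1}]) {ω | J ω = j} = (N : ℝ≥0∞)⁻¹) ∧
      IndepFun J (fun ω (k : ℕ) => X ((k + J ω - 1) % N + 1) ω)
        (P[|{ω | ∑ i ∈ Finset.Icc 1 N, X i ω = -1}]) := by
  classical
  set J : Ω → ℕ := fun ω =>
      sInf {k : ℕ | k ∈ Finset.Icc 1 N ∧ ∀ m ∈ Finset.Icc 1 N,
        ∑ i ∈ Finset.Icc 1 k, X i ω ≤ ∑ i ∈ Finset.Icc 1 m, X i ω} with hJdef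
  haveI : NeZero N := ⟨by omega⟩
  have hNpos : 0 < N := by omega
  set V : Ω → (Fin N → ℤ) := fun ω i => X ((i : ℕ) + 1) ω with hV
  have hVmeas : Measurable V := measurable_pi_lambda _ fun i => hmeas _
  -- translation between Ω-level and vector-level objects
  have hvnatV : ∀ ω i, 1 ≤ i → i ≤ N → PCL.vnat N (V ω) i = X i ω := by
    intro ω i h1 h2
    show X ((i - 1) % N + 1) ω = X i ω
    rw [Nat.mod_eq_of_lt (by omega)]
    congr 1
    omega
  have hS : ∀ ω k, k ≤ N → PCL.S N (V ω) k = ∑ i ∈ Finset.Icc 1 k, X i ω := by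
    intro ω k hk
    refine Finset.sum_congr rfl fun i hi => ?_
    obtain ⟨h1, h2⟩ := Finset.mem_Icc.1 hi
    exact hvnatV ω i h1 (le_trans h2 hk)
  have hAset : ∀ ω, {k : ℕ | k ∈ Finset.Icc 1 N ∧ ∀ m ∈ Finset.Icc 1 N,
      ∑ i ∈ Finset.Icc 1 k, X i ω ≤ ∑ i ∈ Finset.Icc 1 m, X i ω} = PCL.A N (V ω) := by
    intro ω
    ext k
    simp only [PCL.A, Set.mem_setOf_eq]
    constructor
    · rintro ⟨hk, h⟩
      refine ⟨hk, fun m hm => ?_⟩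
      rw [hS ω k (Finset.mem_Icc.1 hk).2, hS ω m (Finset.mem_Icc.1 hm).2]
      exact h m hm
    · rintro ⟨hk, h⟩
      refine ⟨hk, fun m hm => ?_⟩
      rw [← hS ω k (Finset.mem_Icc.1 hk).2, ← hS ω m (Finset.mem_Icc.1 hm).2]
      exact h m hm
  have hJ : ∀ ω, J ω = PCL.Jv N (V ω) := fun ω => congrArg sInf (hAset ω)
  have hY : ∀ ω, (fun k : ℕ => X ((k + PCL.Jv N (V ω) - 1) % N + 1) ω) = PCL.Yv N (V ω) := by
    intro ω
    funext k
    show X ((k + PCL.Jv N (V ω) - 1) % N + 1) ω = PCL.W N (PCL.Jv N (V ω)) (V ω) k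
    show X ((k + PCL.Jv N (V ω) - 1) % N + 1) ω
      = PCL.vnat N (V ω) ((k + PCL.Jv N (V ω) - 1) % N + 1)
    rw [hvnatV ω _ (by omega)
      (by have := Nat.mod_lt (k + PCL.Jv N (V ω) - 1) hNpos; omega)]
  have hCset : {ω | ∑ i ∈ Finset.Icc 1 N, X i ω = -1}
      = V ⁻¹' {v | PCL.S N v N = -1} := by
    ext ω
    simp only [Set.mem_setOf_eq, Set.mem_preimage, hS ω N le_rfl]
  -- joint law is the product measure, for any injective selection of indices
  have hpi : ∀ f : Fin N → ℕ, Function.Injective f →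
      P.map (fun ω i => X (f i) ω) = Measure.pi (fun _ => P.map (X 1)) := by
    intro f hf
    have hF : Measurable (fun ω i => X (f i) ω) := measurable_pi_lambda _ fun i => hmeas _
    haveI : IsProbabilityMeasure (P.map (X 1)) :=
      Measure.isProbabilityMeasure_map (hmeas 1).aemeasurable
    haveI : SigmaFinite (P.map (X 1)) := inferInstance
    refine (Measure.pi_eq (μ := fun _ : Fin N => P.map (X 1)) fun s hs => ?_).symm
    rw [Measure.map_apply hF (MeasurableSet.univ_pi fun i => hs i)]
    set sets : ℕ → Set ℤ := fun n => if h : ∃ i, f i = n then s h.choose else Set.univ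
      with hsets
    have hsetsf : ∀ i : Fin N, sets (f i) = s i := by
      intro i
      have h : ∃ i', f i' = f i := ⟨i, rfl⟩
      simp only [hsets, dif_pos h]
      rw [hf h.choose_spec]
    have key := hindep.measure_inter_preimage_eq_mul (Finset.univ.image f)
      (sets := sets) (fun n _ => MeasurableSet.of_discrete)
    have hL : (⋂ n ∈ Finset.univ.image f, X n ⁻¹' sets n)
        = (fun ω i => X (f i) ω) ⁻¹' (Set.pi Set.univ s) := by
      ext ω
      simp only [Set.mem_iInter, Finset.mem_image, Finset.mem_univ, true_and,
        Set.mem_preimage, Set.mem_pi, Set.mem_univ, forall_true_left]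
      constructor
      · intro h i
        have := h (f i) ⟨i, rfl⟩
        rwa [hsetsf] at this
      · rintro h n ⟨i, rfl⟩
        rw [hsetsf]
        exact h i
    have hR : (∏ n ∈ Finset.univ.image f, P (X n ⁻¹' sets n))
        = ∏ i : Fin N, (P.map (X 1)) (s i) := by
      rw [Finset.prod_image (fun i _ j _ h => hf h)]
      refine Finset.prod_congr rfl fun i _ => ?_
      rw [hsetsf, ← hident (f i) 1, Measure.map_apply (hmeas (f i)) MeasurableSet.of_discrete]
    rw [hL, hR] at key
    rw [key]
  have hinjV : Function.Injective (fun i : Fin N => (i : ℕ) + 1) := fun a b h =>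
    Fin.val_injective (Nat.succ_injective h)
  -- rotation invariance
  have hinv : ∀ j : ℕ, ∀ B : Set (Fin N → ℤ),
      P (V ⁻¹' (PCL.R N j ⁻¹' B)) = P (V ⁻¹' B) := by
    intro j B
    have h1 : (fun ω => PCL.R N j (V ω))
        = fun ω (i : Fin N) => X (((i + (j : Fin N)) : Fin N) + 1) ω := rfl
    have hinj1 : Function.Injective (fun i : Fin N => ((i + (j : Fin N)) : Fin N).val + 1) := by
      intro a b h
      have h2 : (a + (j : Fin N)) = (b + (j : Fin N)) :=
        Fin.val_injective (Nat.succ_injective h)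
      exact add_right_cancel h2
    have hm1 : Measurable (fun ω => PCL.R N j (V ω)) :=
      (Measurable.of_discrete (f := PCL.R N j)).comp hVmeas
    have e1 : P.map (fun ω => PCL.R N j (V ω)) = Measure.pi (fun _ => P.map (X 1)) := by
      rw [h1]; exact hpi _ hinj1
    have e2 : P.map V = Measure.pi (fun _ => P.map (X 1)) := hpi _ hinjV
    calc P (V ⁻¹' (PCL.R N j ⁻¹' B)) = P.map (fun ω => PCL.R N j (V ω)) B := by
          rw [Measure.map_apply hm1 MeasurableSet.of_discrete]
          rfl
      _ = P.map V B := by rw [e1, e2]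
      _ = P (V ⁻¹' B) := by rw [Measure.map_apply hVmeas MeasurableSet.of_discrete]
  -- counting
  have hDj : ∀ (t : Set (ℕ → ℤ)) (j : ℕ), 1 ≤ j → j ≤ N →
      P (V ⁻¹' PCL.D N t j) = P (V ⁻¹' PCL.D N t N) := by
    intro t j h1 h2
    rw [← PCL.key_set N t j h1 h2, hinv j]
  have hdisjD : ∀ (t : Set (ℕ → ℤ)) (F : Finset ℕ),
      P (V ⁻¹' (⋃ j ∈ F, PCL.D N t j)) = ∑ j ∈ F, P (V ⁻¹' PCL.D N t j) := by
    intro t F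
    rw [Set.preimage_iUnion₂]
    refine measure_biUnion_finset ?_ fun j _ => hVmeas MeasurableSet.of_discrete
    intro a _ b _ hab
    refine Set.disjoint_left.2 fun ω h1 h2 => hab ?_
    simp only [Set.mem_preimage, PCL.D, Set.mem_setOf_eq] at h1 h2
    rw [← h1.1, ← h2.1]
  have hEt : ∀ t : Set (ℕ → ℤ),
      P (V ⁻¹' {v | PCL.Yv N v ∈ t ∧ PCL.S N v N = -1})
        = N * P (V ⁻¹' PCL.D N t N) := by
    intro t
    rw [PCL.D_union N t, hdisjD t]
    rw [Finset.sum_congr rfl fun j hj =>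
      hDj t j (Finset.mem_Icc.1 hj).1 (Finset.mem_Icc.1 hj).2]
    rw [Finset.sum_const, Nat.card_Icc]
    simp only [Nat.add_sub_cancel, nsmul_eq_mul]
  set C' : Set (Fin N → ℤ) := {v | PCL.S N v N = -1} with hC'
  set d : ℝ≥0∞ := P (V ⁻¹' PCL.D N Set.univ N) with hd
  have hCuniv : {v : Fin N → ℤ | PCL.Yv N v ∈ (Set.univ : Set (ℕ → ℤ)) ∧ PCL.S N v N = -1}
      = C' := by
    ext v; simp [hC']
  have hPC : P (V ⁻¹' C') = N * d := by
    rw [← hCuniv]; exact hEt Set.univ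
  have hPC0 : P (V ⁻¹' C') ≠ 0 := by
    rw [← hCset]; exact hpos.ne'
  have hPCfin : P (V ⁻¹' C') ≠ ⊤ := measure_ne_top _ _
  have hd0 : d ≠ 0 := by
    intro h
    rw [hPC, h, mul_zero] at hPC0
    exact hPC0 rfl
  have hdfin : d ≠ ⊤ := measure_ne_top _ _
  have hN0 : (N : ℝ≥0∞) ≠ 0 := Nat.cast_ne_zero.2 (by omega)
  have hNtop : (N : ℝ≥0∞) ≠ ⊤ := ENNReal.natCast_ne_top N
  have hCmeas : MeasurableSet {ω | ∑ i ∈ Finset.Icc 1 N, X i ω = -1} := by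
    rw [hCset]; exact hVmeas MeasurableSet.of_discrete
  -- intersections with conditioning event
  have hJint : ∀ s : Set ℕ,
      {ω | ∑ i ∈ Finset.Icc 1 N, X i ω = -1} ∩ J ⁻¹' s
        = V ⁻¹' (⋃ j ∈ (Finset.Icc 1 N).filter (· ∈ s), PCL.D N Set.univ j) := by
    intro s
    ext ω
    simp only [hCset, Set.mem_inter_iff, Set.mem_preimage, Set.mem_setOf_eq, hC',
      Set.mem_iUnion, Finset.mem_filter, exists_prop, PCL.D, Set.mem_univ, true_and,
      and_true, hJ ω]
    constructor
    · rintro ⟨h1, h2⟩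
      exact ⟨PCL.Jv N (V ω), ⟨PCL.Jv_mem_Icc N (V ω), h2⟩, rfl, h1⟩
    · rintro ⟨j, ⟨-, hjs⟩, hJj, h1⟩
      exact ⟨h1, hJj ▸ hjs⟩
  have hJYint : ∀ (s : Set ℕ) (t : Set (ℕ → ℤ)),
      {ω | ∑ i ∈ Finset.Icc 1 N, X i ω = -1}
          ∩ (J ⁻¹' s ∩ (fun ω (k : ℕ) => X ((k + J ω - 1) % N + 1) ω) ⁻¹' t)
        = V ⁻¹' (⋃ j ∈ (Finset.Icc 1 N).filter (· ∈ s), PCL.D N t j) := by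
    intro s t
    ext ω
    simp only [hCset, Set.mem_inter_iff, Set.mem_preimage, Set.mem_setOf_eq, hC',
      Set.mem_iUnion, Finset.mem_filter, exists_prop, PCL.D, hJ ω, hY ω]
    constructor
    · rintro ⟨h1, h2, h3⟩
      exact ⟨PCL.Jv N (V ω), ⟨PCL.Jv_mem_Icc N (V ω), h2⟩, rfl, h3, h1⟩
    · rintro ⟨j, ⟨-, hjs⟩, hJj, h3, h1⟩
      refine ⟨h1, hJj ▸ hjs, ?_⟩
      show PCL.W N (PCL.Jv N (V ω)) (V ω) ∈ t
      rw [hJj]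
      exact h3
  have hYint : ∀ t : Set (ℕ → ℤ),
      {ω | ∑ i ∈ Finset.Icc 1 N, X i ω = -1}
          ∩ (fun ω (k : ℕ) => X ((k + J ω - 1) % N + 1) ω) ⁻¹' t
        = V ⁻¹' {v | PCL.Yv N v ∈ t ∧ PCL.S N v N = -1} := by
    intro t
    ext ω
    simp only [hCset, Set.mem_inter_iff, Set.mem_preimage, Set.mem_setOf_eq, hC', hJ ω, hY ω]
    tauto
  -- measure of the pieces
  have hmeasJs : ∀ s : Set ℕ,
      P ({ω | ∑ i ∈ Finset.Icc 1 N, X i ω = -1} ∩ J ⁻¹' s)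
        = ((Finset.Icc 1 N).filter (· ∈ s)).card * d := by
    intro s
    rw [hJint s, hdisjD]
    rw [Finset.sum_congr rfl fun j hj =>
      hDj Set.univ j (Finset.mem_Icc.1 (Finset.mem_filter.1 hj).1).1
        (Finset.mem_Icc.1 (Finset.mem_filter.1 hj).1).2]
    rw [Finset.sum_const, nsmul_eq_mul, ← hd]
  have hmeasJYs : ∀ (s : Set ℕ) (t : Set (ℕ → ℤ)),
      P ({ω | ∑ i ∈ Finset.Icc 1 N, X i ω = -1}
          ∩ (J ⁻¹' s ∩ (fun ω (k : ℕ) => X ((k + J ω - 1) % N + 1) ω) ⁻¹' t))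
        = ((Finset.Icc 1 N).filter (· ∈ s)).card * P (V ⁻¹' PCL.D N t N) := by
    intro s t
    rw [hJYint s t, hdisjD]
    rw [Finset.sum_congr rfl fun j hj =>
      hDj t j (Finset.mem_Icc.1 (Finset.mem_filter.1 hj).1).1
        (Finset.mem_Icc.1 (Finset.mem_filter.1 hj).1).2]
    rw [Finset.sum_const, nsmul_eq_mul]
  have hmeasJj : ∀ j : ℕ, 1 ≤ j → j ≤ N →
      P ({ω | ∑ i ∈ Finset.Icc 1 N, X i ω = -1} ∩ {ω | J ω = j}) = d := by
    intro j hj1 hj2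
    have hset : {ω | ∑ i ∈ Finset.Icc 1 N, X i ω = -1} ∩ {ω | J ω = j}
        = V ⁻¹' PCL.D N Set.univ j := by
      ext ω
      simp only [hCset, Set.mem_inter_iff, Set.mem_preimage, Set.mem_setOf_eq, hC',
        PCL.D, Set.mem_univ, true_and, hJ ω]
      tauto
    rw [hset, hDj Set.univ j hj1 hj2, ← hd]
  constructor
  · -- uniformity
    intro j hj
    obtain ⟨hj1, hj2⟩ := Finset.mem_Icc.1 hj
    rw [cond_apply hCmeas, hmeasJj j hj1 hj2, hCset, hPC]
    rw [ENNReal.mul_inv (Or.inl hN0) (Or.inl hNtop)]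
    rw [mul_assoc, ENNReal.inv_mul_cancel hd0 hdfin, mul_one]
  · -- independence
    rw [indepFun_iff_measure_inter_preimage_eq_mul]
    intro s t _ _
    rw [cond_apply hCmeas, cond_apply hCmeas, cond_apply hCmeas]
    rw [hmeasJYs s t, hmeasJs s, hYint t, hEt t]
    set dt : ℝ≥0∞ := P (V ⁻¹' PCL.D N t N) with hdt
    set c : ℕ := ((Finset.Icc 1 N).filter (· ∈ s)).card with hc
    rw [hCset, hPC]
    have hdd : d⁻¹ * d = 1 := ENNReal.inv_mul_cancel hd0 hdfin
    have hNN : (N : ℝ≥0∞)⁻¹ * (N : ℝ≥0∞) = 1 := ENNReal.inv_mul_cancel hN0 hNtop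
    rw [ENNReal.mul_inv (Or.inl hN0) (Or.inl hNtop)]
    calc (N : ℝ≥0∞)⁻¹ * d⁻¹ * ((c : ℝ≥0∞) * dt)
        = ((N : ℝ≥0∞)⁻¹ * d⁻¹ * ((c : ℝ≥0∞) * dt)) * ((d⁻¹ * d) * ((N : ℝ≥0∞)⁻¹ * N)) := by
          rw [hdd, hNN, one_mul, mul_one]
      _ = ((N : ℝ≥0∞)⁻¹ * d⁻¹ * ((c : ℝ≥0∞) * d)) * ((N : ℝ≥0∞)⁻¹ * d⁻¹ * ((N : ℝ≥0∞) * dt)) := by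
          ring
end

section
/- Let T be a plane tree with n ≥ 1 edges (hence n+1 vertices), let C : [0, 2n] → ℝ be its contour process extended by linear interpolation between integer times, and let Λ(T) = Σ_{u∈T} |u| be its total path length. Then Λ(T) = n/2 + (1/2) ∫_0^{2n} C(t) dt. -/
open MeasureTheory ProbabilityTheory Filter Set
open scoped ENNReal NNReal Topology BigOperators

attribute [local instance 10] Classical.propDecidable

noncomputable section

open PlaneTree

/-! ### Auxiliary lemmas for the proof -/

lemma g_cont' (k : ℕ) : Continuous (fun t : ℝ => min (max (t - (k:ℝ)) 0) 1) :=
  ((continuous_id.sub continuous_const).max continuous_const).min continuous_const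

lemma g_integral' (M k : ℕ) (hk : k < M) :
    ∫ t in (0:ℝ)..(M:ℝ), min (max (t - (k:ℝ)) 0) 1 = (M:ℝ) - k - 1/2 := by
  have hint : ∀ a b : ℝ, IntervalIntegrable (fun t : ℝ => min (max (t - (k:ℝ)) 0) 1)
      MeasureTheory.volume a b := fun a b => (g_cont' k).intervalIntegrable a b
  have hkM : (k:ℝ) + 1 ≤ (M:ℝ) := by exact_mod_cast Nat.succ_le_of_lt hk
  have h1 : ∫ t in (0:ℝ)..(k:ℝ), min (max (t - (k:ℝ)) 0) 1 = 0 := by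
    rw [intervalIntegral.integral_congr (g := fun _ => (0:ℝ)) ?_, intervalIntegral.integral_zero]
    intro t ht
    rw [Set.uIcc_of_le (by positivity)] at ht
    have : t ≤ (k:ℝ) := ht.2
    simp only []
    rw [max_eq_right (by linarith), min_eq_left (by norm_num)]
  have h2 : ∫ t in (k:ℝ)..((k:ℝ)+1), min (max (t - (k:ℝ)) 0) 1 = 1/2 := by
    rw [intervalIntegral.integral_congr (g := fun t => t - (k:ℝ)) ?_]
    · rw [show (∫ x in (k:ℝ)..((k:ℝ)+1), (x - (k:ℝ)))
          = (∫ x in (k:ℝ)..((k:ℝ)+1), x) - ∫ _x in (k:ℝ)..((k:ℝ)+1), (k:ℝ) from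
          intervalIntegral.integral_sub (continuous_id.intervalIntegrable _ _)
            intervalIntegrable_const,
        integral_id, intervalIntegral.integral_const]
      simp [smul_eq_mul]; ring
    · intro t ht
      rw [Set.uIcc_of_le (by linarith)] at ht
      have h1 : (k:ℝ) ≤ t := ht.1
      have h2 : t ≤ (k:ℝ)+1 := ht.2
      simp only []
      rw [max_eq_left (by linarith), min_eq_left (by linarith)]
  have h3 : ∫ t in ((k:ℝ)+1)..(M:ℝ), min (max (t - (k:ℝ)) 0) 1 = (M:ℝ) - ((k:ℝ)+1) := by
    rw [intervalIntegral.integral_congr (g := fun _ => (1:ℝ)) ?_]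
    · rw [intervalIntegral.integral_const]; simp
    · intro t ht
      rw [Set.uIcc_of_le (by linarith)] at ht
      have h1 : (k:ℝ)+1 ≤ t := ht.1
      simp only []
      rw [max_eq_left (by linarith), min_eq_right (by linarith)]
  have e1 := intervalIntegral.integral_add_adjacent_intervals
    (hint (k:ℝ) ((k:ℝ)+1)) (hint ((k:ℝ)+1) (M:ℝ))
  have e2 := intervalIntegral.integral_add_adjacent_intervals (hint 0 (k:ℝ)) (hint (k:ℝ) (M:ℝ))
  rw [← e2, h1, ← e1, h2, h3]; ring

lemma sum_trapezoid' (f : ℕ → ℝ) (M : ℕ) :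
    (M:ℝ) * f 0 + ∑ k ∈ Finset.range M, (f (k+1) - f k) * ((M:ℝ) - k - 1/2)
      = ∑ k ∈ Finset.range M, (f k + f (k+1)) / 2 := by
  induction M with
  | zero => simp
  | succ M ih =>
    have htel : ∑ k ∈ Finset.range M, (f (k+1) - f k) = f M - f 0 :=
      Finset.sum_range_sub f M
    rw [Finset.sum_range_succ (f := fun k => (f k + f (k+1)) / 2)]
    rw [Finset.sum_range_succ]
    have h2 : ∑ k ∈ Finset.range M, (f (k+1) - f k) * (((M+1:ℕ):ℝ) - k - 1/2)
        = ∑ k ∈ Finset.range M, ((f (k+1) - f k) * ((M:ℝ) - k - 1/2) + (f (k+1) - f k)) := by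
      apply Finset.sum_congr rfl; intro k _; push_cast; ring
    rw [h2, Finset.sum_add_distrib, htel]
    push_cast
    linarith [ih]

lemma integral_interp' (M : ℕ) (f : ℕ → ℝ) :
    ∫ t in (0:ℝ)..(M:ℝ), interp M f t = ∑ k ∈ Finset.range M, (f k + f (k+1)) / 2 := by
  have hint : ∀ k : ℕ,
      IntervalIntegrable (fun t : ℝ => (f (k+1) - f k) * min (max (t - (k:ℝ)) 0) 1)
      MeasureTheory.volume 0 (M:ℝ) :=
    fun k => (continuous_const.mul (g_cont' k)).intervalIntegrable 0 (M:ℝ)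
  have hadd : ∫ t in (0:ℝ)..(M:ℝ),
        (f 0 + ∑ k ∈ Finset.range M, (f (k+1) - f k) * min (max (t - (k:ℝ)) 0) 1)
      = (∫ _t in (0:ℝ)..(M:ℝ), f 0)
        + ∫ t in (0:ℝ)..(M:ℝ),
            ∑ k ∈ Finset.range M, (f (k+1) - f k) * min (max (t - (k:ℝ)) 0) 1 :=
    intervalIntegral.integral_add intervalIntegrable_const
      ((continuous_finset_sum _
        (fun k _ => continuous_const.mul (g_cont' k))).intervalIntegrable 0 (M:ℝ))
  have hsum : ∫ t in (0:ℝ)..(M:ℝ),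
        ∑ k ∈ Finset.range M, (f (k+1) - f k) * min (max (t - (k:ℝ)) 0) 1
      = ∑ k ∈ Finset.range M,
          ∫ t in (0:ℝ)..(M:ℝ), (f (k+1) - f k) * min (max (t - (k:ℝ)) 0) 1 :=
    intervalIntegral.integral_finset_sum (fun k _ => hint k)
  have hterm : ∀ k ∈ Finset.range M,
      (∫ t in (0:ℝ)..(M:ℝ), (f (k+1) - f k) * min (max (t - (k:ℝ)) 0) 1)
        = (f (k+1) - f k) * ((M:ℝ) - k - 1/2) := by
    intro k hk
    rw [intervalIntegral.integral_const_mul, g_integral' M k (Finset.mem_range.mp hk)]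
  simp only [interp]
  rw [hadd, hsum, Finset.sum_congr rfl hterm, intervalIntegral.integral_const,
    ← sum_trapezoid' f M]
  simp [smul_eq_mul]

lemma contour_sum' (T : PlaneTree) (n : ℕ) (hn : T.verts.card = n + 1)
    (c : ℕ → List ℕ)
    (hc0 : c 0 = ([] : List ℕ))
    (hstep : ∀ i < 2 * n,
      (∃ m : ℕ, c (i + 1) = c i ++ [m] ∧ c (i + 1) ∈ T.verts ∧
          (∀ j ≤ i, c j ≠ c (i + 1)) ∧
          ∀ m' : ℕ, m' < m → c i ++ [m'] ∈ T.verts → ∃ j ≤ i, c j = c i ++ [m']) ∨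
        ((∀ m : ℕ, c i ++ [m] ∈ T.verts → ∃ j ≤ i, c j = c i ++ [m]) ∧
          ∃ m : ℕ, c i = c (i + 1) ++ [m])) :
    (∑ k ∈ Finset.range (2*n), ((c k).length + (c (k+1)).length)) + 2*n
      = 4 * T.pathLength := by
  classical
  set N := 2*n with hN
  -- basic dichotomy facts
  have hnotboth : ∀ i : ℕ, (∃ m, c (i+1) = c i ++ [m]) → (∃ m, c i = c (i+1) ++ [m]) → False := by
    rintro i ⟨m1, h1⟩ ⟨m2, h2⟩
    have l1 := congrArg List.length h1
    have l2 := congrArg List.length h2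
    simp only [List.length_append, List.length_singleton] at l1 l2
    omega
  have hlenup : ∀ i : ℕ, (∃ m, c (i+1) = c i ++ [m]) → (c (i+1)).length = (c i).length + 1 := by
    rintro i ⟨m, h⟩
    have := congrArg List.length h
    simpa using this
  have hlendown : ∀ i : ℕ, (∃ m, c i = c (i+1) ++ [m]) → (c i).length = (c (i+1)).length + 1 := by
    rintro i ⟨m, h⟩
    have := congrArg List.length h
    simpa using this
  have hdownall : ∀ i, i < N → ¬(∃ m, c (i+1) = c i ++ [m]) →
      ((∀ m : ℕ, c i ++ [m] ∈ T.verts → ∃ j ≤ i, c j = c i ++ [m]) ∧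
        ∃ m, c i = c (i+1) ++ [m]) := by
    intro i hi hnup
    rcases hstep i hi with ⟨m, h1, _⟩ | h
    · exact absurd ⟨m, h1⟩ hnup
    · exact h
  have hdic : ∀ i, i < N → (∃ m, c (i+1) = c i ++ [m]) ∨ (∃ m, c i = c (i+1) ++ [m]) := by
    intro i hi
    by_cases h : ∃ m, c (i+1) = c i ++ [m]
    · exact Or.inl h
    · exact Or.inr (hdownall i hi h).2
  have hfresh : ∀ i, i < N → (∃ m, c (i+1) = c i ++ [m]) → ∀ j ≤ i, c j ≠ c (i+1) := by
    intro i hi hup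
    rcases hstep i hi with ⟨m, _, _, h3, _⟩ | ⟨_, h2⟩
    · exact h3
    · exact absurd h2 (fun h => hnotboth i hup h)
  have hmem : ∀ i, i ≤ N → c i ∈ T.verts := by
    intro i
    induction i with
    | zero => intro _; rw [hc0]; exact T.root_mem
    | succ i ih =>
      intro hi
      have hi' : i < N := by omega
      have hci := ih (by omega)
      rcases hstep i hi' with ⟨m, _, h2, _⟩ | ⟨_, m, h2⟩
      · exact h2
      · exact T.prefix_closed (c i) hci (c (i+1)) ⟨[m], h2.symm⟩
  -- up and down step index sets
  set U := (Finset.range N).filter (fun i => ∃ m, c (i+1) = c i ++ [m]) with hU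
  set D := (Finset.range N).filter (fun i => ¬ ∃ m, c (i+1) = c i ++ [m]) with hD
  have hUD : U.card + D.card = N := by
    rw [hU, hD, Finset.card_filter_add_card_filter_not, Finset.card_range]
  -- telescoping
  have htel : ((c N).length : ℤ) = (U.card : ℤ) - D.card := by
    have h1 : ∑ i ∈ Finset.range N, (((c (i+1)).length : ℤ) - ((c i).length : ℤ))
        = ((c N).length : ℤ) - ((c 0).length : ℤ) :=
      Finset.sum_range_sub (fun i => ((c i).length : ℤ)) N
    have h2 : ∀ i ∈ Finset.range N, (((c (i+1)).length : ℤ) - ((c i).length : ℤ))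
        = if (∃ m, c (i+1) = c i ++ [m]) then 1 else -1 := by
      intro i hi
      by_cases h : ∃ m, c (i+1) = c i ++ [m]
      · rw [if_pos h, hlenup i h]; push_cast; ring
      · rw [if_neg h, hlendown i (hdownall i (Finset.mem_range.mp hi) h).2]; push_cast; ring
    rw [Finset.sum_congr rfl h2, Finset.sum_ite, Finset.sum_const, Finset.sum_const] at h1
    rw [hc0] at h1
    simp only [List.length_nil, Nat.cast_zero, sub_zero, smul_eq_mul, mul_one, mul_neg_one] at h1
    rw [← h1, hU, hD]
    push_cast
    ring
  -- up-steps are injective into non-root vertices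
  have hUinj : Set.InjOn (fun i => c (i+1)) ↑U := by
    intro i hi j hj hij
    have hi' := Finset.mem_filter.mp (Finset.mem_coe.mp hi)
    have hj' := Finset.mem_filter.mp (Finset.mem_coe.mp hj)
    by_contra hne
    rcases Nat.lt_or_ge i j with hlt | hge
    · exact hfresh j (Finset.mem_range.mp hj'.1) hj'.2 (i+1) (by omega) hij
    · have hlt : j < i := by omega
      exact hfresh i (Finset.mem_range.mp hi'.1) hi'.2 (j+1) (by omega) hij.symm
  have hUmaps : ∀ i ∈ U, c (i+1) ∈ T.verts.erase [] := by
    intro i hiU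
    obtain ⟨hir, m, hm⟩ := Finset.mem_filter.mp hiU
    have hiN : i < N := Finset.mem_range.mp hir
    refine Finset.mem_erase.mpr ⟨?_, hmem _ (by omega)⟩
    rw [hm]; simp
  have hecard : (T.verts.erase []).card = n := by
    rw [Finset.card_erase_of_mem T.root_mem, hn]
    omega
  have hUcard_le : U.card ≤ n := by
    rw [← hecard]
    exact Finset.card_le_card_of_injOn _ hUmaps hUinj
  have hlenN : (c N).length = 0 ∧ U.card = n ∧ D.card = n := by omega
  have hcN : c N = [] := List.length_eq_zero_iff.mp hlenN.1
  have hUn : U.card = n := hlenN.2.1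
  have hDn : D.card = n := hlenN.2.2
  -- up-step targets are exactly the non-root vertices
  have hUimage : U.image (fun i => c (i+1)) = T.verts.erase [] := by
    apply Finset.eq_of_subset_of_card_le
    · intro v hv
      rcases Finset.mem_image.mp hv with ⟨i, hi, rfl⟩
      exact hUmaps i hi
    · rw [Finset.card_image_of_injOn hUinj, hUn, hecard]
  have hsumU : ∑ i ∈ U, (c (i+1)).length = ∑ v ∈ T.verts.erase [], v.length := by
    rw [← hUimage, Finset.sum_image (fun x hx y hy h => hUinj hx hy h)]
  -- the contour comes back after every up step
  have hcomeback : ∀ t, t < N → (∃ m, c (t+1) = c t ++ [m]) →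
      ∃ r, t < r ∧ r ≤ N ∧ c r = c t := by
    intro t ht hup
    set S := (Finset.Icc (t+1) N).filter (fun i => (c i).length ≤ (c t).length) with hS
    have hSne : S.Nonempty :=
      ⟨N, Finset.mem_filter.mpr ⟨Finset.mem_Icc.mpr ⟨by omega, le_refl N⟩, by rw [hcN]; simp⟩⟩
    set r := S.min' hSne with hr
    have hrS : r ∈ S := S.min'_mem hSne
    obtain ⟨hrI, hrlen⟩ := Finset.mem_filter.mp hrS
    obtain ⟨hrt, hrN⟩ := Finset.mem_Icc.mp hrI
    have hmin : ∀ i ∈ S, r ≤ i := fun i hi => S.min'_le i hi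
    have hclaim : ∀ i, t < i → i < r → (c t <+: c i ∧ (c t).length < (c i).length) := by
      intro i
      induction i with
      | zero => omega
      | succ i ih =>
        intro hti hir
        rcases Nat.lt_or_ge t i with hti' | hti'
        · have hi_lt_r : i < r := by omega
          obtain ⟨hpre, hlen⟩ := ih hti' hi_lt_r
          have hiN : i < N := by omega
          rcases hdic i hiN with hupl | hdnl
          · obtain ⟨m, hm⟩ := hupl
            constructor
            · exact hpre.trans ⟨[m], hm.symm⟩
            · rw [hlenup i ⟨m, hm⟩]; omega
          · obtain ⟨m, hm⟩ := hdnl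
            have hnotS : (i+1) ∉ S := by
              intro hmem'
              have := hmin (i+1) hmem'
              omega
            have hlen1 : (c t).length < (c (i+1)).length := by
              by_contra h
              exact hnotS (Finset.mem_filter.mpr
                ⟨Finset.mem_Icc.mpr ⟨by omega, by omega⟩, by omega⟩)
            have hpre1 : c (i+1) <+: c i := ⟨[m], hm.symm⟩
            exact ⟨List.prefix_of_prefix_length_le hpre hpre1 (by omega), hlen1⟩
        · have hit : i = t := by omega
          subst hit
          obtain ⟨m, hm⟩ := hup
          refine ⟨⟨[m], hm.symm⟩, ?_⟩
          rw [hlenup i ⟨m, hm⟩]; omega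
    have hr2 : t + 1 < r := by
      rcases Nat.lt_or_ge (t+1) r with h | h
      · exact h
      · exfalso
        have hreq : r = t + 1 := by omega
        rw [hreq] at hrlen
        rw [hlenup t hup] at hrlen
        omega
    obtain ⟨hpre, hlen⟩ := hclaim (r-1) (by omega) (by omega)
    have hr1N : r - 1 < N := by omega
    have hr1 : r - 1 + 1 = r := by omega
    rcases hdic (r-1) hr1N with hupl | hdnl
    · exfalso
      have := hlenup (r-1) hupl
      rw [hr1] at this
      omega
    · obtain ⟨m, hm⟩ := hdnl
      rw [hr1] at hm
      refine ⟨r, by omega, hrN, ?_⟩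
      have hlend := hlendown (r-1) ⟨m, by rw [hr1]; exact hm⟩
      rw [hr1] at hlend
      have hlen2 : (c r).length = (c t).length := by omega
      have hpre2 : c r <+: c (r-1) := ⟨[m], hm.symm⟩
      have hfin : c t <+: c r := List.prefix_of_prefix_length_le hpre hpre2 (by omega)
      exact (List.IsPrefix.eq_of_length hfin hlen2.symm).symm
  -- every non-root vertex is the source of a down step
  have hDsurj : ∀ v ∈ T.verts.erase [], ∃ i ∈ D, c i = v := by
    intro v hv
    have hvne : v ≠ [] := (Finset.mem_erase.mp hv).1
    have hvis : ∃ j, j ≤ N ∧ c j = v := by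
      rw [← hUimage] at hv
      rcases Finset.mem_image.mp hv with ⟨i, hiU, hiv⟩
      have hiN : i < N := Finset.mem_range.mp (Finset.mem_filter.mp hiU).1
      exact ⟨i+1, by omega, hiv⟩
    obtain ⟨j, hjN, hjv⟩ := hvis
    set V := (Finset.range (N+1)).filter (fun i => c i = v) with hV
    have hVne : V.Nonempty := ⟨j, Finset.mem_filter.mpr ⟨Finset.mem_range.mpr (by omega), hjv⟩⟩
    set t := V.max' hVne with htdef
    have htV := V.max'_mem hVne
    obtain ⟨htr, htv⟩ := Finset.mem_filter.mp htV
    have htN : t ≤ N := by have := Finset.mem_range.mp htr; omega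
    have htltN : t < N := by
      rcases eq_or_lt_of_le htN with h | h
      · exfalso; apply hvne
        rw [← htv, show (V.max' hVne) = N from h, hcN]
      · exact h
    by_cases hup : ∃ m, c (t+1) = c t ++ [m]
    · exfalso
      obtain ⟨r, hr1, hr2, hr3⟩ := hcomeback t htltN hup
      have hrV : r ∈ V := Finset.mem_filter.mpr
        ⟨Finset.mem_range.mpr (by omega), by rw [hr3, htv]⟩
      have := V.le_max' r hrV
      omega
    · exact ⟨t, Finset.mem_filter.mpr ⟨Finset.mem_range.mpr htltN, hup⟩, htv⟩
  -- down-step sources are exactly the non-root vertices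
  have hDmaps : ∀ i ∈ D, c i ∈ T.verts.erase [] := by
    intro i hiD
    obtain ⟨hir, hnup⟩ := Finset.mem_filter.mp hiD
    have hiN := Finset.mem_range.mp hir
    obtain ⟨_, m, hm⟩ := hdownall i hiN hnup
    refine Finset.mem_erase.mpr ⟨?_, hmem i (by omega)⟩
    rw [hm]; simp
  have hDimage : D.image (fun i => c i) = T.verts.erase [] := by
    apply Finset.Subset.antisymm
    · intro v hv
      rcases Finset.mem_image.mp hv with ⟨i, hi, rfl⟩
      exact hDmaps i hi
    · intro v hv
      rcases hDsurj v hv with ⟨i, hiD, hiv⟩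
      exact Finset.mem_image.mpr ⟨i, hiD, hiv⟩
  have hDinj : Set.InjOn (fun i => c i) ↑D := by
    apply Finset.injOn_of_card_image_eq
    rw [hDimage, hecard, hDn]
  have hsumD : ∑ i ∈ D, (c i).length = ∑ v ∈ T.verts.erase [], v.length := by
    rw [← hDimage, Finset.sum_image (fun x hx y hy h => hDinj hx hy h)]
  -- path length over non-root vertices
  have hsumerase : ∑ v ∈ T.verts.erase [], v.length = T.pathLength := by
    rw [PlaneTree.pathLength]
    exact Finset.sum_erase _ (by simp)
  -- final accounting
  have hsplit : ∑ k ∈ Finset.range N, ((c k).length + (c (k+1)).length + 1)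
      = (∑ i ∈ U, ((c i).length + (c (i+1)).length + 1))
        + ∑ i ∈ D, ((c i).length + (c (i+1)).length + 1) :=
    (Finset.sum_filter_add_sum_filter_not _ _ _).symm
  have hUterm : ∑ i ∈ U, ((c i).length + (c (i+1)).length + 1)
      = ∑ i ∈ U, 2 * (c (i+1)).length := by
    apply Finset.sum_congr rfl
    intro i hi
    have := hlenup i (Finset.mem_filter.mp hi).2
    omega
  have hDterm : ∑ i ∈ D, ((c i).length + (c (i+1)).length + 1)
      = ∑ i ∈ D, 2 * (c i).length := by
    apply Finset.sum_congr rfl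
    intro i hi
    obtain ⟨hir, hnup⟩ := Finset.mem_filter.mp hi
    have := hlendown i (hdownall i (Finset.mem_range.mp hir) hnup).2
    omega
  have hLHS : ∑ k ∈ Finset.range N, ((c k).length + (c (k+1)).length + 1)
      = (∑ k ∈ Finset.range N, ((c k).length + (c (k+1)).length)) + N := by
    rw [Finset.sum_add_distrib, Finset.sum_const, Finset.card_range, smul_eq_mul, mul_one]
  rw [← hLHS, hsplit, hUterm, hDterm, ← Finset.mul_sum, ← Finset.mul_sum, hsumU, hsumD,
    hsumerase]
  ring

/-- **Total path length as the integral of the contour process.** Let `T` be a plane tree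
with `n ≥ 1` edges, let `(c_0, …, c_{2n})` be its contour sequence (each `c_{i+1}` is the
first child of `c_i` not yet visited, or the parent of `c_i` if all its children have been
visited) and let `C` be the contour process `C(j) = |c_j|` extended by linear interpolation.
Then `Λ(T) = n/2 + (1/2) ∫_0^{2n} C(t) dt`. -/
theorem path_length_eq_integral_contour
    (T : PlaneTree) (n : ℕ) (hn : T.verts.card = n + 1) (hn1 : 1 ≤ n)
    (c : ℕ → List ℕ)
    (hc0 : c 0 = ([] : List ℕ))
    (hstep : ∀ i < 2 * n,
      (∃ m : ℕ, c (i + 1) = c i ++ [m] ∧ c (i + 1) ∈ T.verts ∧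
          (∀ j ≤ i, c j ≠ c (i + 1)) ∧
          ∀ m' : ℕ, m' < m → c i ++ [m'] ∈ T.verts → ∃ j ≤ i, c j = c i ++ [m']) ∨
        ((∀ m : ℕ, c i ++ [m] ∈ T.verts → ∃ j ≤ i, c j = c i ++ [m]) ∧
          ∃ m : ℕ, c i = c (i + 1) ++ [m])) :
    (T.pathLength : ℝ) =
      n / 2 + (1 / 2) * ∫ t in (0 : ℝ)..(2 * n),
        interp (2 * n) (fun j => ((c j).length : ℝ)) t := by
  have hC := contour_sum' T n hn c hc0 hstep
  have hI := integral_interp' (2*n) (fun j => ((c j).length : ℝ))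
  have hcast : ((2*n : ℕ) : ℝ) = 2 * (n : ℝ) := by push_cast; ring
  rw [hcast] at hI
  rw [hI]
  have hs : ∑ k ∈ Finset.range (2*n), (((c k).length : ℝ) + ((c (k+1)).length : ℝ)) / 2
      = ((∑ k ∈ Finset.range (2*n), ((c k).length + (c (k+1)).length) : ℕ) : ℝ) / 2 := by
    push_cast
    rw [Finset.sum_div]
  rw [hs]
  have hfin : ((∑ k ∈ Finset.range (2*n), ((c k).length + (c (k+1)).length) : ℕ) : ℝ)
      = 4 * (T.pathLength : ℝ) - 2 * n := by
    have h := congrArg (fun x : ℕ => (x:ℝ)) hC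
    push_cast at h ⊢
    linarith
  rw [hfin]
  ring

end
end

section
/- Suppose that limsup_{n→∞} n · P( |Y| ≥ n/B_n ) > 0 (i.e., the condition P(|Y| ≥ n/B_n) = o(n^{−1}) fails). Then the sequence of laws of the continuous processes ( (B_n/n) · H^{sp}_n(nt) )_{t ∈ [0,1]}, viewed as probability measures on the space C([0,1], ℝ) of continuous functions with the uniform topology, is not tight. -/
open MeasureTheory ProbabilityTheory Filter Set
open scoped ENNReal NNReal Topology BigOperators

attribute [local instance 10] Classical.propDecidable

noncomputable section

open PlaneTree

namespace PlaneTree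

/-- The spatial position `S_{u_j}` of the `j`-th vertex, when the displacement along the edge
from `pr(u_k)` to `u_k` is `Y k`: it is the sum of the displacements over the non-root
ancestors of `u_j` (including `u_j` itself). -/
def spatialHeight (T : PlaneTree) (Y : ℕ → ℝ) (j : ℕ) : ℝ :=
  ∑ k ∈ Finset.range T.verts.card,
    if T.vertex k ≠ ([] : List ℕ) ∧ T.vertex k <+: T.vertex j then Y k else 0

end PlaneTree

lemma interp_continuous (M : ℕ) (f : ℕ → ℝ) : Continuous (interp M f) := by
  unfold interp
  refine continuous_const.add (continuous_finsetSum _ fun k _ => ?_)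
  exact continuous_const.mul
    (((continuous_id.sub continuous_const).max continuous_const).min continuous_const)

/-- The path `t ∈ [0,1] ↦ c · interp M f (scale · t)`, as a continuous map on `[0,1]`. -/
def rescaledPath (c scale : ℝ) (M : ℕ) (f : ℕ → ℝ) : C(Icc (0 : ℝ) 1, ℝ) :=
  ⟨fun t => c * interp M f (scale * (t : ℝ)),
    continuous_const.mul
      ((interp_continuous M f).comp (continuous_const.mul continuous_subtype_val))⟩

lemma interp_nat (M : ℕ) (f : ℕ → ℝ) {j : ℕ} (hj : j ≤ M) : interp M f (j : ℝ) = f j := by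
  unfold interp
  have h1 : ∀ k ∈ Finset.range M,
      (f (k + 1) - f k) * min (max ((j : ℝ) - (k : ℝ)) 0) 1
        = if k ∈ Finset.range j then f (k + 1) - f k else 0 := by
    intro k _
    by_cases hk : k < j
    · have : (1 : ℝ) ≤ (j : ℝ) - (k : ℝ) := by
        have : (k : ℝ) + 1 ≤ (j : ℝ) := by exact_mod_cast hk
        linarith
      simp only [Finset.mem_range, hk, if_true]
      rw [max_eq_left (by linarith), min_eq_right this, mul_one]
    · have : (j : ℝ) - (k : ℝ) ≤ 0 := by
        have : (j : ℝ) ≤ (k : ℝ) := by exact_mod_cast Nat.le_of_not_lt hk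
        linarith
      simp only [Finset.mem_range, hk, if_false]
      rw [max_eq_right this, min_eq_left (by norm_num), mul_zero]
  rw [Finset.sum_congr rfl h1, Finset.sum_ite_mem, Finset.inter_eq_right.mpr
      (Finset.range_subset_range.mpr hj), Finset.sum_range_sub]
  ring
lemma list_not_lex_of_prefix : ∀ (u v : List ℕ), u <+: v → ¬ List.Lex (· < ·) v u := by
  intro u
  induction u with
  | nil => intro v _ h; cases h
  | cons a u ih =>
    intro v hp h
    obtain ⟨w, rfl⟩ := hp
    cases h with
    | cons h => exact ih _ ⟨w, rfl⟩ h
    | rel h => exact lt_irrefl _ h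

lemma list_le_of_prefix {u v : List ℕ} (h : u <+: v) : u ≤ v :=
  le_of_not_gt (list_not_lex_of_prefix u v h)

namespace PlaneTree

variable (T : PlaneTree)

lemma length_vertexList : T.vertexList.length = T.verts.card :=
  Finset.length_sort _

lemma sorted_vertexList : T.vertexList.Pairwise (· ≤ ·) :=
  Finset.pairwise_sort _ _

lemma nodup_vertexList : T.vertexList.Nodup :=
  Finset.sort_nodup _ _

lemma vertex_eq_get {j : ℕ} (hj : j < T.verts.card) :
    T.vertex j = T.vertexList.get ⟨j, by rw [length_vertexList]; exact hj⟩ := by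
  rw [vertex, List.getD_eq_getElem?_getD, List.getElem?_eq_getElem (by rw [length_vertexList]; exact hj)]; rfl

lemma vertex_le_vertex {k j : ℕ} (hkj : k < j) (hj : j < T.verts.card) :
    T.vertex k ≤ T.vertex j := by
  rw [vertex_eq_get T (lt_trans hkj hj), vertex_eq_get T hj]
  exact (List.pairwise_iff_get.mp (T.sorted_vertexList)) _ _ hkj

lemma vertex_ne_vertex {k j : ℕ} (hkj : k ≠ j) (hk : k < T.verts.card)
    (hj : j < T.verts.card) : T.vertex k ≠ T.vertex j := by
  rw [vertex_eq_get T hk, vertex_eq_get T hj]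
  intro h
  have := List.Nodup.get_inj_iff (T.nodup_vertexList) |>.mp h
  exact hkj (Fin.mk.injEq _ _ _ _ ▸ this)

lemma not_prefix_of_lt {k j : ℕ} (hjk : j < k) (hk : k < T.verts.card) :
    ¬ (T.vertex k <+: T.vertex j) := by
  intro h
  have h1 : T.vertex k ≤ T.vertex j := list_le_of_prefix h
  have h2 : T.vertex j ≤ T.vertex k := T.vertex_le_vertex hjk hk
  exact T.vertex_ne_vertex (Nat.ne_of_gt hjk) hk (lt_trans hjk hk) (le_antisymm h1 h2)

lemma card_pos : 0 < T.verts.card := Finset.card_pos.mpr ⟨[], T.root_mem⟩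

lemma vertex_zero : T.vertex 0 = [] := by
  have hmem : ([] : List ℕ) ∈ T.vertexList := (Finset.mem_sort _).mpr T.root_mem
  obtain ⟨m, hm⟩ := List.get_of_mem hmem
  rcases Nat.eq_zero_or_pos m.1 with h0 | h0
  · rw [vertex_eq_get T T.card_pos, ← hm]
    congr 1
    exact Fin.ext (by simp [h0])
  · have h1 : T.vertex 0 ≤ T.vertex m.1 := by
      refine T.vertex_le_vertex h0 ?_
      rw [← length_vertexList]; exact m.2
    have h2 : T.vertex m.1 = [] := by
      rw [vertex_eq_get T (by rw [← length_vertexList]; exact m.2), ← hm]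
    rw [h2] at h1
    exact le_antisymm h1 ((fun l : List ℕ => (not_lt.mp (fun h => by cases h) : ([] : List ℕ) ≤ l)) _)

lemma vertex_ne_nil {j : ℕ} (h0 : 0 < j) (hj : j < T.verts.card) : T.vertex j ≠ [] := by
  rw [← T.vertex_zero]
  exact T.vertex_ne_vertex (Nat.pos_iff_ne_zero.mp h0) hj T.card_pos

/-- The spatial height at index `j` only depends on `Y 0, …, Y j`. -/
lemma spatialHeight_eq_sum {Y : ℕ → ℝ} {j : ℕ} (hj : j < T.verts.card) :
    T.spatialHeight Y j = ∑ k ∈ Finset.range (j + 1),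
      if T.vertex k ≠ ([] : List ℕ) ∧ T.vertex k <+: T.vertex j then Y k else 0 := by
  rw [spatialHeight]
  refine (Finset.sum_subset (Finset.range_subset_range.mpr hj) ?_).symm
  intro k hk hk'
  simp only [Finset.mem_range] at hk hk'
  have hjk : j < k := Nat.lt_of_succ_le (Nat.le_of_not_lt hk')
  rw [if_neg]
  rintro ⟨-, hpre⟩
  exact T.not_prefix_of_lt hjk hk hpre

/-- Fresh-coordinate decomposition: `S_{j+1} = Y_{j+1} + (function of `Y 0, …, Y j`)`. -/
lemma spatialHeight_succ_eq {Y : ℕ → ℝ} {j : ℕ} (hj : j + 1 < T.verts.card) :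
    T.spatialHeight Y (j + 1) = Y (j + 1) + ∑ k ∈ Finset.range (j + 1),
      if T.vertex k ≠ ([] : List ℕ) ∧ T.vertex k <+: T.vertex (j + 1) then Y k else 0 := by
  rw [T.spatialHeight_eq_sum hj, Finset.sum_range_succ, if_pos, add_comm]
  exact ⟨T.vertex_ne_nil (Nat.succ_pos j) hj, List.prefix_refl _⟩

end PlaneTree
/-- The linear function of the first `j+1` displacements appearing in the increment
`S_{j+1} - S_j` of the spatial height process of a fixed tree `T`. -/
def treeCoef (T : PlaneTree) (j : ℕ) (v : ℕ → ℝ) : ℝ :=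
  (∑ k ∈ Finset.range (j + 1),
    if T.vertex k ≠ ([] : List ℕ) ∧ T.vertex k <+: T.vertex (j + 1) then v k else 0) -
  (∑ k ∈ Finset.range (j + 1),
    if T.vertex k ≠ ([] : List ℕ) ∧ T.vertex k <+: T.vertex j then v k else 0)

set_option maxHeartbeats 1000000 in
lemma treeCoef_measurable (T : PlaneTree) (j : ℕ) : Measurable (treeCoef T j) := by
  unfold treeCoef
  have key : ∀ (c : ℕ → Prop) (inst : DecidablePred c), Measurable fun v : ℕ → ℝ =>
      ∑ k ∈ Finset.range (j + 1), @ite _ (c k) (inst k) (v k) 0 := by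
    intro c inst
    refine Finset.measurable_sum _ fun k _ => ?_
    rcases Classical.em (c k) with h | h
    · have heq : (fun v : ℕ → ℝ => @ite _ (c k) (inst k) (v k) 0) = fun v => v k :=
        funext fun v => if_pos h
      rw [heq]; exact measurable_pi_apply k
    · have heq : (fun v : ℕ → ℝ => @ite _ (c k) (inst k) (v k) 0) = fun _ => 0 :=
        funext fun v => if_neg h
      rw [heq]; exact measurable_const
  exact (key _ _).sub (key _ _)

lemma treeCoef_decomp (T : PlaneTree) {n : ℕ} (hcT : T.verts.card = n + 1)
    (v : ℕ → ℝ) {j : ℕ} (hj : j < n) :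
    T.spatialHeight v (j + 1) - T.spatialHeight v j
      = v (j + 1) + treeCoef T j (fun k => if k ≤ j then v k else 0) := by
  have hj1 : j + 1 < T.verts.card := by omega
  have hj0 : j < T.verts.card := by omega
  rw [T.spatialHeight_succ_eq hj1, T.spatialHeight_eq_sum hj0]
  unfold treeCoef
  have hc1 : ∀ k ∈ Finset.range (j + 1),
      (if T.vertex k ≠ ([] : List ℕ) ∧ T.vertex k <+: T.vertex (j + 1)
        then (if k ≤ j then v k else 0) else 0)
      = (if T.vertex k ≠ ([] : List ℕ) ∧ T.vertex k <+: T.vertex (j + 1) then v k else 0) := by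
    intro k hk
    have hkj : k ≤ j := Nat.lt_succ_iff.mp (Finset.mem_range.mp hk)
    by_cases h : T.vertex k ≠ ([] : List ℕ) ∧ T.vertex k <+: T.vertex (j + 1) <;>
      simp [h, hkj]
  have hc2 : ∀ k ∈ Finset.range (j + 1),
      (if T.vertex k ≠ ([] : List ℕ) ∧ T.vertex k <+: T.vertex j
        then (if k ≤ j then v k else 0) else 0)
      = (if T.vertex k ≠ ([] : List ℕ) ∧ T.vertex k <+: T.vertex j then v k else 0) := by
    intro k hk
    have hkj : k ≤ j := Nat.lt_succ_iff.mp (Finset.mem_range.mp hk)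
    by_cases h : T.vertex k ≠ ([] : List ℕ) ∧ T.vertex k <+: T.vertex j <;>
      simp [h, hkj]
  rw [Finset.sum_congr rfl hc1, Finset.sum_congr rfl hc2]
  ring

/-- The event, on the displacement side, that the `j`-th increment is small. -/
def treeSet (T : PlaneTree) (sr : ℝ) (j : ℕ) : Set (ℕ → ℝ) :=
  {v : ℕ → ℝ | |v (j + 1) + treeCoef T j (fun k => if k ≤ j then v k else 0)| < sr}

lemma treeSet_measurable (T : PlaneTree) (sr : ℝ) (j : ℕ) :
    MeasurableSet (treeSet T sr j) := by
  unfold treeSet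
  have h1 : Measurable fun v : ℕ → ℝ => (fun k => if k ≤ j then v k else 0) := by
    refine measurable_pi_lambda _ fun k => ?_
    by_cases h : k ≤ j
    · simpa [h] using measurable_pi_apply k
    · simp only [if_neg h]; exact measurable_const
  exact measurableSet_lt (((measurable_pi_apply (j+1)).add
    ((treeCoef_measurable T j).comp h1)).abs) measurable_const
lemma anticoncentration (ν : Measure ℝ) [IsProbabilityMeasure ν] {q s : ℝ}
    (hqs : q ≤ 2 * s) (z : ℝ) :
    ν {y : ℝ | |y + z| < s} ≤
      1 - min (ν {y : ℝ | |y| ≤ q}) (ν {y : ℝ | 4 * s ≤ |y|}) := by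
  set π := min (ν {y : ℝ | |y| ≤ q}) (ν {y : ℝ | 4 * s ≤ |y|}) with hπ
  have hmeas : MeasurableSet {y : ℝ | |y + z| < s} := by
    have : Continuous fun y : ℝ => |y + z| := (continuous_id.add continuous_const).abs
    exact isOpen_lt this continuous_const |>.measurableSet
  have hsub : π ≤ ν {y : ℝ | |y + z| < s}ᶜ := by
    rcases le_or_gt (|z|) (s + q) with hz | hz
    · refine le_trans (min_le_right _ _) (measure_mono ?_)
      intro y hy
      simp only [mem_setOf_eq, mem_compl_iff] at hy ⊢
      intro hlt
      have h1 : |y| ≤ |y + z| + |z| := by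
        have h2 := abs_add_le (y + z) (-z)
        simp only [add_neg_cancel_right, abs_neg] at h2
        linarith
      nlinarith [abs_nonneg z, abs_nonneg (y + z)]
    · refine le_trans (min_le_left _ _) (measure_mono ?_)
      intro y hy
      simp only [mem_setOf_eq, mem_compl_iff] at hy ⊢
      intro hlt
      have h1 : |z| ≤ |y + z| + |y| := by
        have h2 := abs_add_le (y + z) (-y)
        simp only [add_neg_cancel_comm, abs_neg] at h2
        linarith
      linarith
  calc ν {y : ℝ | |y + z| < s} = 1 - ν {y : ℝ | |y + z| < s}ᶜ := by
        rw [prob_compl_eq_one_sub hmeas,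
          ENNReal.sub_sub_cancel ENNReal.one_ne_top prob_le_one]
      _ ≤ 1 - π := tsub_le_tsub_left hsub 1

lemma seq_bound {Ω : Type*} [MeasurableSpace Ω] (P : Measure Ω) [IsProbabilityMeasure P]
    (Y : ℕ → Ω → ℝ) (hYmeas : ∀ k, Measurable (Y k))
    (hYindep : iIndepFun Y P)
    (ν : Measure ℝ) [IsProbabilityMeasure ν] (hYlaw : ∀ k, Measure.map (Y k) P = ν)
    (s : ℝ) (γ : ℝ≥0∞) (hγ : ∀ z : ℝ, ν {y | |y + z| < s} ≤ γ)
    (ζ : ℕ → (ℕ → ℝ) → ℝ) (hζ : ∀ j, Measurable (ζ j)) :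
    ∀ m : ℕ, P (⋂ j ∈ Finset.range m,
      {ω | |Y (j+1) ω + ζ j (fun k => if k ≤ j then Y k ω else 0)| < s}) ≤ γ ^ m := by
  intro m
  induction m with
  | zero => simpa using measure_mono (subset_univ _)
  | succ m IH =>
    classical
    set S : Finset ℕ := Finset.range (m + 1) with hS
    set W : Ω → (S → ℝ) := fun ω i => Y (i : ℕ) ω with hWdef
    have hWmeas : Measurable W := measurable_pi_lambda _ fun i => hYmeas _
    set g : ℕ → (S → ℝ) → (ℕ → ℝ) := fun j v k =>
      if h : k ∈ S then (if k ≤ j then v ⟨k, h⟩ else 0) else 0 with hgdef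
    have hgmeas : ∀ j, Measurable (g j) := by
      intro j
      refine measurable_pi_lambda _ fun k => ?_
      by_cases h : k ∈ S
      · by_cases h2 : k ≤ j
        · simpa [hgdef, h, h2] using measurable_pi_apply (⟨k, h⟩ : S)
        · simp only [hgdef, dif_pos h, if_neg h2]; exact measurable_const
      · simp only [hgdef, dif_neg h]; exact measurable_const
    have hg : ∀ j, j ≤ m → ∀ ω, (fun k => if k ≤ j then Y k ω else 0) = g j (W ω) := by
      intro j hj ω
      funext k
      by_cases h2 : k ≤ j
      · have hk : k ∈ S := Finset.mem_range.mpr (Nat.lt_succ_of_le (le_trans h2 hj))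
        simp [hgdef, hk, h2, hWdef]
      · by_cases h : k ∈ S <;> simp [hgdef, h, h2]
    set e : ℕ → (S → ℝ) → ℝ := fun i v => if h : i ∈ S then v ⟨i, h⟩ else 0 with hedef
    have hemeas : ∀ i, Measurable (e i) := by
      intro i
      by_cases h : i ∈ S
      · simpa [hedef, h] using measurable_pi_apply (⟨i, h⟩ : S)
      · simp only [hedef, dif_neg h]; exact measurable_const
    have heW : ∀ i, i ∈ S → ∀ ω, e i (W ω) = Y i ω := by
      intro i hi ω; simp [hedef, hi, hWdef]
    set D : Set (S → ℝ) := ⋂ j ∈ Finset.range m,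
      {v : S → ℝ | |e (j + 1) v + ζ j (g j v)| < s} with hD
    have hDmeas : MeasurableSet D := by
      refine MeasurableSet.biInter (Finset.range m).countable_toSet fun j _ => ?_
      exact measurableSet_lt (((hemeas (j+1)).add ((hζ j).comp (hgmeas j))).abs)
        measurable_const
    set C : Set ((S → ℝ) × ℝ) := {p | |p.2 + ζ m (g m p.1)| < s} with hC
    have hCmeas : MeasurableSet C :=
      measurableSet_lt ((measurable_snd.add ((hζ m).comp ((hgmeas m).comp
        measurable_fst))).abs) measurable_const
    set E : Set ((S → ℝ) × ℝ) := (D ×ˢ (univ : Set ℝ)) ∩ C with hE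
    have hEmeas : MeasurableSet E := (hDmeas.prod MeasurableSet.univ).inter hCmeas
    set pair : Ω → (S → ℝ) × ℝ := fun ω => (W ω, Y (m + 1) ω) with hpairdef
    have hpairmeas : Measurable pair := hWmeas.prodMk (hYmeas _)
    have hmS : m + 1 ∉ S := by simp [hS]
    have hInd : IndepFun W (Y (m + 1)) P := by
      have h1 := hYindep.indepFun_finset S {m + 1}
        (Finset.disjoint_singleton_right.mpr hmS) hYmeas
      have h2 := h1.comp measurable_id
        (measurable_pi_apply (⟨m + 1, Finset.mem_singleton_self _⟩ : ({m+1} : Finset ℕ)))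
      exact h2
    have hmap : Measure.map pair P = (Measure.map W P).prod ν := by
      rw [← hYlaw (m + 1)]
      exact (indepFun_iff_map_prod_eq_prod_map_map hWmeas.aemeasurable
        (hYmeas _).aemeasurable).mp hInd
    have hmemD : ∀ ω : Ω, (W ω ∈ D ↔ ∀ j, j < m →
        |Y (j+1) ω + ζ j (fun k => if k ≤ j then Y k ω else 0)| < s) := by
      intro ω
      rw [hD]
      simp only [mem_iInter, Finset.mem_range, mem_setOf_eq]
      constructor
      · intro h j hj
        have := h j hj
        rwa [heW (j+1) (Finset.mem_range.mpr (Nat.succ_lt_succ hj)) ω,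
          ← hg j (le_of_lt hj) ω] at this
      · intro h j hj
        rw [heW (j+1) (Finset.mem_range.mpr (Nat.succ_lt_succ hj)) ω,
          ← hg j (le_of_lt hj) ω]
        exact h j hj
    have hmemC : ∀ ω : Ω, (pair ω ∈ C ↔
        |Y (m+1) ω + ζ m (fun k => if k ≤ m then Y k ω else 0)| < s) := by
      intro ω
      rw [hC]
      simp only [mem_setOf_eq]
      rw [← hg m le_rfl ω]
    have hset : (⋂ j ∈ Finset.range (m + 1),
        {ω | |Y (j+1) ω + ζ j (fun k => if k ≤ j then Y k ω else 0)| < s})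
        = pair ⁻¹' E := by
      ext ω
      simp only [mem_iInter, Finset.mem_range, mem_setOf_eq, mem_preimage]
      have hmemE : pair ω ∈ E ↔ W ω ∈ D ∧ pair ω ∈ C := by
        rw [hE]
        simp only [mem_inter_iff, mem_prod, mem_univ, and_true]
        exact Iff.rfl
      rw [hmemE, hmemD ω, hmemC ω]
      constructor
      · intro h
        exact ⟨fun j hj => h j (Nat.lt_succ_of_lt hj), h m (Nat.lt_succ_self m)⟩
      · rintro ⟨h1, h2⟩ j hj
        rcases Nat.lt_succ_iff_lt_or_eq.mp hj with hj' | rfl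
        · exact h1 j hj'
        · exact h2
    have hBset : (⋂ j ∈ Finset.range m,
        {ω | |Y (j+1) ω + ζ j (fun k => if k ≤ j then Y k ω else 0)| < s})
        = W ⁻¹' D := by
      ext ω
      simp only [mem_iInter, Finset.mem_range, mem_setOf_eq, mem_preimage]
      rw [hmemD ω]
    rw [hset]
    have hslice : ∀ v : S → ℝ, ν (Prod.mk v ⁻¹' E) ≤ D.indicator (fun _ => γ) v := by
      intro v
      by_cases hv : v ∈ D
      · have : Prod.mk v ⁻¹' E = {y : ℝ | |y + ζ m (g m v)| < s} := by
          ext y; simp [hE, hC, hv]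
        rw [this, indicator_of_mem hv]
        exact hγ _
      · have : Prod.mk v ⁻¹' E = ∅ := by
          ext y; simp [hE, hC, hv]
        rw [this, indicator_of_notMem hv]
        simp
    calc P (pair ⁻¹' E) = (Measure.map pair P) E := (Measure.map_apply hpairmeas hEmeas).symm
      _ = ((Measure.map W P).prod ν) E := by rw [hmap]
      _ = ∫⁻ v, ν (Prod.mk v ⁻¹' E) ∂(Measure.map W P) := Measure.prod_apply hEmeas
      _ ≤ ∫⁻ v, D.indicator (fun _ => γ) v ∂(Measure.map W P) := lintegral_mono hslice
      _ = γ * (Measure.map W P) D := lintegral_indicator_const hDmeas γ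
      _ = γ * P (W ⁻¹' D) := by rw [Measure.map_apply hWmeas hDmeas]
      _ ≤ γ * γ ^ m := by
          refine mul_le_mul_right ?_ γ
          rw [← hBset]; exact IH
      _ = γ ^ (m + 1) := by rw [pow_succ, mul_comm]
lemma compact_osc {K : Set C(Icc (0:ℝ) 1, ℝ)} (hK : IsCompact K) :
    ∃ δ : ℝ, 0 < δ ∧ ∀ g ∈ K, ∀ t₁ t₂ : Icc (0:ℝ) 1,
      |(t₁ : ℝ) - (t₂ : ℝ)| ≤ δ → |g t₁ - g t₂| < 4⁻¹ := by
  obtain ⟨t, htf, htsub⟩ := (Metric.totallyBounded_iff.mp hK.totallyBounded)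
    (16⁻¹ : ℝ) (by norm_num)
  have hUC : ∀ x : C(Icc (0:ℝ) 1, ℝ), ∃ δ : ℝ, 0 < δ ∧
      ∀ a b : Icc (0:ℝ) 1, dist a b < δ → dist (x a) (x b) < 16⁻¹ := by
    intro x
    have h1 : UniformContinuous x := CompactSpace.uniformContinuous_of_continuous x.continuous
    obtain ⟨δ, hδ, h⟩ := Metric.uniformContinuous_iff.mp h1 (16⁻¹ : ℝ) (by norm_num)
    exact ⟨δ, hδ, fun a b hab => h hab⟩
  choose d hd0 hd using hUC
  have hfin : (htf.toFinset.image d).Nonempty ∨ t = ∅ := by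
    rcases eq_or_ne t ∅ with h | h
    · exact Or.inr h
    · left
      refine Finset.image_nonempty.mpr ?_
      rw [Set.Finite.toFinset_nonempty]
      exact nonempty_iff_ne_empty.mpr h
  rcases hfin with hne | hempty
  case inr =>
    refine ⟨1, one_pos, fun g hg => ?_⟩
    exfalso
    have := htsub hg
    simp [hempty] at this
  case inl =>
    set δ := (htf.toFinset.image d).min' hne with hδdef
    have hδpos : 0 < δ / 2 := by
      have : δ ∈ htf.toFinset.image d := Finset.min'_mem _ hne
      obtain ⟨x, -, hx⟩ := Finset.mem_image.mp this
      have := hd0 x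
      linarith
    refine ⟨δ / 2, hδpos, fun g hg t₁ t₂ hdist => ?_⟩
    obtain ⟨x, hxt, hgx⟩ := Set.mem_iUnion₂.mp (htsub hg)
    have hxmem : x ∈ htf.toFinset := htf.mem_toFinset.mpr hxt
    have hδx : δ ≤ d x := Finset.min'_le _ _ (Finset.mem_image_of_mem d hxmem)
    have hdist' : dist t₁ t₂ < d x := by
      have : dist t₁ t₂ = |(t₁ : ℝ) - (t₂ : ℝ)| := rfl
      rw [this]
      have := hd0 x
      linarith
    have h1 : dist (x t₁) (x t₂) < 16⁻¹ := hd x t₁ t₂ hdist'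
    have h2 : dist (g t₁) (x t₁) ≤ dist g x := ContinuousMap.dist_apply_le_dist t₁
    have h3 : dist (g t₂) (x t₂) ≤ dist g x := ContinuousMap.dist_apply_le_dist t₂
    have h4 : dist g x < 16⁻¹ := Metric.mem_ball.mp hgx
    have h5 : dist (g t₁) (g t₂) < 4⁻¹ := by
      have := dist_triangle (g t₁) (x t₁) (g t₂)
      have h6 := dist_triangle (x t₁) (x t₂) (g t₂)
      have h7 : dist (x t₂) (g t₂) = dist (g t₂) (x t₂) := dist_comm _ _
      calc dist (g t₁) (g t₂) ≤ dist (g t₁) (x t₁) + dist (x t₁) (x t₂) + dist (x t₂) (g t₂) :=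
            dist_triangle4 _ _ _ _
        _ < 16⁻¹ + 16⁻¹ + 16⁻¹ := by rw [h7]; exact add_lt_add_of_lt_of_le (add_lt_add_of_le_of_lt (le_trans h2 h4.le) h1) (le_trans h3 h4.le) |>.trans_le (by norm_num)
        _ < 4⁻¹ := by norm_num
    simpa [Real.dist_eq] using h5
/-- A bump function vanishing on `[-M, ∞)` and equal to `1` on `(-∞, -M-1]`. -/
def bumpBCF (M : ℝ) : BoundedContinuousFunction ℝ ℝ :=
  BoundedContinuousFunction.mkOfBound
    ⟨fun x => min 1 (max 0 (-x - M)), by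
      refine continuous_const.min (continuous_const.max ?_)
      exact (continuous_neg.sub continuous_const)⟩ 1
    (by
      intro x y
      have h1 : ∀ z : ℝ, 0 ≤ min 1 (max 0 (-z - M)) := fun z =>
        le_min (by norm_num) (le_max_left _ _)
      have h2 : ∀ z : ℝ, min 1 (max 0 (-z - M)) ≤ 1 := fun z => min_le_left _ _
      rw [Real.dist_eq, abs_sub_le_iff]
      constructor <;> [have := h1 y; have := h1 x] <;> [have' := h2 x; have' := h2 y] <;>
        simp only [ContinuousMap.coe_mk] <;> linarith)

lemma bumpBCF_apply (M x : ℝ) : bumpBCF M x = min 1 (max 0 (-x - M)) := rfl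

lemma bumpBCF_nonneg (M x : ℝ) : 0 ≤ bumpBCF M x :=
  le_min (by norm_num) (le_max_left _ _)

lemma bumpBCF_eq_zero {M x : ℝ} (hx : -M ≤ x) : bumpBCF M x = 0 := by
  rw [bumpBCF_apply, max_eq_left (by linarith)]
  simp

lemma bumpBCF_eq_one {M x : ℝ} (hx : x ≤ -M - 1) : bumpBCF M x = 1 := by
  rw [bumpBCF_apply, min_eq_left]
  exact le_max_of_le_right (by linarith)

lemma eventually_scale (μ : Measure ℕ) {α : ℝ} {B : ℕ → ℝ} (hμ : OffspringHyp μ α B)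
    (M : ℝ) (hM : 0 < M) : ∀ᶠ n : ℕ in atTop, M ≤ (n : ℝ) / B n := by
  by_contra hcon
  rw [Filter.not_eventually] at hcon
  obtain ⟨ν₀, hν₀prob, hLap, hconv⟩ := hμ.attract
  set f := bumpBCF M with hf
  have h0 : ∀ n : ℕ, ¬ M ≤ (n : ℝ) / B n →
      ∫ x, f x ∂((sumLaw μ n).map fun s : ℕ => ((s : ℝ) - n) / B n) = 0 := by
    intro n hn
    rw [MeasureTheory.integral_map (measurable_from_top).aemeasurable
      f.continuous.aestronglyMeasurable]
    have hval : ∀ s : ℕ, f (((s : ℝ) - n) / B n) = 0 := by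
      intro s
      refine bumpBCF_eq_zero ?_
      have hB := hμ.B_pos n
      have h1 : (-(n : ℝ)) / B n ≤ ((s : ℝ) - n) / B n := by
        refine (div_le_div_iff_of_pos_right hB).mpr ?_
        have : (0:ℝ) ≤ (s : ℝ) := Nat.cast_nonneg s
        linarith
      have h2 : -M ≤ (-(n : ℝ)) / B n := by
        rw [neg_div]
        push_neg at hn
        linarith
      linarith
    simp only [hval, integral_zero]
  -- the limit of a frequently-vanishing sequence is zero
  have hfreq : ∃ᶠ n in atTop,
      (fun n : ℕ => ∫ x, f x ∂((sumLaw μ n).map fun s : ℕ => ((s : ℝ) - n) / B n)) n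
        = (fun _ : ℕ => (0 : ℝ)) n :=
    hcon.mono h0
  have hlim0 : ∫ x, f x ∂ν₀ = 0 :=
    tendsto_nhds_unique_of_frequently_eq (hconv f) tendsto_const_nhds hfreq
  -- hence ν₀ gives no mass far to the left
  have hint : Integrable (fun x => f x) ν₀ := f.integrable ν₀
  have hae : (fun x => f x) =ᵐ[ν₀] 0 :=
    (MeasureTheory.integral_eq_zero_iff_of_nonneg (fun x => bumpBCF_nonneg M x) hint).mp hlim0
  have hnull0 : ν₀ {x : ℝ | ¬ (f x = 0)} = 0 := by
    have := MeasureTheory.ae_iff.mp hae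
    simpa using this
  have hnull : ν₀ {x : ℝ | x ≤ -M - 1} = 0 := by
    refine measure_mono_null (fun x hx => ?_) hnull0
    simp only [mem_setOf_eq] at hx ⊢
    rw [bumpBCF_eq_one hx]
    norm_num
  -- choose a large Laplace parameter
  have hα1 : 1 < α := hμ.alpha_mem.1
  have hα0 : α - 1 ≠ 0 := by linarith
  set l : ℝ := (M + 2) ^ (α - 1)⁻¹ with hl
  have hM2 : (0 : ℝ) < M + 2 := by linarith
  have hlpos : 0 < l := Real.rpow_pos_of_pos hM2 _
  have hLapl := hLap l hlpos.le
  -- the integrand is a.e. bounded by `exp (l * (M + 1))`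
  have haemem : ∀ᵐ x ∂ν₀, -M - 1 < x := by
    rw [MeasureTheory.ae_iff]
    refine measure_mono_null (fun x hx => ?_) hnull
    simp only [mem_setOf_eq, not_lt] at hx ⊢
    linarith
  have hbound : ∀ᵐ x ∂ν₀, ‖Real.exp (-l * x)‖ ≤ Real.exp (l * (M + 1)) := by
    refine haemem.mono fun x hx => ?_
    rw [Real.norm_eq_abs, abs_of_pos (Real.exp_pos _), Real.exp_le_exp]
    nlinarith [hlpos]
  have hintexp : Integrable (fun x => Real.exp (-l * x)) ν₀ := by
    refine Integrable.mono' (integrable_const (Real.exp (l * (M + 1)))) ?_ hbound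
    exact (Real.continuous_exp.comp (continuous_const.mul continuous_id)).aestronglyMeasurable
  have hle : ∫ x, Real.exp (-l * x) ∂ν₀ ≤ Real.exp (l * (M + 1)) := by
    calc ∫ x, Real.exp (-l * x) ∂ν₀ ≤ ∫ _, Real.exp (l * (M + 1)) ∂ν₀ := by
          refine integral_mono_ae hintexp (integrable_const _) ?_
          refine hbound.mono fun x hx => ?_
          rwa [Real.norm_eq_abs, abs_of_pos (Real.exp_pos _)] at hx
      _ = Real.exp (l * (M + 1)) := by
          rw [integral_const]
          simp [hν₀prob.measure_univ]
  rw [hLapl] at hle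
  have hexp : l ^ α ≤ l * (M + 1) := Real.exp_le_exp.mp hle
  have hlα : l ^ α = (M + 2) * l := by
    have h1 : l ^ α = l ^ (α - 1) * l := by
      have h1' : l ^ (α - 1) * l = l ^ (α - 1) * l ^ (1:ℝ) := by rw [Real.rpow_one]
      rw [h1', ← Real.rpow_add hlpos]
      norm_num
    have h2 : l ^ (α - 1) = M + 2 := by
      rw [hl, ← Real.rpow_mul hM2.le, inv_mul_cancel₀ hα0, Real.rpow_one]
    rw [h1, h2]
  rw [hlα] at hexp
  nlinarith [hlpos, hexp]
instance : Countable PlaneTree := by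
  have hinj : Function.Injective (fun T : PlaneTree => T.verts) := by
    rintro ⟨v1, h1, h2, h3, h4⟩ ⟨w1, g1, g2, g3, g4⟩ h
    simpa using h
  exact hinj.countable

lemma planeTree_measurableSet (A : Set PlaneTree) : MeasurableSet A :=
  MeasurableSpace.measurableSet_top

/-- **Necessity of the tail condition for the non-centred snake** (Theorem 1.2, tightness
part). If `P(|Y| ≥ n/B_n) = o(n^{-1})` fails, then the sequence of laws of the continuous
processes `((B_n/n) H^{sp}_n(nt))_{t ∈ [0,1]}` on `C([0,1], ℝ)` is not tight. -/
theorem spatial_height_not_tight_linear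
    (μ : Measure ℕ) (α : ℝ) (B : ℕ → ℝ) (hμ : OffspringHyp μ α B)
    {Ω : Type*} [MeasurableSpace Ω] (P : Measure Ω) [IsProbabilityMeasure P]
    (Tn : ℕ → Ω → PlaneTree) (hTmeas : ∀ n, Measurable (Tn n))
    (hT : ∀ᶠ n in atTop, IsCondBGW μ n (Measure.map (Tn n) P))
    (Y : ℕ → Ω → ℝ) (hYmeas : ∀ k, Measurable (Y k))
    (hYindep : iIndepFun Y P)
    (ν : Measure ℝ) (hYlaw : ∀ k, Measure.map (Y k) P = ν)
    (hindep : ∀ n, IndepFun (Tn n) (fun ω (k : ℕ) => Y k ω) P)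
    (hfail : 0 < Filter.limsup (fun n : ℕ =>
        (n : ℝ≥0∞) * ν {y : ℝ | (n : ℝ) / B n ≤ |y|}) atTop) :
    ¬ ∀ ε : ℝ≥0∞, 0 < ε → ∃ K : Set C(Icc (0 : ℝ) 1, ℝ), IsCompact K ∧
        ∀ᶠ n : ℕ in atTop,
          P {ω : Ω |
              rescaledPath (B n / n) (n : ℝ) ((Tn n ω).verts.card)
                ((Tn n ω).spatialHeight fun k => Y k ω) ∉ K} ≤ ε := by
  intro htight
  haveI hνprob : IsProbabilityMeasure ν := by
    rw [← hYlaw 0]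
    exact Measure.isProbabilityMeasure_map (hYmeas 0).aemeasurable
  -- a scale `q` capturing at least half the mass of `ν`
  obtain ⟨q, hqpos, hq⟩ : ∃ q : ℝ, 0 < q ∧ (2⁻¹ : ℝ≥0∞) ≤ ν {y : ℝ | |y| ≤ q} := by
    have hmono : Monotone (fun m : ℕ => {y : ℝ | |y| ≤ (m : ℝ)}) := by
      intro a b hab y hy
      simp only [mem_setOf_eq] at hy ⊢
      exact le_trans hy (by exact_mod_cast hab)
    have hUnion : (⋃ m : ℕ, {y : ℝ | |y| ≤ (m : ℝ)}) = univ := by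
      ext y
      simp only [mem_iUnion, mem_setOf_eq, mem_univ, iff_true]
      obtain ⟨m, hm⟩ := exists_nat_ge (|y|)
      exact ⟨m, hm⟩
    have htend := tendsto_measure_iUnion_atTop (μ := ν) hmono
    rw [hUnion, measure_univ] at htend
    have hlt : (2⁻¹ : ℝ≥0∞) < 1 := by norm_num
    have := htend.eventually_const_le hlt
    obtain ⟨m, hm⟩ := this.exists
    exact ⟨(m : ℝ) + 1, by positivity, le_trans hm (measure_mono fun y hy => by
      simp only [mem_setOf_eq] at hy ⊢; linarith)⟩
  -- a positive fraction from the limsup hypothesis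
  set L := Filter.limsup (fun n : ℕ =>
      (n : ℝ≥0∞) * ν {y : ℝ | (n : ℝ) / B n ≤ |y|}) atTop with hL
  set b : ℝ≥0∞ := min (L / 2) 1 with hbdef
  have hb0 : b ≠ 0 := by
    have h1 : (0 : ℝ≥0∞) < L / 2 := ENNReal.half_pos (ne_of_gt hfail)
    exact (lt_min h1 zero_lt_one).ne'
  have hbtop : b ≠ ⊤ := by
    simp only [hbdef, ne_eq]
    exact fun h => by simp [min_eq_top] at h
  have hbL : b < L := by
    rcases eq_or_ne L ⊤ with h | h
    · rw [h]
      exact lt_of_le_of_lt (min_le_right _ _) (by simp)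
    · exact lt_of_le_of_lt (min_le_left _ _) (ENNReal.half_lt_self (ne_of_gt hfail) h)
  have hfreqb : ∃ᶠ n : ℕ in atTop,
      b < (n : ℝ≥0∞) * ν {y : ℝ | (n : ℝ) / B n ≤ |y|} :=
    frequently_lt_of_lt_limsup (by isBoundedDefault) hbL
  set β : ℝ := b.toReal with hβdef
  have hβpos : 0 < β := ENNReal.toReal_pos hb0 hbtop
  set β' : ℝ := min 2⁻¹ β with hβ'def
  have hβ'pos : 0 < β' := lt_min (by norm_num) hβpos
  have hexplt : Real.exp (-β') < 1 := by
    rw [← Real.exp_zero]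
    exact Real.exp_lt_exp.mpr (by linarith)
  set ε : ℝ≥0∞ := ENNReal.ofReal ((1 - Real.exp (-β')) / 2) with hεdef
  have hεpos : 0 < ε := ENNReal.ofReal_pos.mpr (by linarith)
  obtain ⟨K, hK, hKev⟩ := htight ε hεpos
  obtain ⟨δ, hδpos, hosc⟩ := compact_osc hK
  -- eventual facts
  have hev1 : ∀ᶠ n : ℕ in atTop, 2 * q ≤ (n : ℝ) / B n :=
    eventually_scale μ hμ (2 * q) (by linarith)
  have hev2 : ∀ᶠ n : ℕ in atTop, 1 / (n : ℝ) ≤ δ ∧ 1 ≤ n := by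
    filter_upwards [eventually_ge_atTop (max 1 (⌈1 / δ⌉₊ + 1))] with n hn
    have hn1 : 1 ≤ n := le_trans (le_max_left _ _) hn
    have hn2 : (⌈1 / δ⌉₊ : ℝ) + 1 ≤ (n : ℝ) := by
      exact_mod_cast le_trans (le_max_right _ _) hn
    have hn3 : 1 / δ ≤ (n : ℝ) := le_trans (Nat.le_ceil _) (by linarith)
    have hnpos : (0 : ℝ) < n := by positivity
    refine ⟨?_, hn1⟩
    rw [div_le_iff₀ hnpos]
    rw [div_le_iff₀ hδpos] at hn3
    linarith
  obtain ⟨n, hbn, hTn, hKn, h2q, hδn, hn1⟩ :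
      ∃ n : ℕ, b < (n : ℝ≥0∞) * ν {y : ℝ | (n : ℝ) / B n ≤ |y|} ∧
        IsCondBGW μ n (Measure.map (Tn n) P) ∧
        P {ω : Ω | rescaledPath (B n / n) (n : ℝ) ((Tn n ω).verts.card)
            ((Tn n ω).spatialHeight fun k => Y k ω) ∉ K} ≤ ε ∧
        2 * q ≤ (n : ℝ) / B n ∧ 1 / (n : ℝ) ≤ δ ∧ 1 ≤ n := by
    have := hfreqb.and_eventually (hT.and (hKev.and (hev1.and hev2)))
    obtain ⟨n, h1, h2, h3, h4, h5, h6⟩ := this.exists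
    exact ⟨n, h1, h2, h3, h4, h5, h6⟩
  -- basic numeric facts at scale n
  have hBpos : 0 < B n := hμ.B_pos n
  have hnpos : (0 : ℝ) < n := by exact_mod_cast hn1
  set tn : ℝ := (n : ℝ) / B n with htndef
  have htnpos : 0 < tn := by
    have : 0 < 2 * q := by linarith
    linarith [h2q]
  set s : ℝ := tn / 4 with hsdef
  have hs4 : 4 * s = tn := by rw [hsdef]; ring
  have hqs : q ≤ 2 * s := by rw [hsdef]; linarith [h2q]
  -- the anti-concentration bound
  set π : ℝ≥0∞ := min (ν {y : ℝ | |y| ≤ q}) (ν {y : ℝ | 4 * s ≤ |y|}) with hπdef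
  have hγ : ∀ z : ℝ, ν {y : ℝ | |y + z| < s} ≤ 1 - π := fun z =>
    anticoncentration ν hqs z
  have hsetEq : {y : ℝ | 4 * s ≤ |y|} = {y : ℝ | (n : ℝ) / B n ≤ |y|} := by
    ext y; rw [mem_setOf_eq, mem_setOf_eq, hs4]
  have hn0' : ((n : ℝ≥0∞)) ≠ 0 := by
    simp only [ne_eq, Nat.cast_eq_zero]
    omega
  have hπ2 : b / (n : ℝ≥0∞) ≤ ν {y : ℝ | 4 * s ≤ |y|} := by
    rw [hsetEq]
    rw [ENNReal.div_le_iff_le_mul (Or.inl hn0') (Or.inl (ENNReal.natCast_ne_top n))]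
    rw [mul_comm]
    exact hbn.le
  have hπlb : min 2⁻¹ (b / (n : ℝ≥0∞)) ≤ π := min_le_min hq hπ2
  -- the failure-probability bound, in real form
  have hγn : (1 - π) ^ n ≤ ENNReal.ofReal (Real.exp (-β')) := by
    set m : ℝ := min 2⁻¹ (β / n) with hmdef
    have hm0 : 0 ≤ m := le_min (by norm_num) (by positivity)
    have hm1 : m ≤ 2⁻¹ := min_le_left _ _
    have hofmin : min 2⁻¹ (b / (n : ℝ≥0∞)) = ENNReal.ofReal m := by
      have h1 : b / (n : ℝ≥0∞) = ENNReal.ofReal (β / n) := by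
        rw [ENNReal.ofReal_div_of_pos hnpos, ENNReal.ofReal_toReal hbtop,
          ENNReal.ofReal_natCast]
      have h2 : (2⁻¹ : ℝ≥0∞) = ENNReal.ofReal 2⁻¹ := by
        rw [ENNReal.ofReal_inv_of_pos two_pos, ENNReal.ofReal_ofNat]
      have hmono : Monotone ENNReal.ofReal := fun _ _ h => ENNReal.ofReal_le_ofReal h
      rw [h1, h2, hmdef, hmono.map_min]
    have hγ0 : 1 - π ≤ ENNReal.ofReal (1 - m) := by
      have h3 : 1 - π ≤ 1 - ENNReal.ofReal m := by
        rw [← hofmin]; exact tsub_le_tsub_left hπlb 1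
      have h4 : ENNReal.ofReal (1 - m) = 1 - ENNReal.ofReal m := by
        rw [ENNReal.ofReal_sub _ hm0, ENNReal.ofReal_one]
      rw [h4]; exact h3
    have hreal : (1 - m) ^ n ≤ Real.exp (-β') := by
      have h3 : 1 - m ≤ Real.exp (-m) := by
        have := Real.add_one_le_exp (-m); linarith
      have h4 : (1 - m) ^ n ≤ Real.exp (-m) ^ n :=
        pow_le_pow_left₀ (by norm_num at hm1 ⊢; linarith) h3 n
      have h5 : Real.exp (-m) ^ n = Real.exp ((n : ℝ) * (-m)) := (Real.exp_nat_mul _ n).symm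
      have h6 : β' ≤ (n : ℝ) * m := by
        rcases le_total (2⁻¹ : ℝ) (β / n) with hc | hc
        · rw [hmdef, min_eq_left hc]
          have h7 : β' ≤ 2⁻¹ := min_le_left _ _
          have h8 : (1 : ℝ) ≤ (n : ℝ) := by exact_mod_cast hn1
          nlinarith
        · rw [hmdef, min_eq_right hc, mul_comm, div_mul_cancel₀ β (ne_of_gt hnpos)]
          exact min_le_right _ _
      calc (1 - m) ^ n ≤ Real.exp ((n : ℝ) * (-m)) := by rw [← h5]; exact h4
        _ ≤ Real.exp (-β') := Real.exp_le_exp.mpr (by nlinarith)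
    calc (1 - π) ^ n ≤ (ENNReal.ofReal (1 - m)) ^ n := pow_le_pow_left' hγ0 n
      _ = ENNReal.ofReal ((1 - m) ^ n) := (ENNReal.ofReal_pow (by norm_num at hm1 ⊢; linarith) n).symm
      _ ≤ ENNReal.ofReal (Real.exp (-β')) := ENNReal.ofReal_le_ofReal hreal
  -- events
  set F : Set Ω := ⋂ j ∈ Finset.range n, {ω : Ω |
      |(Tn n ω).spatialHeight (fun k => Y k ω) (j + 1) -
        (Tn n ω).spatialHeight (fun k => Y k ω) j| < s} with hFdef
  set G : Set Ω := {ω : Ω | (Tn n ω).verts.card = n + 1} with hGdef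
  have hGc : P Gᶜ = 0 := by
    have hGc1 : Gᶜ = Tn n ⁻¹' {T : PlaneTree | T.verts.card ≠ n + 1} := by
      ext ω; simp [hGdef]
    rw [hGc1, ← Measure.map_apply (hTmeas n) (planeTree_measurableSet _)]
    have hcover : {T : PlaneTree | T.verts.card ≠ n + 1} =
        ⋃ T : {T : PlaneTree // T.verts.card ≠ n + 1}, {T.1} := by
      ext T; simp
    rw [hcover]
    refine le_antisymm (le_trans (measure_iUnion_le _) ?_) zero_le
    have hsing : ∀ T : {T : PlaneTree // T.verts.card ≠ n + 1},
        (Measure.map (Tn n) P) {T.1} = 0 := by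
      intro T
      rw [hTn.2 T.1, if_neg T.2, ENNReal.zero_div]
    simp [hsing]
  have hFG : F ∩ G ⊆ ⋃ T : {T : PlaneTree // T.verts.card = n + 1},
      (Tn n ⁻¹' {T.1} ∩ (fun ω (k : ℕ) => Y k ω) ⁻¹'
        (⋂ j ∈ Finset.range n, treeSet T.1 s j)) := by
    rintro ω ⟨hF, hG⟩
    refine mem_iUnion.mpr ⟨⟨Tn n ω, hG⟩, ⟨rfl, ?_⟩⟩
    rw [mem_preimage]
    refine mem_iInter₂.mpr fun j hj => ?_
    have hjn : j < n := Finset.mem_range.mp hj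
    have hbig := mem_iInter₂.mp hF j hj
    rw [mem_setOf_eq] at hbig
    show |(fun k : ℕ => Y k ω) (j + 1) +
      treeCoef (Tn n ω) j (fun k => if k ≤ j then (fun k : ℕ => Y k ω) k else 0)| < s
    rw [← treeCoef_decomp (Tn n ω) hG (fun k => Y k ω) hjn]
    exact hbig
  have hmain : P (F ∩ G) ≤ (1 - π) ^ n := by
    refine le_trans (measure_mono hFG) (le_trans (measure_iUnion_le _) ?_)
    have hterm : ∀ T : {T : PlaneTree // T.verts.card = n + 1},
        P (Tn n ⁻¹' {T.1} ∩ (fun ω (k : ℕ) => Y k ω) ⁻¹'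
          (⋂ j ∈ Finset.range n, treeSet T.1 s j))
          ≤ P (Tn n ⁻¹' {T.1}) * (1 - π) ^ n := by
      intro T
      rw [(hindep n).measure_inter_preimage_eq_mul _ _ (planeTree_measurableSet _)
        (Finset.measurableSet_biInter _ fun j _ => treeSet_measurable T.1 s j)]
      refine mul_le_mul_right ?_ _
      have hpre : (fun ω (k : ℕ) => Y k ω) ⁻¹' (⋂ j ∈ Finset.range n, treeSet T.1 s j)
          = ⋂ j ∈ Finset.range n, {ω : Ω |
              |Y (j + 1) ω + treeCoef T.1 j (fun k => if k ≤ j then Y k ω else 0)| < s} := by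
        ext ω
        simp only [mem_preimage, mem_iInter, mem_setOf_eq, treeSet]
      rw [hpre]
      exact seq_bound P Y hYmeas hYindep ν hYlaw s (1 - π) hγ (treeCoef T.1)
        (fun j => treeCoef_measurable _ _) n
    refine le_trans (ENNReal.tsum_le_tsum hterm) ?_
    rw [ENNReal.tsum_mul_right]
    refine le_trans (mul_le_mul_left ?_ _) (by rw [one_mul] :
      (1 : ℝ≥0∞) * (1 - π) ^ n ≤ (1 - π) ^ n)
    have hdisj : Pairwise (Function.onFun Disjoint
        fun T : {T : PlaneTree // T.verts.card = n + 1} => Tn n ⁻¹' {T.1}) := by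
      intro T1 T2 hne
      refine Set.disjoint_left.mpr fun ω h1 h2 => ?_
      rw [mem_preimage, mem_singleton_iff] at h1 h2
      exact hne (Subtype.ext (h1 ▸ h2))
    rw [← measure_iUnion hdisj fun T => hTmeas n (planeTree_measurableSet _)]
    exact prob_le_one
  have hF1 : P F ≤ (1 - π) ^ n := by
    refine le_trans (measure_mono (?_ : F ⊆ (F ∩ G) ∪ Gᶜ)) ?_
    · intro ω hω
      by_cases hg : ω ∈ G
      · exact Or.inl ⟨hω, hg⟩
      · exact Or.inr hg
    · refine le_trans (measure_union_le _ _) ?_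
      rw [hGc, add_zero]
      exact hmain
  have hlow : 1 - (1 - π) ^ n ≤ P (Fᶜ ∩ G) := by
    have hcover : (univ : Set Ω) ⊆ (Fᶜ ∩ G) ∪ (F ∪ Gᶜ) := by
      intro ω _
      by_cases hf : ω ∈ F
      · exact Or.inr (Or.inl hf)
      · by_cases hg : ω ∈ G
        · exact Or.inl ⟨hf, hg⟩
        · exact Or.inr (Or.inr hg)
    have h1 : (1 : ℝ≥0∞) ≤ P (Fᶜ ∩ G) + (1 - π) ^ n := by
      calc (1 : ℝ≥0∞) = P univ := measure_univ.symm
        _ ≤ P ((Fᶜ ∩ G) ∪ (F ∪ Gᶜ)) := measure_mono hcover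
        _ ≤ P (Fᶜ ∩ G) + P (F ∪ Gᶜ) := measure_union_le _ _
        _ ≤ P (Fᶜ ∩ G) + (P F + P Gᶜ) := add_le_add_right (measure_union_le _ _) _
        _ ≤ P (Fᶜ ∩ G) + ((1 - π) ^ n + 0) := add_le_add_right (add_le_add hF1 hGc.le) _
        _ = P (Fᶜ ∩ G) + (1 - π) ^ n := by rw [add_zero]
    exact tsub_le_iff_right.mpr h1
  -- the geometric step: on `Fᶜ ∩ G` the path oscillates too fast to lie in `K`
  have hgeom : Fᶜ ∩ G ⊆ {ω : Ω | rescaledPath (B n / n) (n : ℝ) ((Tn n ω).verts.card)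
      ((Tn n ω).spatialHeight fun k => Y k ω) ∉ K} := by
    rintro ω ⟨hFc, hG⟩
    rw [mem_setOf_eq]
    intro hgK
    have hex : ∃ j, j ∈ Finset.range n ∧ ¬ (|(Tn n ω).spatialHeight (fun k => Y k ω) (j + 1) -
        (Tn n ω).spatialHeight (fun k => Y k ω) j| < s) := by
      by_contra hcon
      push_neg at hcon
      exact hFc (mem_iInter₂.mpr fun j hj => hcon j hj)
    obtain ⟨j, hjmem, hjbig⟩ := hex
    have hjn : j < n := Finset.mem_range.mp hjmem
    push_neg at hjbig
    set f : ℕ → ℝ := (Tn n ω).spatialHeight fun k => Y k ω with hfdef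
    set c : ℝ := B n / n with hcdef
    have hcpos : 0 < c := div_pos hBpos hnpos
    have hcard : (Tn n ω).verts.card = n + 1 := hG
    have ht1mem : (j : ℝ) / n ∈ Icc (0 : ℝ) 1 := by
      constructor
      · positivity
      · rw [div_le_one hnpos]
        exact_mod_cast le_of_lt hjn
    have ht2mem : ((j : ℝ) + 1) / n ∈ Icc (0 : ℝ) 1 := by
      constructor
      · positivity
      · rw [div_le_one hnpos]
        have : (j : ℕ) + 1 ≤ n := hjn
        exact_mod_cast this
    set t₁ : Icc (0 : ℝ) 1 := ⟨(j : ℝ) / n, ht1mem⟩ with ht₁def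
    set t₂ : Icc (0 : ℝ) 1 := ⟨((j : ℝ) + 1) / n, ht2mem⟩ with ht₂def
    have harg1 : (n : ℝ) * ((j : ℝ) / n) = (j : ℝ) := by field_simp
    have harg2 : (n : ℝ) * (((j : ℝ) + 1) / n) = ((j + 1 : ℕ) : ℝ) := by
      push_cast; field_simp
    have hval1 : rescaledPath c (n : ℝ) ((Tn n ω).verts.card) f t₁ = c * f j := by
      show c * interp ((Tn n ω).verts.card) f ((n : ℝ) * ((j : ℝ) / n)) = c * f j
      rw [harg1, hcard, interp_nat (n + 1) f (by omega : j ≤ n + 1)]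
    have hval2 : rescaledPath c (n : ℝ) ((Tn n ω).verts.card) f t₂ = c * f (j + 1) := by
      show c * interp ((Tn n ω).verts.card) f ((n : ℝ) * (((j : ℝ) + 1) / n)) = c * f (j + 1)
      rw [harg2, hcard, interp_nat (n + 1) f (by omega : j + 1 ≤ n + 1)]
    have hdist : |(t₁ : ℝ) - (t₂ : ℝ)| ≤ δ := by
      have heq : (j : ℝ) / n - ((j : ℝ) + 1) / n = -(1 / n) := by
        field_simp
        ring
      show |(j : ℝ) / n - ((j : ℝ) + 1) / n| ≤ δ
      rw [heq, abs_neg, abs_of_pos (by positivity)]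
      exact hδn
    have hosc' := hosc _ hgK t₁ t₂ hdist
    rw [hval1, hval2] at hosc'
    have habs : |c * f j - c * f (j + 1)| = c * |f (j + 1) - f j| := by
      rw [← mul_sub, abs_mul, abs_of_pos hcpos, abs_sub_comm]
    rw [habs] at hosc'
    have hge : (4 : ℝ)⁻¹ ≤ c * |f (j + 1) - f j| := by
      have h1 : c * s ≤ c * |f (j + 1) - f j| := mul_le_mul_of_nonneg_left hjbig hcpos.le
      have h2 : c * s = 4⁻¹ := by
        rw [hcdef, hsdef, htndef]
        field_simp
      rw [← h2]
      exact h1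
    exact absurd hosc' (not_lt.mpr hge)
  -- conclusion
  have hlower : ENNReal.ofReal (1 - Real.exp (-β')) ≤
      P {ω : Ω | rescaledPath (B n / n) (n : ℝ) ((Tn n ω).verts.card)
        ((Tn n ω).spatialHeight fun k => Y k ω) ∉ K} := by
    calc ENNReal.ofReal (1 - Real.exp (-β'))
        = 1 - ENNReal.ofReal (Real.exp (-β')) := by
          rw [ENNReal.ofReal_sub _ (Real.exp_pos _).le, ENNReal.ofReal_one]
      _ ≤ 1 - (1 - π) ^ n := tsub_le_tsub_left hγn 1
      _ ≤ P (Fᶜ ∩ G) := hlow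
      _ ≤ _ := measure_mono hgeom
  have hfinal := le_trans hlower hKn
  rw [hεdef, ENNReal.ofReal_le_ofReal_iff (by linarith)] at hfinal
  linarith
end
end
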